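/- arXiv:1507.04739 — 4 statements merged into one kernel-verified Lean document; each statement's English description precedes it below -/
import Mathlib

section
/- Let G = (V,E) be a finite bipartite simple graph with positive edge weights (θ_e)_{e∈E}, and let H be a 2-lift of G, where each edge of H lying above an edge e of G is given the weight θ_e. Then P_G(z)^2 ≥ P_H(z) for every z > 0, and ν(H) = 2 ν(G). -/
open Finset
open scoped BigOperators Classical

noncomputable section

/-- The finite set of edges of a graph on a finite vertex type. -/
def edgeFS {V : Type*} [Fintype V] (G : SimpleGraph V) : Finset (Sym2 V) :=
  (Set.toFinite G.edgeSet).toFinset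

/-- The finite set of neighbours of a vertex. -/
def nbrFS {V : Type*} [Fintype V] (G : SimpleGraph V) (u : V) : Finset V :=
  (Set.toFinite (G.neighborSet u)).toFinset

/-- `M` is (the edge set of) a matching of `G`: a set of pairwise disjoint edges. -/
def IsMatchingF {V : Type*} (G : SimpleGraph V) (M : Finset (Sym2 V)) : Prop :=
  (↑M ⊆ G.edgeSet) ∧ ∀ e ∈ M, ∀ f ∈ M, e ≠ f → ∀ v : V, v ∈ e → v ∉ f

/-- The weighted matching count `w_k(G) = ∑_{M matching, |M| = k} ∏_{e ∈ M} θ_e`. -/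
def wCount {V : Type*} [Fintype V] (G : SimpleGraph V) (θ : Sym2 V → ℝ) (k : ℕ) : ℝ :=
  ∑ M ∈ Finset.univ.filter
      (fun M : Finset (Sym2 V) => IsMatchingF G M ∧ M.card = k),
    ∏ e ∈ M, θ e

/-- The matching number `ν(G) = max {k | w_k(G) > 0}`. -/
def nuW {V : Type*} [Fintype V] (G : SimpleGraph V) (θ : Sym2 V → ℝ) : ℕ :=
  sSup {k : ℕ | 0 < wCount G θ k}

/-- The weighted matching generating function `P_G(z) = ∑_{k=0}^{ν(G)} w_k(G) z^k`. -/
def PW {V : Type*} [Fintype V] (G : SimpleGraph V) (θ : Sym2 V → ℝ) (z : ℝ) : ℝ :=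
  ∑ k ∈ Finset.range (nuW G θ + 1), wCount G θ k * z ^ k

/-- `incSum G x v = ∑_{e ∋ v} x_e`. -/
def incSum {V : Type*} [Fintype V] (G : SimpleGraph V) (x : Sym2 V → ℝ) (v : V) : ℝ :=
  ∑ e ∈ (edgeFS G).filter (fun e => v ∈ e), x e

/-- Membership in the fractional matching polytope `FM(G)`. -/
def memFM {V : Type*} [Fintype V] (G : SimpleGraph V) (x : Sym2 V → ℝ) : Prop :=
  (∀ e ∈ edgeFS G, 0 ≤ x e) ∧ ∀ v : V, incSum G x v ≤ 1

/-- The fractional matching number `ν*(G) = max_{x ∈ FM(G)} ∑_e x_e`. -/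
def nuStar {V : Type*} [Fintype V] (G : SimpleGraph V) : ℝ :=
  sSup {r : ℝ | ∃ x : Sym2 V → ℝ, memFM G x ∧ r = ∑ e ∈ edgeFS G, x e}

/-- The weighted Bethe entropy `S^B_G(x)` (with the convention `0 · ln 0 = 0`, which holds
since `Real.log 0 = 0`). -/
def SBW {V : Type*} [Fintype V] (G : SimpleGraph V) (θ x : Sym2 V → ℝ) : ℝ :=
  (∑ e ∈ edgeFS G, (x e * Real.log (θ e / x e) + (1 - x e) * Real.log (1 - x e)))
  - ∑ v : V, (1 - incSum G x v) * Real.log (1 - incSum G x v)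

/-- `y : V × V → ℝ` is a (positive) solution on directed edges of the message recursion
`y_{u→v} = z / (1 + ∑_{w ∈ ∂u∖{v}} θ_{wu} y_{w→u})`. -/
def MsgFP {V : Type*} [Fintype V] (G : SimpleGraph V) (θ : Sym2 V → ℝ) (z : ℝ)
    (y : V × V → ℝ) : Prop :=
  ∀ u v : V, G.Adj u v →
    0 < y (u, v) ∧
    y (u, v) = z / (1 + ∑ w ∈ (nbrFS G u).erase v, θ s(w, u) * y (w, u))

/-- `H` (on vertex set `W × Bool`) is a 2-lift of `G` (on vertex set `W`). -/
def IsTwoLift {W : Type*} (G : SimpleGraph W) (H : SimpleGraph (W × Bool)) : Prop :=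
  (∀ u v : W, ¬ G.Adj u v → ∀ i j : Bool, ¬ H.Adj (u, i) (v, j)) ∧
  (∀ u v : W, G.Adj u v →
    ((H.Adj (u, false) (v, false) ∧ H.Adj (u, true) (v, true) ∧
      ¬ H.Adj (u, false) (v, true) ∧ ¬ H.Adj (u, true) (v, false)) ∨
     (H.Adj (u, false) (v, true) ∧ H.Adj (u, true) (v, false) ∧
      ¬ H.Adj (u, false) (v, false) ∧ ¬ H.Adj (u, true) (v, true))))


namespace TwoLiftAux
variable {V : Type*} [Fintype V]

lemma matchingF_empty (G : SimpleGraph V) : IsMatchingF G ∅ :=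
  ⟨by simp, by simp⟩

lemma matchingF_card_filter {G : SimpleGraph V} {M : Finset (Sym2 V)}
    (hM : IsMatchingF G M) (v : V) : (M.filter (fun e => v ∈ e)).card ≤ 1 := by
  rw [Finset.card_le_one]
  intro a ha b hb
  simp only [Finset.mem_filter] at ha hb
  by_contra hne
  exact hM.2 a ha.1 b hb.1 hne v ha.2 hb.2

lemma prod_pos_of_matching {G : SimpleGraph V} {θ : Sym2 V → ℝ} (hθ : ∀ e ∈ G.edgeSet, 0 < θ e)
    {M : Finset (Sym2 V)} (hM : IsMatchingF G M) : 0 < ∏ e ∈ M, θ e :=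
  Finset.prod_pos fun e he => hθ e (hM.1 he)

lemma wCount_nonneg {G : SimpleGraph V} {θ : Sym2 V → ℝ} (hθ : ∀ e ∈ G.edgeSet, 0 < θ e)
    (k : ℕ) : 0 ≤ wCount G θ k := by
  refine Finset.sum_nonneg fun M hM => ?_
  simp only [Finset.mem_filter] at hM
  exact le_of_lt (prod_pos_of_matching hθ hM.2.1)

lemma wCount_pos_iff {G : SimpleGraph V} {θ : Sym2 V → ℝ} (hθ : ∀ e ∈ G.edgeSet, 0 < θ e)
    {k : ℕ} : 0 < wCount G θ k ↔ ∃ M, IsMatchingF G M ∧ M.card = k := by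
  constructor
  · intro h
    rcases Finset.exists_ne_zero_of_sum_ne_zero (ne_of_gt h) with ⟨M, hM, -⟩
    simp only [Finset.mem_filter] at hM
    exact ⟨M, hM.2⟩
  · rintro ⟨M, hM, rfl⟩
    refine Finset.sum_pos (fun N hN => ?_) ⟨M, by simp [hM]⟩
    simp only [Finset.mem_filter] at hN
    exact prod_pos_of_matching hθ hN.2.1

lemma wCount_zero (G : SimpleGraph V) (θ : Sym2 V → ℝ) : wCount G θ 0 = 1 := by
  have : Finset.univ.filter
      (fun M : Finset (Sym2 V) => IsMatchingF G M ∧ M.card = 0) = {∅} := by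
    ext M
    simp only [Finset.mem_filter, Finset.mem_univ, true_and, Finset.mem_singleton,
      Finset.card_eq_zero]
    constructor
    · rintro ⟨-, rfl⟩; rfl
    · rintro rfl; exact ⟨matchingF_empty G, rfl⟩
  rw [wCount, this]
  simp

lemma nu_set_nonempty (G : SimpleGraph V) (θ : Sym2 V → ℝ) :
    {k : ℕ | 0 < wCount G θ k}.Nonempty :=
  ⟨0, by simp [wCount_zero]⟩

lemma nu_bddAbove {G : SimpleGraph V} {θ : Sym2 V → ℝ} (hθ : ∀ e ∈ G.edgeSet, 0 < θ e) :
    BddAbove {k : ℕ | 0 < wCount G θ k} := by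
  refine ⟨Fintype.card (Sym2 V), fun k hk => ?_⟩
  rcases (wCount_pos_iff hθ).1 hk with ⟨M, -, rfl⟩
  exact Finset.card_le_univ M

lemma card_le_nu {G : SimpleGraph V} {θ : Sym2 V → ℝ} (hθ : ∀ e ∈ G.edgeSet, 0 < θ e)
    {M : Finset (Sym2 V)} (hM : IsMatchingF G M) : M.card ≤ nuW G θ :=
  le_csSup (nu_bddAbove hθ) ((wCount_pos_iff hθ).2 ⟨M, hM, rfl⟩)

lemma exists_matching_nu {G : SimpleGraph V} {θ : Sym2 V → ℝ} (hθ : ∀ e ∈ G.edgeSet, 0 < θ e) :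
    ∃ M, IsMatchingF G M ∧ M.card = nuW G θ :=
  (wCount_pos_iff hθ).1 (Nat.sSup_mem (nu_set_nonempty G θ) (nu_bddAbove hθ))

lemma PW_eq {G : SimpleGraph V} {θ : Sym2 V → ℝ} (hθ : ∀ e ∈ G.edgeSet, 0 < θ e) (z : ℝ) :
    PW G θ z =
      ∑ M ∈ Finset.univ.filter (fun M : Finset (Sym2 V) => IsMatchingF G M),
        (∏ e ∈ M, θ e) * z ^ M.card := by
  rw [PW]
  rw [← Finset.sum_fiberwise_of_maps_to
    (g := fun M : Finset (Sym2 V) => M.card) (t := Finset.range (nuW G θ + 1))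
    (fun M hM => by
      simp only [Finset.mem_filter] at hM
      exact Finset.mem_range_succ_iff.2 (card_le_nu hθ hM.2))
    (fun M => (∏ e ∈ M, θ e) * z ^ M.card)]
  refine Finset.sum_congr rfl fun k hk => ?_
  rw [wCount, Finset.sum_mul]
  rw [Finset.filter_filter]
  refine Finset.sum_congr (by simp [and_comm]) fun M hM => ?_
  simp only [Finset.mem_filter] at hM
  rw [hM.2.2]

end TwoLiftAux
namespace TwoLiftAux
variable {V : Type*} [Fintype V]

/-- The other endpoint ("tail") of an edge relative to a head assignment `o`. -/
noncomputable def tl (o : Sym2 V → V) (e : Sym2 V) : V :=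
  if h : ∃ w, w ∈ e ∧ w ≠ o e then h.choose else o e

lemma tl_spec {o : Sym2 V → V} {e : Sym2 V} (hd : ¬ e.IsDiag) (ho : o e ∈ e) :
    tl o e ∈ e ∧ tl o e ≠ o e ∧ ∀ w ∈ e, w = o e ∨ w = tl o e := by
  have hex : ∃ w, w ∈ e ∧ w ≠ o e :=
    ⟨Sym2.Mem.other ho, Sym2.other_mem ho, Sym2.other_ne hd ho⟩
  have h1 : tl o e ∈ e ∧ tl o e ≠ o e := by
    rw [tl, dif_pos hex]; exact hex.choose_spec
  refine ⟨h1.1, h1.2, fun w hw => ?_⟩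
  have hsp := Sym2.other_spec ho
  have htl : tl o e = o e ∨ tl o e = Sym2.Mem.other ho :=
    Sym2.mem_iff.1 (by rw [hsp]; exact h1.1)
  have hw' : w = o e ∨ w = Sym2.Mem.other ho :=
    Sym2.mem_iff.1 (by rw [hsp]; exact hw)
  rcases hw' with rfl | rfl
  · exact Or.inl rfl
  · rcases htl with h | h
    · exact absurd h h1.2
    · exact Or.inr h.symm

/-- `o` is a valid partial orientation (in-degree and out-degree at most 1) of the
edge set `T`. -/
def Heads (T : Finset (Sym2 V)) (o : Sym2 V → V) : Prop :=
  (∀ e ∈ T, o e ∈ e) ∧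
  (∀ (v : V), ∀ e ∈ T, ∀ f ∈ T, o e = v → o f = v → e = f) ∧
  (∀ (v : V), ∀ e ∈ T, ∀ f ∈ T, v ∈ e → v ∈ f → o e ≠ v → o f ≠ v → e = f)

lemma heads_extend {T : Finset (Sym2 V)} {e : Sym2 V} (he : e ∈ T) {x y : V} (hxy : x ≠ y)
    (hexy : e = s(x, y)) {o' : Sym2 V → V} (h' : Heads (T.erase e) o')
    (hx : ∀ f ∈ T.erase e, o' f ≠ x)
    (hy : ∀ f ∈ T.erase e, y ∈ f → o' f = y) :
    ∃ o, Heads T o := by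
  classical
  refine ⟨fun g => if g = e then x else o' g, ?_, ?_, ?_⟩
  · intro g hg
    by_cases hge : g = e
    · simp only [hge, if_pos rfl, hexy, Sym2.mem_iff]; tauto
    · simp only [if_neg hge]
      exact h'.1 g (Finset.mem_erase.2 ⟨hge, hg⟩)
  · intro v g1 hg1 g2 hg2 h1 h2
    dsimp only at h1 h2
    by_cases he1 : g1 = e <;> by_cases he2 : g2 = e
    · rw [he1, he2]
    · exfalso
      rw [if_pos he1] at h1
      rw [if_neg he2] at h2
      exact hx g2 (Finset.mem_erase.2 ⟨he2, hg2⟩) (by rw [h2, ← h1])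
    · exfalso
      rw [if_pos he2] at h2
      rw [if_neg he1] at h1
      exact hx g1 (Finset.mem_erase.2 ⟨he1, hg1⟩) (by rw [h1, ← h2])
    · rw [if_neg he1] at h1; rw [if_neg he2] at h2
      exact h'.2.1 v g1 (Finset.mem_erase.2 ⟨he1, hg1⟩) g2 (Finset.mem_erase.2 ⟨he2, hg2⟩) h1 h2
  · intro v g1 hg1 g2 hg2 hv1 hv2 h1 h2
    dsimp only at h1 h2
    have key : ∀ g ∈ T, v ∈ g →
        (if g = e then x else o' g) ≠ v → g ≠ e → o' g = v → False := by
      intro g hg hvg hne hge hov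
      exact hne (by rwa [if_neg hge])
    by_cases he1 : g1 = e <;> by_cases he2 : g2 = e
    · rw [he1, he2]
    · exfalso
      rw [if_pos he1] at h1
      subst he1
      have hvy : v = y := by
        rcases Sym2.mem_iff.1 (hexy ▸ hv1) with h | h
        · exact absurd h.symm h1
        · exact h
      have := hy g2 (Finset.mem_erase.2 ⟨he2, hg2⟩) (hvy ▸ hv2)
      rw [if_neg he2] at h2
      exact h2 (hvy ▸ this)
    · exfalso
      rw [if_pos he2] at h2
      subst he2
      have hvy : v = y := by
        rcases Sym2.mem_iff.1 (hexy ▸ hv2) with h | h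
        · exact absurd h.symm h2
        · exact h
      have := hy g1 (Finset.mem_erase.2 ⟨he1, hg1⟩) (hvy ▸ hv1)
      rw [if_neg he1] at h1
      exact h1 (hvy ▸ this)
    · rw [if_neg he1] at h1; rw [if_neg he2] at h2
      exact h'.2.2 v g1 (Finset.mem_erase.2 ⟨he1, hg1⟩) g2 (Finset.mem_erase.2 ⟨he2, hg2⟩)
        hv1 hv2 h1 h2

lemma heads_flip {T' : Finset (Sym2 V)} (hTd' : ∀ e ∈ T', ¬ e.IsDiag) {o' : Sym2 V → V}
    (h' : Heads T' o') {C : Finset (Sym2 V)} (hCsub : C ⊆ T')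
    (hclosed : ∀ g ∈ C, ∀ g' ∈ T', (∃ w, w ∈ g ∧ w ∈ g') → g' ∈ C) :
    Heads T' (fun g => if g ∈ C then tl o' g else o' g) := by
  classical
  have hts : ∀ g ∈ T', tl o' g ∈ g ∧ tl o' g ≠ o' g ∧ ∀ w ∈ g, w = o' g ∨ w = tl o' g :=
    fun g hg => tl_spec (hTd' g hg) (h'.1 g hg)
  have hmem : ∀ g ∈ T', (if g ∈ C then tl o' g else o' g) ∈ g := by
    intro g hg
    by_cases hgC : g ∈ C
    · rw [if_pos hgC]; exact (hts g hg).1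
    · rw [if_neg hgC]; exact h'.1 g hg
  have hsame : ∀ g1 ∈ T', ∀ g2 ∈ T', ∀ w, w ∈ g1 → w ∈ g2 → (g1 ∈ C ↔ g2 ∈ C) := by
    intro g1 hg1 g2 hg2 w hw1 hw2
    constructor
    · intro h; exact hclosed g1 h g2 hg2 ⟨w, hw1, hw2⟩
    · intro h; exact hclosed g2 h g1 hg1 ⟨w, hw2, hw1⟩
  refine ⟨hmem, ?_, ?_⟩
  · intro v g1 hg1 g2 hg2 h1 h2
    have hv1 : v ∈ g1 := h1 ▸ hmem g1 hg1
    have hv2 : v ∈ g2 := h2 ▸ hmem g2 hg2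
    dsimp only at h1 h2
    by_cases hC : g1 ∈ C
    · have hC2 : g2 ∈ C := (hsame g1 hg1 g2 hg2 v hv1 hv2).1 hC
      rw [if_pos hC] at h1; rw [if_pos hC2] at h2
      have t1 := hts g1 hg1; have t2 := hts g2 hg2
      exact h'.2.2 v g1 hg1 g2 hg2 hv1 hv2 (by rw [← h1]; exact fun hh => t1.2.1 hh.symm)
        (by rw [← h2]; exact fun hh => t2.2.1 hh.symm)
    · have hC2 : g2 ∉ C := fun h => hC ((hsame g1 hg1 g2 hg2 v hv1 hv2).2 h)
      rw [if_neg hC] at h1; rw [if_neg hC2] at h2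
      exact h'.2.1 v g1 hg1 g2 hg2 h1 h2
  · intro v g1 hg1 g2 hg2 hv1 hv2 h1 h2
    dsimp only at h1 h2
    by_cases hC : g1 ∈ C
    · have hC2 : g2 ∈ C := (hsame g1 hg1 g2 hg2 v hv1 hv2).1 hC
      rw [if_pos hC] at h1; rw [if_pos hC2] at h2
      have t1 := hts g1 hg1; have t2 := hts g2 hg2
      have e1 : o' g1 = v := by
        rcases t1.2.2 v hv1 with h | h
        · exact h.symm
        · exact absurd h.symm h1
      have e2 : o' g2 = v := by
        rcases t2.2.2 v hv2 with h | h
        · exact h.symm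
        · exact absurd h.symm h2
      exact h'.2.1 v g1 hg1 g2 hg2 e1 e2
    · have hC2 : g2 ∉ C := fun h => hC ((hsame g1 hg1 g2 hg2 v hv1 hv2).2 h)
      rw [if_neg hC] at h1; rw [if_neg hC2] at h2
      exact h'.2.2 v g1 hg1 g2 hg2 hv1 hv2 h1 h2

end TwoLiftAux
namespace TwoLiftAux
variable {V : Type*} [Fintype V]

lemma lemO (T : Finset (Sym2 V)) (hTd : ∀ e ∈ T, ¬ e.IsDiag)
    (hdeg : ∀ v : V, (T.filter (fun e => v ∈ e)).card ≤ 2) :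
    ∃ o : Sym2 V → V, Heads T o := by
  classical
  generalize hn : T.card = n
  induction n using Nat.strong_induction_on generalizing T with
  | _ n ih =>
  subst hn
  rcases Finset.eq_empty_or_nonempty T with rfl | hTne
  · exact ⟨fun e => e.out.1, fun e he => absurd he (Finset.notMem_empty e),
      fun v e he => absurd he (Finset.notMem_empty e),
      fun v e he => absurd he (Finset.notMem_empty e)⟩
  have hIH : ∀ e ∈ T, ∃ o', Heads (T.erase e) o' := by
    intro e he
    refine ih (T.erase e).card ?_ _ (fun g hg => hTd g (Finset.mem_of_mem_erase hg))
      (fun v => le_trans (Finset.card_le_card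
        (Finset.filter_subset_filter _ (Finset.erase_subset e T))) (hdeg v)) rfl
    rw [Finset.card_erase_of_mem he]
    exact Nat.sub_lt (Finset.card_pos.2 ⟨e, he⟩) one_pos
  by_cases hcase : ∃ e ∈ T, ∃ u, u ∈ e ∧ (T.filter (fun g => u ∈ g)).card ≤ 1
  · -- Case 1 : some endpoint of degree one
    obtain ⟨e, he, u, hu, hdu⟩ := hcase
    have hufilter : ∀ g ∈ T, u ∈ g → g = e := by
      intro g hg hug
      exact Finset.card_le_one.1 hdu g (Finset.mem_filter.2 ⟨hg, hug⟩) e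
        (Finset.mem_filter.2 ⟨he, hu⟩)
    set v := Sym2.Mem.other hu with hvdef
    have hv : s(u, v) = e := Sym2.other_spec hu
    have hvu : v ≠ u := Sym2.other_ne (hTd e he) hu
    have hvmeme : v ∈ e := by rw [← hv]; simp
    obtain ⟨o', ho'⟩ := hIH e he
    have huT' : ∀ f ∈ T.erase e, u ∉ f := by
      intro f hf hufmem
      rcases Finset.mem_erase.1 hf with ⟨hne, hfT⟩
      exact hne (hufilter f hfT hufmem)
    by_cases hhv : ∃ f ∈ T.erase e, o' f = v
    · -- some edge already heads into v : orient e with head u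
      refine heads_extend he (Ne.symm hvu) hv.symm ho' ?_ ?_
      · intro f hf hofu
        exact huT' f hf (hofu ▸ ho'.1 f hf)
      · intro f hf hvf
        obtain ⟨f0, hf0, hof0⟩ := hhv
        by_cases hff0 : f = f0
        · rw [hff0]; exact hof0
        · exfalso
          have hvf0 : v ∈ f0 := hof0 ▸ ho'.1 f0 hf0
          have hfe : f ≠ e := (Finset.mem_erase.1 hf).1
          have hf0e : f0 ≠ e := (Finset.mem_erase.1 hf0).1
          have hsub3 : ({f, f0, e} : Finset (Sym2 V)) ⊆ T.filter (fun g => v ∈ g) := by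
            intro g hg
            simp only [Finset.mem_insert, Finset.mem_singleton] at hg
            rcases hg with rfl | rfl | rfl
            · exact Finset.mem_filter.2 ⟨Finset.mem_of_mem_erase hf, hvf⟩
            · exact Finset.mem_filter.2 ⟨Finset.mem_of_mem_erase hf0, hvf0⟩
            · exact Finset.mem_filter.2 ⟨he, hvmeme⟩
          have hc3 : ({f, f0, e} : Finset (Sym2 V)).card = 3 := by
            rw [Finset.card_insert_of_notMem (by simp [hff0, hfe]),
              Finset.card_insert_of_notMem (by simp [hf0e]), Finset.card_singleton]
          have := Finset.card_le_card hsub3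
          rw [hc3] at this
          exact absurd (le_trans this (hdeg v)) (by norm_num)
    · -- no edge heads into v : orient e with head v
      push_neg at hhv
      refine heads_extend he hvu (by rw [Sym2.eq_swap]; exact hv.symm) ho' ?_ ?_
      · intro f hf hofv
        exact hhv f hf hofv
      · intro f hf huf
        exact absurd huf (huT' f hf)
  · -- Case 2 : every covered vertex has degree two
    push_neg at hcase
    obtain ⟨e, he⟩ := hTne
    have hu : e.out.1 ∈ e := Sym2.out_fst_mem e
    set u := e.out.1 with hudef
    set v := Sym2.Mem.other hu with hvdef
    have hv : s(u, v) = e := Sym2.other_spec hu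
    have hvu : v ≠ u := Sym2.other_ne (hTd e he) hu
    have hvmeme : v ∈ e := by rw [← hv]; simp
    obtain ⟨o', ho'⟩ := hIH e he
    set T' := T.erase e with hT'def
    have hTd' : ∀ g ∈ T', ¬ g.IsDiag := fun g hg => hTd g (Finset.mem_of_mem_erase hg)
    have hdeg1 : ∀ w, w ∈ e → (T'.filter (fun g => w ∈ g)).card = 1 := by
      intro w hw
      rw [hT'def, Finset.filter_erase,
        Finset.card_erase_of_mem (Finset.mem_filter.2 ⟨he, hw⟩)]
      have h2 := hdeg w
      have h1 := hcase e he w hw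
      omega
    obtain ⟨f_u, hfu_eq⟩ := Finset.card_eq_one.1 (hdeg1 u hu)
    obtain ⟨f_v, hfv_eq⟩ := Finset.card_eq_one.1 (hdeg1 v hvmeme)
    have hfuT' : f_u ∈ T' ∧ u ∈ f_u := by
      have : f_u ∈ T'.filter (fun g => u ∈ g) := by
        rw [hfu_eq]; exact Finset.mem_singleton_self f_u
      exact ⟨(Finset.mem_filter.1 this).1, (Finset.mem_filter.1 this).2⟩
    have hfvT' : f_v ∈ T' ∧ v ∈ f_v := by
      have : f_v ∈ T'.filter (fun g => v ∈ g) := by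
        rw [hfv_eq]; exact Finset.mem_singleton_self f_v
      exact ⟨(Finset.mem_filter.1 this).1, (Finset.mem_filter.1 this).2⟩
    have huniq_u : ∀ g ∈ T', u ∈ g → g = f_u := by
      intro g hg hug
      have : g ∈ T'.filter (fun g => u ∈ g) := Finset.mem_filter.2 ⟨hg, hug⟩
      rwa [hfu_eq, Finset.mem_singleton] at this
    have huniq_v : ∀ g ∈ T', v ∈ g → g = f_v := by
      intro g hg hvg
      have : g ∈ T'.filter (fun g => v ∈ g) := Finset.mem_filter.2 ⟨hg, hvg⟩
      rwa [hfv_eq, Finset.mem_singleton] at this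
    have hfufv : f_u ≠ f_v := by
      intro hEq
      have hvfu : v ∈ f_u := hEq ▸ hfvT'.2
      have : f_u = e := Sym2.eq_of_ne_mem (Ne.symm hvu) hfuT'.2 hvfu
        (by rw [← hv]; simp) hvmeme
      exact (Finset.mem_erase.1 hfuT'.1).1 this
    set CG : SimpleGraph (Sym2 V) :=
      SimpleGraph.fromRel (fun g g' => g ∈ T' ∧ g' ∈ T' ∧ ∃ w, w ∈ g ∧ w ∈ g') with hCG
    set C : Finset (Sym2 V) := T'.filter (fun g => CG.Reachable f_v g) with hCdef
    have hCsub : C ⊆ T' := Finset.filter_subset _ _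
    have hfvC : f_v ∈ C := Finset.mem_filter.2 ⟨hfvT'.1, SimpleGraph.Reachable.refl f_v⟩
    have hclosed : ∀ g ∈ C, ∀ g' ∈ T', (∃ w, w ∈ g ∧ w ∈ g') → g' ∈ C := by
      intro g hg g' hg' hshare
      by_cases hgg' : g = g'
      · rwa [← hgg']
      · have hadj : CG.Adj g g' := by
          rw [hCG, SimpleGraph.fromRel_adj]
          exact ⟨hgg', Or.inl ⟨(Finset.mem_filter.1 hg).1, hg', hshare⟩⟩
        exact Finset.mem_filter.2 ⟨hg', ((Finset.mem_filter.1 hg).2).trans hadj.reachable⟩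
    have hkey : ∃ o2, Heads T' o2 ∧ ((o2 f_u = u) ↔ ¬ (o2 f_v = v)) := by
      by_cases hfuC : f_u ∈ C
      · -- parity via counting
        refine ⟨o', ho', ?_⟩
        have htsC : ∀ g ∈ T',
            (tl o' g ∈ g ∧ tl o' g ≠ o' g ∧ ∀ w ∈ g, w = o' g ∨ w = tl o' g) :=
          fun g hg => tl_spec (hTd' g hg) (ho'.1 g hg)
        set W : Finset V := Finset.univ.filter (fun w => ∃ g ∈ C, w ∈ g) with hWdef
        have hmemW : ∀ g ∈ C, ∀ w, w ∈ g → w ∈ W :=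
          fun g hg w hw => Finset.mem_filter.2 ⟨Finset.mem_univ w, g, hg, hw⟩
        have hheads : ∑ w ∈ W, (C.filter (fun g => o' g = w)).card = C.card :=
          (Finset.card_eq_sum_card_fiberwise
            (fun g hg => hmemW g hg (o' g) (ho'.1 g (hCsub hg)))).symm
        have htails : ∑ w ∈ W, (C.filter (fun g => tl o' g = w)).card = C.card :=
          (Finset.card_eq_sum_card_fiberwise
            (fun g hg => hmemW g hg (tl o' g) ((htsC g (hCsub hg)).1))).symm
        have hsplit : ∀ w ∈ W, (C.filter (fun g => o' g = w)).card
            + (C.filter (fun g => tl o' g = w)).card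
            = (C.filter (fun g => w ∈ g)).card := by
          intro w _
          rw [← Finset.card_union_of_disjoint ?hdisj]
          case hdisj =>
            rw [Finset.disjoint_left]
            intro g h1 h2
            have hg := (Finset.mem_filter.1 h1).1
            exact (htsC g (hCsub hg)).2.1
              (((Finset.mem_filter.1 h2).2).trans ((Finset.mem_filter.1 h1).2).symm)
          congr 1
          ext g
          simp only [Finset.mem_union, Finset.mem_filter]
          constructor
          · rintro (⟨hg, h⟩ | ⟨hg, h⟩)
            · exact ⟨hg, h ▸ ho'.1 g (hCsub hg)⟩
            · exact ⟨hg, h ▸ (htsC g (hCsub hg)).1⟩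
          · rintro ⟨hg, hwg⟩
            rcases (htsC g (hCsub hg)).2.2 w hwg with h | h
            · exact Or.inl ⟨hg, h.symm⟩
            · exact Or.inr ⟨hg, h.symm⟩
        have hheadle : ∀ w, (C.filter (fun g => o' g = w)).card ≤ 1 := by
          intro w
          rw [Finset.card_le_one]
          intro a ha b hb
          exact ho'.2.1 w a (hCsub (Finset.mem_filter.1 ha).1) b
            (hCsub (Finset.mem_filter.1 hb).1) (Finset.mem_filter.1 ha).2
            (Finset.mem_filter.1 hb).2
        have htaille : ∀ w, (C.filter (fun g => tl o' g = w)).card ≤ 1 := by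
          intro w
          rw [Finset.card_le_one]
          intro a ha b hb
          have haT' := hCsub (Finset.mem_filter.1 ha).1
          have hbT' := hCsub (Finset.mem_filter.1 hb).1
          have hta := (Finset.mem_filter.1 ha).2
          have htb := (Finset.mem_filter.1 hb).2
          refine ho'.2.2 w a haT' b hbT' (hta ▸ (htsC a haT').1) (htb ▸ (htsC b hbT').1)
            ?_ ?_
          · intro hh; exact (htsC a haT').2.1 (hta.trans hh.symm)
          · intro hh; exact (htsC b hbT').2.1 (htb.trans hh.symm)
        have hdegW : ∀ w ∈ W, w ≠ u → w ≠ v → (C.filter (fun g => w ∈ g)).card = 2 := by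
          intro w hwW hwu hwv
          obtain ⟨g0, hg0C, hwg0⟩ : ∃ g ∈ C, w ∈ g := by
            simpa [hWdef] using hwW
          have hCT : C.filter (fun g => w ∈ g) = T.filter (fun g => w ∈ g) := by
            ext g
            simp only [Finset.mem_filter]
            constructor
            · rintro ⟨hg, h⟩
              exact ⟨Finset.mem_of_mem_erase (hCsub hg), h⟩
            · rintro ⟨hg, h⟩
              have hgne : g ≠ e := by
                rintro rfl
                rw [← hv] at h
                rcases Sym2.mem_iff.1 h with rfl | rfl
                · exact hwu rfl
                · exact hwv rfl
              exact ⟨hclosed g0 hg0C g (Finset.mem_erase.2 ⟨hgne, hg⟩) ⟨w, hwg0, h⟩, h⟩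
          rw [hCT]
          have h1 := hcase g0 (Finset.mem_of_mem_erase (hCsub hg0C)) w hwg0
          have h2 := hdeg w
          omega
        have huW : u ∈ W := hmemW f_u hfuC u hfuT'.2
        have hvW : v ∈ W := hmemW f_v hfvC v hfvT'.2
        have hfilt_u : C.filter (fun g => u ∈ g) = {f_u} := by
          ext g
          simp only [Finset.mem_filter, Finset.mem_singleton]
          constructor
          · rintro ⟨hg, h⟩; exact huniq_u g (hCsub hg) h
          · rintro rfl; exact ⟨hfuC, hfuT'.2⟩
        have hfilt_v : C.filter (fun g => v ∈ g) = {f_v} := by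
          ext g
          simp only [Finset.mem_filter, Finset.mem_singleton]
          constructor
          · rintro ⟨hg, h⟩; exact huniq_v g (hCsub hg) h
          · rintro rfl; exact ⟨hfvC, hfvT'.2⟩
        have hau : (C.filter (fun g => o' g = u)).card = if o' f_u = u then 1 else 0 := by
          by_cases h : o' f_u = u
          · rw [if_pos h, Finset.card_eq_one]
            refine ⟨f_u, ?_⟩
            ext g
            simp only [Finset.mem_filter, Finset.mem_singleton]
            constructor
            · rintro ⟨hgC, hg⟩
              exact huniq_u g (hCsub hgC) (hg ▸ ho'.1 g (hCsub hgC))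
            · rintro rfl; exact ⟨hfuC, h⟩
          · rw [if_neg h, Finset.card_eq_zero, Finset.filter_eq_empty_iff]
            intro g hgC hg
            exact h ((huniq_u g (hCsub hgC) (hg ▸ ho'.1 g (hCsub hgC))) ▸ hg)
        have hav : (C.filter (fun g => o' g = v)).card = if o' f_v = v then 1 else 0 := by
          by_cases h : o' f_v = v
          · rw [if_pos h, Finset.card_eq_one]
            refine ⟨f_v, ?_⟩
            ext g
            simp only [Finset.mem_filter, Finset.mem_singleton]
            constructor
            · rintro ⟨hgC, hg⟩
              exact huniq_v g (hCsub hgC) (hg ▸ ho'.1 g (hCsub hgC))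
            · rintro rfl; exact ⟨hfvC, h⟩
          · rw [if_neg h, Finset.card_eq_zero, Finset.filter_eq_empty_iff]
            intro g hgC hg
            exact h ((huniq_v g (hCsub hgC) (hg ▸ ho'.1 g (hCsub hgC))) ▸ hg)
        have hvWe : v ∈ W.erase u := Finset.mem_erase.2 ⟨hvu, hvW⟩
        have hsum1 : ∑ w ∈ W, (C.filter (fun g => o' g = w)).card
            = (C.filter (fun g => o' g = u)).card + ((C.filter (fun g => o' g = v)).card
              + ∑ w ∈ (W.erase u).erase v, (C.filter (fun g => o' g = w)).card) := by
          rw [← Finset.add_sum_erase _ _ huW, ← Finset.add_sum_erase _ _ hvWe]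
        have hsum2 : ∑ w ∈ W, (C.filter (fun g => tl o' g = w)).card
            = (C.filter (fun g => tl o' g = u)).card
              + ((C.filter (fun g => tl o' g = v)).card
              + ∑ w ∈ (W.erase u).erase v, (C.filter (fun g => tl o' g = w)).card) := by
          rw [← Finset.add_sum_erase _ _ huW, ← Finset.add_sum_erase _ _ hvWe]
        have hW''eq : ∀ w ∈ (W.erase u).erase v,
            (C.filter (fun g => o' g = w)).card = 1
            ∧ (C.filter (fun g => tl o' g = w)).card = 1 := by
          intro w hw
          have hwv := (Finset.mem_erase.1 hw).1
          have hwu := (Finset.mem_erase.1 (Finset.mem_erase.1 hw).2).1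
          have hwW := (Finset.mem_erase.1 (Finset.mem_erase.1 hw).2).2
          have e1 := hsplit w hwW
          have e2 := hdegW w hwW hwu hwv
          have e3 := hheadle w
          have e4 := htaille w
          omega
        have hsW1 : ∑ w ∈ (W.erase u).erase v, (C.filter (fun g => o' g = w)).card
            = ((W.erase u).erase v).card := by
          rw [Finset.sum_congr rfl (fun w hw => (hW''eq w hw).1)]
          simp
        have hsW2 : ∑ w ∈ (W.erase u).erase v, (C.filter (fun g => tl o' g = w)).card
            = ((W.erase u).erase v).card := by
          rw [Finset.sum_congr rfl (fun w hw => (hW''eq w hw).2)]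
          simp
        have hdu1 : (C.filter (fun g => u ∈ g)).card = 1 := by rw [hfilt_u]; rfl
        have hdv1 : (C.filter (fun g => v ∈ g)).card = 1 := by rw [hfilt_v]; rfl
        have hsplitu := hsplit u huW
        have hsplitv := hsplit v hvW
        have hfinal : (if o' f_u = u then 1 else 0) + (if o' f_v = v then 1 else 0) = 1 := by
          rw [← hau, ← hav]
          omega
        by_cases h1 : o' f_u = u <;> by_cases h2 : o' f_v = v
        · rw [if_pos h1, if_pos h2] at hfinal; omega
        · simp [h1, h2]
        · simp [h1, h2]
        · rw [if_neg h1, if_neg h2] at hfinal; omega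
      · by_cases hgood : (o' f_u = u) ↔ ¬ (o' f_v = v)
        · exact ⟨o', ho', hgood⟩
        · refine ⟨fun g => if g ∈ C then tl o' g else o' g,
            heads_flip hTd' ho' hCsub hclosed, ?_⟩
          dsimp only
          rw [if_neg hfuC, if_pos hfvC]
          have hts := tl_spec (hTd' f_v hfvT'.1) (ho'.1 f_v hfvT'.1)
          have hv2 := hts.2.2 v hfvT'.2
          have hne := hts.2.1
          have hiff : (o' f_u = u) ↔ (o' f_v = v) := by
            rw [not_iff] at hgood
            constructor
            · intro hA
              by_contra hB
              exact (hgood.2 hB) hA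
            · intro hB
              by_contra hA
              exact (hgood.1 hA) hB
          have tlv_iff : (tl o' f_v = v) ↔ ¬ (o' f_v = v) := by
            constructor
            · intro htl hB
              exact hne (htl.trans hB.symm)
            · intro hnB
              rcases hv2 with h | h
              · exact absurd h.symm hnB
              · exact h.symm
          rw [tlv_iff, not_not]
          exact hiff
    obtain ⟨o2, ho2, hgood⟩ := hkey
    by_cases ha : o2 f_u = u
    · refine heads_extend he hvu (by rw [Sym2.eq_swap]; exact hv.symm) ho2 ?_ ?_
      · intro f hf hofv
        have hfv' : f = f_v := huniq_v f hf (hofv ▸ ho2.1 f hf)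
        exact (hgood.1 ha) (hfv' ▸ hofv)
      · intro f hf huf
        rw [huniq_u f hf huf]
        exact ha
    · refine heads_extend he (Ne.symm hvu) hv.symm ho2 ?_ ?_
      · intro f hf hofu
        exact ha ((huniq_u f hf (hofu ▸ ho2.1 f hf)) ▸ hofu)
      · intro f hf hvf
        rw [huniq_v f hf hvf]
        by_contra hnv
        exact ha (hgood.2 hnv)

end TwoLiftAux
namespace TwoLiftAux
variable {V : Type*} [Fintype V]

lemma lemA (c : V → Bool) (T : Finset (Sym2 V))
    (hTd : ∀ e ∈ T, ¬ e.IsDiag)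
    (hTc : ∀ e ∈ T, ∀ x, x ∈ e → ∀ y, y ∈ e → x ≠ y → c x ≠ c y)
    (hdeg : ∀ v : V, (T.filter (fun e => v ∈ e)).card ≤ 2) :
    ∃ χ : Sym2 V → Bool,
      ∀ e ∈ T, ∀ f ∈ T, e ≠ f → ∀ w, w ∈ e → w ∈ f → χ e ≠ χ f := by
  obtain ⟨o, ho⟩ := lemO T hTd hdeg
  refine ⟨fun e => c (o e), ?_⟩
  intro e he f hf hef w hwe hwf heq
  dsimp only at heq
  by_cases h1 : o e = w <;> by_cases h2 : o f = w
  · exact hef (ho.2.1 w e he f hf h1 h2)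
  · exact hTc f hf (o f) (ho.1 f hf) w hwf h2 (by rw [← heq, h1])
  · exact hTc e he (o e) (ho.1 e he) w hwe h1 (by rw [heq, h2])
  · exact hef (ho.2.2 w e he f hf hwe hwf h1 h2)

lemma exists_col {G : SimpleGraph V} (hbip : G.Colorable 2) :
    ∃ c : V → Bool, ∀ u v, G.Adj u v → c u ≠ c v := by
  obtain ⟨C⟩ := hbip
  refine ⟨fun v => decide (C v = 1), fun u v huv hc => ?_⟩
  have hne : C u ≠ C v := C.valid huv
  have key : ∀ a b : Fin 2, a ≠ b → decide (a = 1) ≠ decide (b = 1) := by decide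
  exact key _ _ hne hc

/-- Projection of an edge of the 2-lift down to `G`. -/
def projE (f : Sym2 (V × Bool)) : Sym2 V := Sym2.map Prod.fst f

lemma proj_mem_edge {G : SimpleGraph V} {H : SimpleGraph (V × Bool)} (hH : IsTwoLift G H)
    {f : Sym2 (V × Bool)} (hf : f ∈ H.edgeSet) : projE f ∈ G.edgeSet := by
  induction f with
  | _ x y =>
    rw [SimpleGraph.mem_edgeSet] at hf
    rw [projE, Sym2.map_pair_eq, SimpleGraph.mem_edgeSet]
    by_contra hn
    exact hH.1 x.1 y.1 hn x.2 y.2 (by simpa using hf)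

lemma canonCore {H : SimpleGraph (V × Bool)} {u v : V} (hne : u ≠ v) (j : Bool)
    (hA0 : H.Adj (u, false) (v, j)) (hA1 : H.Adj (u, true) (v, !j))
    (hN0 : ¬ H.Adj (u, false) (v, !j)) (hN1 : ¬ H.Adj (u, true) (v, j)) :
    ∃ f0 f1 : Sym2 (V × Bool), f0 ∈ H.edgeSet ∧ f1 ∈ H.edgeSet ∧ f0 ≠ f1 ∧
      projE f0 = s(u, v) ∧ projE f1 = s(u, v) ∧
      (∀ f ∈ H.edgeSet, projE f = s(u, v) → f = f0 ∨ f = f1) ∧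
      (∀ x : V × Bool, x ∈ f0 → x ∉ f1) ∧
      (∀ w, w ∈ s(u, v) → ∀ b : Bool, ((w, b) ∈ f0 ↔ (w, !b) ∈ f1)) ∧
      (∀ w, w ∈ s(u, v) → ∀ b b' : Bool, (w, b) ∈ f0 → (w, b') ∈ f0 → b = b') ∧
      (∀ w, w ∈ s(u, v) → ∀ b b' : Bool, (w, b) ∈ f1 → (w, b') ∈ f1 → b = b') := by
  refine ⟨s((u, false), (v, j)), s((u, true), (v, !j)), hA0, hA1, ?_, ?_, ?_, ?_, ?_, ?_, ?_, ?_⟩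
  · intro hEq
    rw [Sym2.eq_iff] at hEq
    simp only [Prod.ext_iff] at hEq
    rcases hEq with ⟨⟨-, h⟩, -⟩ | ⟨⟨h, -⟩, -⟩
    · exact Bool.false_ne_true h
    · exact hne h
  · rw [projE, Sym2.map_pair_eq]
  · rw [projE, Sym2.map_pair_eq]
  · intro f hf hproj
    induction f with
    | _ x y =>
      obtain ⟨x1, i⟩ := x
      obtain ⟨y1, k⟩ := y
      rw [SimpleGraph.mem_edgeSet] at hf
      rw [projE, Sym2.map_pair_eq] at hproj
      rcases Sym2.eq_iff.1 hproj with ⟨hx, hy⟩ | ⟨hx, hy⟩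
      · dsimp at hx hy
        subst hx; subst hy
        cases i <;> cases k <;> rename_i hj
        · cases j
          · exact Or.inl rfl
          · exact absurd hf hN0
        · cases j
          · exact absurd hf hN0
          · exact Or.inl rfl
        · cases j
          · exact absurd hf hN1
          · exact Or.inr rfl
        · cases j
          · exact Or.inr rfl
          · exact absurd hf hN1
      · dsimp at hx hy
        subst hx; subst hy
        rw [Sym2.eq_swap]
        have hf' := hf.symm
        cases i <;> cases k
        · cases j
          · exact Or.inl rfl
          · exact absurd hf' hN0
        · cases j
          · exact absurd hf' hN1
          · exact Or.inr rfl
        · cases j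
          · exact absurd hf' hN0
          · exact Or.inl rfl
        · cases j
          · exact Or.inr rfl
          · exact absurd hf' hN1
  · intro x hx hx'
    rw [Sym2.mem_iff] at hx hx'
    rcases hx with rfl | rfl <;> rcases hx' with h | h <;>
      simp only [Prod.ext_iff] at h
    · exact Bool.false_ne_true h.2
    · exact hne h.1
    · exact hne h.1.symm
    · cases j <;> simp at h
  · intro w hw b
    rw [Sym2.mem_iff] at hw
    have hne' : v ≠ u := Ne.symm hne
    rcases hw with rfl | rfl
    · simp only [Sym2.mem_iff, Prod.ext_iff, hne, hne', false_and, and_false, or_false,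
        false_or]
      cases b <;> simp
    · simp only [Sym2.mem_iff, Prod.ext_iff, hne, hne', false_and, and_false, or_false,
        false_or]
      cases b <;> cases j <;> simp
  · intro w hw b b' hb hb'
    rw [Sym2.mem_iff] at hw
    rcases hw with rfl | rfl <;>
      rw [Sym2.mem_iff, Prod.ext_iff, Prod.ext_iff] at hb hb'
    · rcases hb with ⟨-, rfl⟩ | ⟨h, -⟩
      · rcases hb' with ⟨-, rfl⟩ | ⟨h', -⟩
        · rfl
        · exact absurd h' hne
      · exact absurd h hne
    · rcases hb with ⟨h, -⟩ | ⟨-, rfl⟩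
      · exact absurd h.symm hne
      · rcases hb' with ⟨h', -⟩ | ⟨-, rfl⟩
        · exact absurd h'.symm hne
        · rfl
  · intro w hw b b' hb hb'
    rw [Sym2.mem_iff] at hw
    rcases hw with rfl | rfl <;>
      rw [Sym2.mem_iff, Prod.ext_iff, Prod.ext_iff] at hb hb'
    · rcases hb with ⟨-, rfl⟩ | ⟨h, -⟩
      · rcases hb' with ⟨-, rfl⟩ | ⟨h', -⟩
        · rfl
        · exact absurd h' hne
      · exact absurd h hne
    · rcases hb with ⟨h, -⟩ | ⟨-, rfl⟩
      · exact absurd h.symm hne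
      · rcases hb' with ⟨h', -⟩ | ⟨-, rfl⟩
        · exact absurd h'.symm hne
        · rfl

lemma canonLift {G : SimpleGraph V} {H : SimpleGraph (V × Bool)} (hH : IsTwoLift G H)
    {e : Sym2 V} (he : e ∈ G.edgeSet) :
    ∃ f0 f1 : Sym2 (V × Bool), f0 ∈ H.edgeSet ∧ f1 ∈ H.edgeSet ∧ f0 ≠ f1 ∧
      projE f0 = e ∧ projE f1 = e ∧
      (∀ f ∈ H.edgeSet, projE f = e → f = f0 ∨ f = f1) ∧
      (∀ x : V × Bool, x ∈ f0 → x ∉ f1) ∧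
      (∀ w, w ∈ e → ∀ b : Bool, ((w, b) ∈ f0 ↔ (w, !b) ∈ f1)) ∧
      (∀ w, w ∈ e → ∀ b b' : Bool, (w, b) ∈ f0 → (w, b') ∈ f0 → b = b') ∧
      (∀ w, w ∈ e → ∀ b b' : Bool, (w, b) ∈ f1 → (w, b') ∈ f1 → b = b') := by
  induction e with
  | _ u v =>
    rw [SimpleGraph.mem_edgeSet] at he
    have hne : u ≠ v := he.ne
    rcases hH.2 u v he with ⟨h00, h11, hn01, hn10⟩ | ⟨h01, h10, hn00, hn11⟩
    · exact canonCore hne false h00 (by simpa using h11) (by simpa using hn01) hn10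
    · exact canonCore hne true h01 (by simpa using h10) (by simpa using hn00) hn11

end TwoLiftAux
namespace TwoLiftAux
variable {V : Type*} [Fintype V]

/-- Number of edges of `N` lying over `e`. -/
noncomputable def cnt (N : Finset (Sym2 (V × Bool))) (e : Sym2 V) : ℕ :=
  (N.filter (fun f => projE f = e)).card

noncomputable def S1 (N : Finset (Sym2 (V × Bool))) : Finset (Sym2 V) :=
  Finset.univ.filter (fun e => cnt N e = 1)

noncomputable def S2 (N : Finset (Sym2 (V × Bool))) : Finset (Sym2 V) :=
  Finset.univ.filter (fun e => cnt N e = 2)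

noncomputable def sigB (N : Finset (Sym2 (V × Bool))) (e : Sym2 V) : Bool :=
  decide (∃ f ∈ N, projE f = e ∧ (e.out.1, true) ∈ f)

lemma cnt_pos_edge {G : SimpleGraph V} {H : SimpleGraph (V × Bool)} (hH : IsTwoLift G H)
    {N : Finset (Sym2 (V × Bool))} (hN : IsMatchingF H N) {e : Sym2 V}
    (hc : 1 ≤ cnt N e) : e ∈ G.edgeSet := by
  obtain ⟨f, hf⟩ := Finset.card_pos.1 hc
  rcases Finset.mem_filter.1 hf with ⟨hfN, hfp⟩
  exact hfp ▸ proj_mem_edge hH (hN.1 hfN)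

lemma copy_exists {f : Sym2 (V × Bool)} {w : V} (h : w ∈ projE f) : ∃ b, (w, b) ∈ f := by
  rw [projE, Sym2.mem_map] at h
  obtain ⟨⟨w', b⟩, hmem, hw⟩ := h
  exact ⟨b, by rwa [show w = w' from hw.symm]⟩

lemma three_pigeon {H : SimpleGraph (V × Bool)} {N : Finset (Sym2 (V × Bool))}
    (hN : IsMatchingF H N) {w : V} {g1 g2 g3 : Sym2 (V × Bool)}
    (h1 : g1 ∈ N) (h2 : g2 ∈ N) (h3 : g3 ∈ N)
    (h12 : g1 ≠ g2) (h13 : g1 ≠ g3) (h23 : g2 ≠ g3)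
    (hw1 : ∃ b, (w, b) ∈ g1) (hw2 : ∃ b, (w, b) ∈ g2) (hw3 : ∃ b, (w, b) ∈ g3) : False := by
  obtain ⟨b1, hb1⟩ := hw1
  obtain ⟨b2, hb2⟩ := hw2
  obtain ⟨b3, hb3⟩ := hw3
  have d12 : b1 ≠ b2 := fun h => hN.2 g1 h1 g2 h2 h12 (w, b1) hb1 (h ▸ hb2)
  have d13 : b1 ≠ b3 := fun h => hN.2 g1 h1 g3 h3 h13 (w, b1) hb1 (h ▸ hb3)
  have d23 : b2 ≠ b3 := fun h => hN.2 g2 h2 g3 h3 h23 (w, b2) hb2 (h ▸ hb3)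
  cases b1 <;> cases b2 <;> cases b3 <;> simp_all

lemma cnt_le_two {G : SimpleGraph V} {H : SimpleGraph (V × Bool)} (hH : IsTwoLift G H)
    {N : Finset (Sym2 (V × Bool))} (hN : IsMatchingF H N) (e : Sym2 V) :
    cnt N e ≤ 2 := by
  by_cases h0 : cnt N e = 0
  · omega
  · have he : e ∈ G.edgeSet := cnt_pos_edge hH hN (by omega)
    obtain ⟨f0, f1, hf0H, hf1H, hf01, hp0, hp1, huniq, -⟩ := canonLift hH he
    have hsub : N.filter (fun f => projE f = e) ⊆ {f0, f1} := by
      intro f hf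
      rcases Finset.mem_filter.1 hf with ⟨hfN, hfp⟩
      rcases huniq f (hN.1 hfN) hfp with rfl | rfl
      · exact Finset.mem_insert_self _ _
      · exact Finset.mem_insert_of_mem (Finset.mem_singleton_self _)
    calc cnt N e ≤ ({f0, f1} : Finset _).card := Finset.card_le_card hsub
    _ ≤ 2 := Finset.card_insert_le _ _ |>.trans (by simp)

lemma mem_S12 {G : SimpleGraph V} {H : SimpleGraph (V × Bool)} (hH : IsTwoLift G H)
    {N : Finset (Sym2 (V × Bool))} (hN : IsMatchingF H N) {f : Sym2 (V × Bool)}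
    (hf : f ∈ N) : projE f ∈ S1 N ∪ S2 N := by
  have h1 : 1 ≤ cnt N (projE f) :=
    Finset.card_pos.2 ⟨f, Finset.mem_filter.2 ⟨hf, rfl⟩⟩
  have h2 := cnt_le_two hH hN (projE f)
  rw [Finset.mem_union, S1, S2, Finset.mem_filter, Finset.mem_filter]
  rcases Nat.lt_or_ge (cnt N (projE f)) 2 with h | h
  · exact Or.inl ⟨Finset.mem_univ _, by omega⟩
  · exact Or.inr ⟨Finset.mem_univ _, by omega⟩

lemma S12_mem_edge {G : SimpleGraph V} {H : SimpleGraph (V × Bool)} (hH : IsTwoLift G H)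
    {N : Finset (Sym2 (V × Bool))} (hN : IsMatchingF H N) {e : Sym2 V}
    (he : e ∈ S1 N ∪ S2 N) : e ∈ G.edgeSet := by
  rw [Finset.mem_union, S1, S2, Finset.mem_filter, Finset.mem_filter] at he
  rcases he with ⟨-, h⟩ | ⟨-, h⟩ <;> exact cnt_pos_edge hH hN (by omega)

lemma S2_disj {H : SimpleGraph (V × Bool)}
    {N : Finset (Sym2 (V × Bool))} (hN : IsMatchingF H N) {e e' : Sym2 V}
    (he : e ∈ S2 N) (he' : 1 ≤ cnt N e') (hee' : e ≠ e') {w : V}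
    (hw : w ∈ e) (hw' : w ∈ e') : False := by
  rw [S2, Finset.mem_filter] at he
  obtain ⟨g1, hg1, g2, hg2, h12⟩ := Finset.one_lt_card.1 (by omega : 1 < cnt N e)
  obtain ⟨g3, hg3⟩ := Finset.card_pos.1 he'
  rcases Finset.mem_filter.1 hg1 with ⟨hg1N, hg1p⟩
  rcases Finset.mem_filter.1 hg2 with ⟨hg2N, hg2p⟩
  rcases Finset.mem_filter.1 hg3 with ⟨hg3N, hg3p⟩
  have h13 : g1 ≠ g3 := fun h => hee' (by rw [← hg1p, h, hg3p])
  have h23 : g2 ≠ g3 := fun h => hee' (by rw [← hg2p, h, hg3p])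
  exact three_pigeon hN hg1N hg2N hg3N h12 h13 h23
    (copy_exists (hg1p ▸ hw)) (copy_exists (hg2p ▸ hw)) (copy_exists (hg3p ▸ hw'))

lemma S1_deg {H : SimpleGraph (V × Bool)}
    {N : Finset (Sym2 (V × Bool))} (hN : IsMatchingF H N) (w : V) :
    ((S1 N).filter (fun e => w ∈ e)).card ≤ 2 := by
  by_contra hgt
  have hgt' : 2 < ((S1 N).filter (fun e => w ∈ e)).card := by omega
  obtain ⟨e1, e2, e3, h1, h2, h3, h12, h13, h23⟩ := Finset.two_lt_card_iff.1 hgt'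
  rcases Finset.mem_filter.1 h1 with ⟨hS1, hw1⟩
  rcases Finset.mem_filter.1 h2 with ⟨hS2, hw2⟩
  rcases Finset.mem_filter.1 h3 with ⟨hS3, hw3⟩
  rw [S1, Finset.mem_filter] at hS1 hS2 hS3
  obtain ⟨g1, hg1⟩ := Finset.card_eq_one.1 hS1.2
  obtain ⟨g2, hg2⟩ := Finset.card_eq_one.1 hS2.2
  obtain ⟨g3, hg3⟩ := Finset.card_eq_one.1 hS3.2
  have m1 := Finset.mem_filter.1 (hg1 ▸ Finset.mem_singleton_self g1)
  have m2 := Finset.mem_filter.1 (hg2 ▸ Finset.mem_singleton_self g2)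
  have m3 := Finset.mem_filter.1 (hg3 ▸ Finset.mem_singleton_self g3)
  have d12 : g1 ≠ g2 := fun h => h12 (by rw [← m1.2, h, m2.2])
  have d13 : g1 ≠ g3 := fun h => h13 (by rw [← m1.2, h, m3.2])
  have d23 : g2 ≠ g3 := fun h => h23 (by rw [← m2.2, h, m3.2])
  exact three_pigeon hN m1.1 m2.1 m3.1 d12 d13 d23
    (copy_exists (m1.2 ▸ hw1)) (copy_exists (m2.2 ▸ hw2)) (copy_exists (m3.2 ▸ hw3))

lemma sig_val {N : Finset (Sym2 (V × Bool))}
    {e : Sym2 V} (hc : cnt N e = 1) {F : Sym2 (V × Bool)} (hFN : F ∈ N)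
    (hFp : projE F = e) {α : Bool} (hα : (e.out.1, α) ∈ F)
    (hcopy : ∀ b b', (e.out.1, b) ∈ F → (e.out.1, b') ∈ F → b = b') :
    sigB N e = α := by
  have huniqF : ∀ f ∈ N, projE f = e → f = F := by
    intro f hf hfp
    have h1 : f ∈ N.filter (fun f => projE f = e) := Finset.mem_filter.2 ⟨hf, hfp⟩
    have h2 : F ∈ N.filter (fun f => projE f = e) := Finset.mem_filter.2 ⟨hFN, hFp⟩
    exact Finset.card_le_one.1 (le_of_eq hc) f h1 F h2
  cases α
  · rw [sigB, decide_eq_false_iff_not]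
    rintro ⟨f, hf, hfp, hmem⟩
    rw [huniqF f hf hfp] at hmem
    exact absurd (hcopy true false hmem hα) (by simp)
  · rw [sigB, decide_eq_true_iff]
    exact ⟨F, hFN, hFp, hα⟩

end TwoLiftAux
namespace TwoLiftAux
variable {V : Type*} [Fintype V]

lemma delta {G : SimpleGraph V} {H : SimpleGraph (V × Bool)} (hH : IsTwoLift G H)
    {N N' : Finset (Sym2 (V × Bool))} (hN : IsMatchingF H N) (hN' : IsMatchingF H N')
    {e e' : Sym2 V} (hee' : e ≠ e') {w : V} (hw : w ∈ e) (hw' : w ∈ e')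
    (h1 : cnt N e = 1) (h2 : cnt N e' = 1) (h3 : cnt N' e = 1) (h4 : cnt N' e' = 1) :
    ((sigB N e = sigB N' e) ↔ (sigB N e' = sigB N' e')) := by
  have heE : e ∈ G.edgeSet := cnt_pos_edge hH hN (by omega)
  have heE' : e' ∈ G.edgeSet := cnt_pos_edge hH hN (by omega)
  obtain ⟨f0, f1, hf0H, hf1H, hf01, hp0, hp1, huniq, hdisj, hcomp, hcopy0, hcopy1⟩ :=
    canonLift hH heE
  obtain ⟨g0, g1, hg0H, hg1H, hg01, hq0, hq1, huniq', hdisj', hcomp', hcopy0', hcopy1'⟩ :=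
    canonLift hH heE'
  have hpt : e.out.1 ∈ e := Sym2.out_fst_mem e
  have hpt' : e'.out.1 ∈ e' := Sym2.out_fst_mem e'
  obtain ⟨α, hα⟩ := copy_exists (w := e.out.1) (f := f0) (hp0 ▸ hpt)
  obtain ⟨α', hα'⟩ := copy_exists (w := e'.out.1) (f := g0) (hq0 ▸ hpt')
  obtain ⟨β, hβ⟩ := copy_exists (w := w) (f := f0) (hp0 ▸ hw)
  obtain ⟨γ, hγ⟩ := copy_exists (w := w) (f := g0) (hq0 ▸ hw')
  have hα1 : (e.out.1, !α) ∈ f1 := (hcomp e.out.1 hpt α).1 hα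
  have hβ1 : (w, !β) ∈ f1 := (hcomp w hw β).1 hβ
  have hα1' : (e'.out.1, !α') ∈ g1 := (hcomp' e'.out.1 hpt' α').1 hα'
  have hγ1 : (w, !γ) ∈ g1 := (hcomp' w hw' γ).1 hγ
  have main : ∀ (X : Finset (Sym2 (V × Bool))), IsMatchingF H X →
      cnt X e = 1 → cnt X e' = 1 →
      ∃ δ ε : Bool, sigB X e = (xor δ α) ∧ sigB X e' = (xor ε α')
        ∧ (xor δ β) ≠ (xor ε γ) := by
    intro X hX hc hc'
    obtain ⟨A, hAeq⟩ := Finset.card_eq_one.1 hc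
    obtain ⟨B, hBeq⟩ := Finset.card_eq_one.1 hc'
    have hA := Finset.mem_filter.1 (hAeq ▸ Finset.mem_singleton_self A)
    have hB := Finset.mem_filter.1 (hBeq ▸ Finset.mem_singleton_self B)
    have hAB : A ≠ B := fun h => hee' (by rw [← hA.2, h, hB.2])
    have hcon : ∀ bA bB, (w, bA) ∈ A → (w, bB) ∈ B → bA ≠ bB := by
      intro bA bB ha hb hEq
      exact hX.2 A hA.1 B hB.1 hAB (w, bA) ha (hEq ▸ hb)
    rcases huniq A (hX.1 hA.1) hA.2 with rfl | rfl <;>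
      rcases huniq' B (hX.1 hB.1) hB.2 with rfl | rfl
    · exact ⟨false, false,
        by simpa using sig_val hc hA.1 hA.2 hα (hcopy0 e.out.1 hpt),
        by simpa using sig_val hc' hB.1 hB.2 hα' (hcopy0' e'.out.1 hpt'),
        by simpa using hcon β γ hβ hγ⟩
    · exact ⟨false, true,
        by simpa using sig_val hc hA.1 hA.2 hα (hcopy0 e.out.1 hpt),
        by simpa using sig_val hc' hB.1 hB.2 hα1' (hcopy1' e'.out.1 hpt'),
        by simpa using hcon β (!γ) hβ hγ1⟩
    · exact ⟨true, false,
        by simpa using sig_val hc hA.1 hA.2 hα1 (hcopy1 e.out.1 hpt),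
        by simpa using sig_val hc' hB.1 hB.2 hα' (hcopy0' e'.out.1 hpt'),
        by simpa using hcon (!β) γ hβ1 hγ⟩
    · exact ⟨true, true,
        by simpa using sig_val hc hA.1 hA.2 hα1 (hcopy1 e.out.1 hpt),
        by simpa using sig_val hc' hB.1 hB.2 hα1' (hcopy1' e'.out.1 hpt'),
        by simpa using hcon (!β) (!γ) hβ1 hγ1⟩
  obtain ⟨δ, ε, s1, s2, c1⟩ := main N hN h1 h2
  obtain ⟨δ', ε', s1', s2', c2⟩ := main N' hN' h3 h4
  rw [s1, s2, s1', s2']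
  revert c1 c2
  cases δ <;> cases ε <;> cases δ' <;> cases ε' <;> cases α <;> cases α' <;>
    cases β <;> cases γ <;> decide

end TwoLiftAux
namespace TwoLiftAux
variable {V : Type*} [Fintype V]

lemma mem_S1_iff {N : Finset (Sym2 (V × Bool))} {e : Sym2 V} : e ∈ S1 N ↔ cnt N e = 1 := by
  rw [S1, Finset.mem_filter]
  simp

lemma mem_S2_iff {N : Finset (Sym2 (V × Bool))} {e : Sym2 V} : e ∈ S2 N ↔ cnt N e = 2 := by
  rw [S2, Finset.mem_filter]
  simp

lemma S1_not_S2 {N : Finset (Sym2 (V × Bool))} {e : Sym2 V} (he : e ∈ S1 N) : e ∉ S2 N := by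
  rw [mem_S1_iff] at he
  rw [mem_S2_iff]
  omega

noncomputable def canonN (H : SimpleGraph (V × Bool)) (P : Finset (Sym2 V) × Finset (Sym2 V)) :
    Finset (Sym2 (V × Bool)) :=
  if h : ∃ N, IsMatchingF H N ∧ (S1 N, S2 N) = P then h.choose else ∅

lemma canonN_spec {H : SimpleGraph (V × Bool)} {N : Finset (Sym2 (V × Bool))}
    (hN : IsMatchingF H N) :
    IsMatchingF H (canonN H (S1 N, S2 N)) ∧ S1 (canonN H (S1 N, S2 N)) = S1 N
      ∧ S2 (canonN H (S1 N, S2 N)) = S2 N := by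
  have hex : ∃ M, IsMatchingF H M ∧ (S1 M, S2 M) = (S1 N, S2 N) := ⟨N, hN, rfl⟩
  rw [canonN, dif_pos hex]
  obtain ⟨h1, h2⟩ := hex.choose_spec
  rw [Prod.mk.injEq] at h2
  exact ⟨h1, h2.1, h2.2⟩

noncomputable def chiF (S : Finset (Sym2 V)) : Sym2 V → Bool :=
  if h : ∃ χ : Sym2 V → Bool, ∀ e ∈ S, ∀ f ∈ S, e ≠ f → ∀ w, w ∈ e → w ∈ f → χ e ≠ χ f
  then h.choose else fun _ => false

lemma chiF_spec {S : Finset (Sym2 V)}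
    (h : ∃ χ : Sym2 V → Bool, ∀ e ∈ S, ∀ f ∈ S, e ≠ f → ∀ w, w ∈ e → w ∈ f → χ e ≠ χ f) :
    ∀ e ∈ S, ∀ f ∈ S, e ≠ f → ∀ w, w ∈ e → w ∈ f → chiF S e ≠ chiF S f := by
  simp only [chiF, dif_pos h]
  exact h.choose_spec

lemma chi_exists {G : SimpleGraph V} {H : SimpleGraph (V × Bool)} (hH : IsTwoLift G H)
    {N : Finset (Sym2 (V × Bool))} (hN : IsMatchingF H N) {c : V → Bool}
    (hc : ∀ u v, G.Adj u v → c u ≠ c v) :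
    ∃ χ : Sym2 V → Bool,
      ∀ e ∈ S1 N, ∀ f ∈ S1 N, e ≠ f → ∀ w, w ∈ e → w ∈ f → χ e ≠ χ f := by
  have hedge : ∀ e ∈ S1 N, e ∈ G.edgeSet := fun e he =>
    S12_mem_edge hH hN (Finset.mem_union_left _ he)
  apply lemA c
  · intro e he
    exact (SimpleGraph.not_isDiag_of_mem_edgeSet G (hedge e he))
  · intro e he x hx y hy hxy
    have hfe : e = s(x, y) := Sym2.eq_of_ne_mem hxy hx hy
      (Sym2.mem_mk_left x y) (Sym2.mem_mk_right x y)
    exact hc x y ((G.mem_edgeSet).1 (hfe ▸ hedge e he))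
  · exact S1_deg hN

noncomputable def tauF (H : SimpleGraph (V × Bool)) (N : Finset (Sym2 (V × Bool)))
    (e : Sym2 V) : Bool :=
  xor (sigB N e) (xor (sigB (canonN H (S1 N, S2 N)) e) (chiF (S1 N) e))

noncomputable def decompPair (H : SimpleGraph (V × Bool)) (N : Finset (Sym2 (V × Bool))) :
    Finset (Sym2 V) × Finset (Sym2 V) :=
  (S2 N ∪ (S1 N).filter (fun e => tauF H N e = false),
   S2 N ∪ (S1 N).filter (fun e => tauF H N e = true))

lemma tau_proper {G : SimpleGraph V} {H : SimpleGraph (V × Bool)} (hH : IsTwoLift G H)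
    {N : Finset (Sym2 (V × Bool))} (hN : IsMatchingF H N) {c : V → Bool}
    (hc : ∀ u v, G.Adj u v → c u ≠ c v) :
    ∀ e ∈ S1 N, ∀ e' ∈ S1 N, e ≠ e' → ∀ w, w ∈ e → w ∈ e' →
      tauF H N e ≠ tauF H N e' := by
  intro e he e' he' hee' w hw hw'
  obtain ⟨hN0, hS1, hS2⟩ := canonN_spec hN
  have hc1 : cnt N e = 1 := mem_S1_iff.1 he
  have hc2 : cnt N e' = 1 := mem_S1_iff.1 he'
  have hc3 : cnt (canonN H (S1 N, S2 N)) e = 1 := by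
    rw [← mem_S1_iff (N := canonN H (S1 N, S2 N))]
    rw [hS1]
    exact he
  have hc4 : cnt (canonN H (S1 N, S2 N)) e' = 1 := by
    rw [← mem_S1_iff (N := canonN H (S1 N, S2 N))]
    rw [hS1]
    exact he'
  have hiff := delta hH hN hN0 hee' hw hw' hc1 hc2 hc3 hc4
  have hchi := chiF_spec (chi_exists hH hN hc) e he e' he' hee' w hw hw'
  simp only [tauF]
  cases hb1 : sigB N e <;> cases hb2 : sigB (canonN H (S1 N, S2 N)) e <;>
    cases hb3 : chiF (S1 N) e <;> cases hb4 : sigB N e' <;>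
    cases hb5 : sigB (canonN H (S1 N, S2 N)) e' <;> cases hb6 : chiF (S1 N) e' <;>
    simp_all

lemma union_matching {G : SimpleGraph V} {H : SimpleGraph (V × Bool)} (hH : IsTwoLift G H)
    {N : Finset (Sym2 (V × Bool))} (hN : IsMatchingF H N) {c : V → Bool}
    (hc : ∀ u v, G.Adj u v → c u ≠ c v) (b : Bool) :
    IsMatchingF G (S2 N ∪ (S1 N).filter (fun e => tauF H N e = b)) := by
  constructor
  · intro e he
    simp only [Finset.coe_union, Set.mem_union, Finset.mem_coe] at he
    rcases he with he | he
    · exact S12_mem_edge hH hN (Finset.mem_union_right _ he)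
    · exact S12_mem_edge hH hN (Finset.mem_union_left _ (Finset.mem_filter.1 he).1)
  · intro e he f hf hef v hv hvf
    rw [Finset.mem_union] at he hf
    rcases he with he | he <;> rcases hf with hf | hf
    · exact S2_disj hN he (by rw [mem_S2_iff] at hf; omega) hef hv hvf
    · rcases Finset.mem_filter.1 hf with ⟨hf1, -⟩
      exact S2_disj hN he (by rw [mem_S1_iff] at hf1; omega) hef hv hvf
    · rcases Finset.mem_filter.1 he with ⟨he1, -⟩
      exact S2_disj hN hf (by rw [mem_S1_iff] at he1; omega) (Ne.symm hef) hvf hv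
    · rcases Finset.mem_filter.1 he with ⟨he1, hτe⟩
      rcases Finset.mem_filter.1 hf with ⟨hf1, hτf⟩
      exact tau_proper hH hN hc e he1 f hf1 hef v hv hvf (by rw [hτe, hτf])

lemma cnt_sum {G : SimpleGraph V} {H : SimpleGraph (V × Bool)} (hH : IsTwoLift G H)
    {N : Finset (Sym2 (V × Bool))} (hN : IsMatchingF H N) :
    N.card = (S1 N).card + 2 * (S2 N).card := by
  have h1 : N.card = ∑ e ∈ S1 N ∪ S2 N, cnt N e :=
    Finset.card_eq_sum_card_fiberwise (fun f hf => mem_S12 hH hN hf)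
  have hdisj : Disjoint (S1 N) (S2 N) := by
    rw [Finset.disjoint_left]
    exact fun e he => S1_not_S2 he
  rw [h1, Finset.sum_union hdisj]
  have e1 : ∑ e ∈ S1 N, cnt N e = (S1 N).card := by
    have key : ∀ e ∈ S1 N, cnt N e = 1 := fun e he => mem_S1_iff.1 he
    rw [Finset.sum_congr rfl key, Finset.sum_const, smul_eq_mul, mul_one]
  have e2 : ∑ e ∈ S2 N, cnt N e = 2 * (S2 N).card := by
    have key : ∀ e ∈ S2 N, cnt N e = 2 := fun e he => mem_S2_iff.1 he
    rw [Finset.sum_congr rfl key, Finset.sum_const, smul_eq_mul, mul_comm]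
  omega

lemma tau_filter_split (H : SimpleGraph (V × Bool)) (N : Finset (Sym2 (V × Bool))) :
    ((S1 N).filter (fun e => tauF H N e = false)).card
      + ((S1 N).filter (fun e => tauF H N e = true)).card = (S1 N).card := by
  have h := Finset.card_filter_add_card_filter_not
    (s := S1 N) (p := fun e => tauF H N e = false)
  have h2 : (S1 N).filter (fun a => ¬ tauF H N a = false)
      = (S1 N).filter (fun e => tauF H N e = true) := by
    apply Finset.filter_congr
    intro e _
    simp [Bool.not_eq_false]
  rw [h2] at h
  exact h

lemma decomp_card {G : SimpleGraph V} {H : SimpleGraph (V × Bool)} (hH : IsTwoLift G H)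
    {N : Finset (Sym2 (V × Bool))} (hN : IsMatchingF H N) :
    (decompPair H N).1.card + (decompPair H N).2.card = N.card := by
  have hdisjb : ∀ b, Disjoint (S2 N) ((S1 N).filter (fun e => tauF H N e = b)) := by
    intro b
    rw [Finset.disjoint_left]
    intro e he hf
    exact S1_not_S2 (Finset.mem_filter.1 hf).1 he
  rw [decompPair]
  dsimp only
  rw [Finset.card_union_of_disjoint (hdisjb false), Finset.card_union_of_disjoint (hdisjb true)]
  have := tau_filter_split H N
  have := cnt_sum hH hN
  omega

lemma decomp_weight {G : SimpleGraph V} {H : SimpleGraph (V × Bool)} (hH : IsTwoLift G H)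
    {N : Finset (Sym2 (V × Bool))} (hN : IsMatchingF H N) (θ : Sym2 V → ℝ) :
    ∏ f ∈ N, θ (projE f)
      = (∏ e ∈ (decompPair H N).1, θ e) * (∏ e ∈ (decompPair H N).2, θ e) := by
  have hdisj : Disjoint (S1 N) (S2 N) := by
    rw [Finset.disjoint_left]
    exact fun e he => S1_not_S2 he
  have hdisjb : ∀ b, Disjoint (S2 N) ((S1 N).filter (fun e => tauF H N e = b)) := by
    intro b
    rw [Finset.disjoint_left]
    intro e he hf
    exact S1_not_S2 (Finset.mem_filter.1 hf).1 he
  have h1 : ∏ f ∈ N, θ (projE f) = ∏ e ∈ S1 N ∪ S2 N, θ e ^ cnt N e := by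
    rw [← Finset.prod_fiberwise_of_maps_to (fun f hf => mem_S12 hH hN hf)
      (fun f => θ (projE f))]
    refine Finset.prod_congr rfl fun e he => ?_
    have hconst : ∀ f ∈ N.filter (fun f => projE f = e), θ (projE f) = θ e :=
      fun f hf => by rw [(Finset.mem_filter.1 hf).2]
    rw [Finset.prod_congr rfl hconst, Finset.prod_const]
    rw [cnt]
  have hfiltT : (S1 N).filter (fun a => ¬ tauF H N a = false)
      = (S1 N).filter (fun e => tauF H N e = true) := by
    apply Finset.filter_congr
    intro e _
    simp [Bool.not_eq_false]
  have hsplitS1 := Finset.prod_filter_mul_prod_filter_not (S1 N)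
    (fun e => tauF H N e = false) θ
  rw [hfiltT] at hsplitS1
  rw [h1, Finset.prod_union hdisj]
  have e1 : ∏ e ∈ S1 N, θ e ^ cnt N e = ∏ e ∈ S1 N, θ e :=
    Finset.prod_congr rfl fun e he => by rw [mem_S1_iff.1 he, pow_one]
  have e2 : ∏ e ∈ S2 N, θ e ^ cnt N e = (∏ e ∈ S2 N, θ e) * (∏ e ∈ S2 N, θ e) := by
    rw [← Finset.prod_mul_distrib]
    exact Finset.prod_congr rfl fun e he => by rw [mem_S2_iff.1 he, sq]
  rw [e1, e2, decompPair]
  dsimp only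
  rw [Finset.prod_union (hdisjb false), Finset.prod_union (hdisjb true)]
  rw [← hsplitS1]
  ring

end TwoLiftAux
namespace TwoLiftAux
variable {V : Type*} [Fintype V]

lemma decomp_union (H : SimpleGraph (V × Bool)) (N : Finset (Sym2 (V × Bool))) :
    (decompPair H N).1 ∪ (decompPair H N).2 = S1 N ∪ S2 N := by
  rw [decompPair]
  dsimp only
  ext e
  simp only [Finset.mem_union, Finset.mem_filter]
  constructor
  · rintro ((h | ⟨h, -⟩) | (h | ⟨h, -⟩))
    · exact Or.inr h
    · exact Or.inl h
    · exact Or.inr h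
    · exact Or.inl h
  · rintro (h | h)
    · cases hb : tauF H N e
      · exact Or.inl (Or.inr ⟨h, rfl⟩)
      · exact Or.inr (Or.inr ⟨h, rfl⟩)
    · exact Or.inl (Or.inl h)

lemma decomp_inter (H : SimpleGraph (V × Bool)) (N : Finset (Sym2 (V × Bool))) :
    (decompPair H N).1 ∩ (decompPair H N).2 = S2 N := by
  ext e
  simp only [decompPair, Finset.mem_inter, Finset.mem_union, Finset.mem_filter]
  constructor
  · rintro ⟨h1 | ⟨-, hf⟩, h2 | ⟨-, ht⟩⟩
    · exact h1
    · exact h1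
    · exact h2
    · rw [hf] at ht
      exact absurd ht (by simp)
  · intro h
    exact ⟨Or.inl h, Or.inl h⟩

lemma decomp_inj {G : SimpleGraph V} {H : SimpleGraph (V × Bool)} (hH : IsTwoLift G H)
    {N N' : Finset (Sym2 (V × Bool))} (hN : IsMatchingF H N) (hN' : IsMatchingF H N')
    (heq : decompPair H N = decompPair H N') : N = N' := by
  have hS2 : S2 N = S2 N' := by
    rw [← decomp_inter H N, ← decomp_inter H N', heq]
  have hS12 : S1 N ∪ S2 N = S1 N' ∪ S2 N' := by
    rw [← decomp_union H N, ← decomp_union H N', heq]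
  have hS1 : S1 N = S1 N' := by
    have key : ∀ (X Y : Finset (Sym2 (V × Bool))), S2 X = S2 Y →
        S1 X ∪ S2 X = S1 Y ∪ S2 Y → S1 X ⊆ S1 Y := by
      intro X Y k2 k12 e he
      have : e ∈ S1 Y ∪ S2 Y := k12 ▸ Finset.mem_union_left _ he
      rcases Finset.mem_union.1 this with h | h
      · exact h
      · exact absurd (k2 ▸ h) (S1_not_S2 he)
    exact Finset.Subset.antisymm (key N N' hS2 hS12) (key N' N hS2.symm hS12.symm)
  have htau : ∀ e ∈ S1 N, tauF H N e = tauF H N' e := by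
    intro e he
    have he' : e ∈ S1 N' := hS1 ▸ he
    have h2 : e ∈ (decompPair H N).2 ↔ tauF H N e = true := by
      simp only [decompPair, Finset.mem_union, Finset.mem_filter]
      constructor
      · rintro (h | ⟨-, h⟩)
        · exact absurd h (S1_not_S2 he)
        · exact h
      · intro h
        exact Or.inr ⟨he, h⟩
    have h2' : e ∈ (decompPair H N').2 ↔ tauF H N' e = true := by
      simp only [decompPair, Finset.mem_union, Finset.mem_filter]
      constructor
      · rintro (h | ⟨-, h⟩)
        · exact absurd h (S1_not_S2 he')
        · exact h
      · intro h
        exact Or.inr ⟨he', h⟩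
    rw [heq] at h2
    have hiff : tauF H N e = true ↔ tauF H N' e = true := h2.symm.trans h2'
    cases hb : tauF H N e <;> cases hb' : tauF H N' e <;> simp_all
  have hsig : ∀ e ∈ S1 N, sigB N e = sigB N' e := by
    intro e he
    have h := htau e he
    rw [tauF, tauF, hS1, hS2] at h
    revert h
    cases hA : sigB N e <;> cases hB : sigB N' e <;>
      cases hX : xor (sigB (canonN H (S1 N', S2 N')) e) (chiF (S1 N') e) <;> simp_all
  have main : ∀ (X Y : Finset (Sym2 (V × Bool))), IsMatchingF H X → IsMatchingF H Y →
      S1 X = S1 Y → S2 X = S2 Y → (∀ e ∈ S1 X, sigB X e = sigB Y e) → X ⊆ Y := by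
    intro X Y hX hY h1 h2 hs f hf
    have he12 := mem_S12 hH hX hf
    have heE : projE f ∈ G.edgeSet := S12_mem_edge hH hX he12
    obtain ⟨f0, f1, hf0H, hf1H, hf01, hp0, hp1, huniq, hdisj, hcomp, hcopy0, hcopy1⟩ :=
      canonLift hH heE
    rcases Finset.mem_union.1 he12 with hS1e | hS2e
    · have hcX : cnt X (projE f) = 1 := mem_S1_iff.1 hS1e
      have hcY : cnt Y (projE f) = 1 := mem_S1_iff.1 (h1 ▸ hS1e)
      obtain ⟨A, hAeq⟩ := Finset.card_eq_one.1 hcX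
      obtain ⟨B, hBeq⟩ := Finset.card_eq_one.1 hcY
      have hA := Finset.mem_filter.1 (hAeq ▸ Finset.mem_singleton_self A)
      have hB := Finset.mem_filter.1 (hBeq ▸ Finset.mem_singleton_self B)
      have hfA : f = A := by
        have hfm : f ∈ X.filter (fun f' => projE f' = projE f) :=
          Finset.mem_filter.2 ⟨hf, rfl⟩
        rw [hAeq] at hfm
        exact Finset.mem_singleton.1 hfm
      have hsig_e := hs (projE f) hS1e
      have hpt : (projE f).out.1 ∈ projE f := Sym2.out_fst_mem (projE f)
      obtain ⟨α, hα⟩ := copy_exists (w := (projE f).out.1) (f := f0) (hp0 ▸ hpt)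
      have hα1 : ((projE f).out.1, !α) ∈ f1 := (hcomp (projE f).out.1 hpt α).1 hα
      have hAB : A = B := by
        rcases huniq A (hX.1 hA.1) hA.2 with rfl | rfl <;>
          rcases huniq B (hY.1 hB.1) hB.2 with rfl | rfl
        · rfl
        · have v1 := sig_val hcX hA.1 hA.2 hα (hcopy0 (projE f).out.1 hpt)
          have v2 := sig_val hcY hB.1 hB.2 hα1 (hcopy1 (projE f).out.1 hpt)
          rw [v1, v2] at hsig_e
          cases α <;> exact absurd hsig_e (by decide)
        · have v1 := sig_val hcX hA.1 hA.2 hα1 (hcopy1 (projE f).out.1 hpt)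
          have v2 := sig_val hcY hB.1 hB.2 hα (hcopy0 (projE f).out.1 hpt)
          rw [v1, v2] at hsig_e
          cases α <;> exact absurd hsig_e (by decide)
        · rfl
      rw [hfA, hAB]
      exact hB.1
    · have hcY : cnt Y (projE f) = 2 := mem_S2_iff.1 (h2 ▸ hS2e)
      have hsub : Y.filter (fun f' => projE f' = projE f) ⊆ {f0, f1} := by
        intro g hg
        rcases Finset.mem_filter.1 hg with ⟨hgY, hgp⟩
        rcases huniq g (hY.1 hgY) hgp with rfl | rfl
        · exact Finset.mem_insert_self _ _
        · exact Finset.mem_insert_of_mem (Finset.mem_singleton_self _)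
      have hcard2 : ({f0, f1} : Finset (Sym2 (V × Bool))).card = 2 := by
        rw [Finset.card_insert_of_notMem (by simp [hf01]), Finset.card_singleton]
      have hfeq : Y.filter (fun f' => projE f' = projE f) = {f0, f1} :=
        Finset.eq_of_subset_of_card_le hsub (by rw [hcard2]; rw [cnt] at hcY; omega)
      have hff : f ∈ Y.filter (fun f' => projE f' = projE f) := by
        rw [hfeq]
        rcases huniq f (hX.1 hf) rfl with rfl | rfl
        · exact Finset.mem_insert_self _ _
        · exact Finset.mem_insert_of_mem (Finset.mem_singleton_self _)
      exact (Finset.mem_filter.1 hff).1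
  exact Finset.Subset.antisymm (main N N' hN hN' hS1 hS2 hsig)
    (main N' N hN' hN hS1.symm hS2.symm
      (fun e he => (hsig e (hS1.symm ▸ he)).symm))

lemma mem_edgeFS {G' : SimpleGraph V} {e : Sym2 V} : e ∈ edgeFS G' ↔ e ∈ G'.edgeSet := by
  rw [edgeFS, Set.Finite.mem_toFinset]

lemma lift_matching {G : SimpleGraph V} {H : SimpleGraph (V × Bool)} (hH : IsTwoLift G H)
    {M : Finset (Sym2 V)} (hM : IsMatchingF G M) :
    ∃ MH : Finset (Sym2 (V × Bool)), IsMatchingF H MH ∧ MH.card = 2 * M.card := by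
  classical
  have hEH : ∀ f : Sym2 (V × Bool), f ∈ (Set.toFinite H.edgeSet).toFinset ↔ f ∈ H.edgeSet :=
    fun f => Set.Finite.mem_toFinset _
  refine ⟨(Set.toFinite H.edgeSet).toFinset.filter (fun f => projE f ∈ M), ⟨?_, ?_⟩, ?_⟩
  · intro f hf
    rw [Finset.mem_coe, Finset.mem_filter, hEH] at hf
    exact hf.1
  · intro g1 hg1 g2 hg2 h12 x hx1 hx2
    rcases Finset.mem_filter.1 hg1 with ⟨hg1H, hg1M⟩
    rcases Finset.mem_filter.1 hg2 with ⟨hg2H, hg2M⟩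
    rw [hEH] at hg1H hg2H
    have hx1p : x.1 ∈ projE g1 := by
      rw [projE, Sym2.mem_map]
      exact ⟨x, hx1, rfl⟩
    have hx2p : x.1 ∈ projE g2 := by
      rw [projE, Sym2.mem_map]
      exact ⟨x, hx2, rfl⟩
    by_cases hpp : projE g1 = projE g2
    · have heE : projE g1 ∈ G.edgeSet := proj_mem_edge hH hg1H
      obtain ⟨f0, f1, hf0H, hf1H, hf01, hp0, hp1, huniq, hdisj, -⟩ := canonLift hH heE
      rcases huniq g1 hg1H rfl with rfl | rfl <;>
        rcases huniq g2 hg2H hpp.symm with rfl | rfl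
      · exact h12 rfl
      · exact hdisj x hx1 hx2
      · exact hdisj x hx2 hx1
      · exact h12 rfl
    · exact hM.2 (projE g1) hg1M (projE g2) hg2M hpp x.1 hx1p hx2p
  · rw [Finset.card_eq_sum_card_fiberwise
      (f := projE) (s := (Set.toFinite H.edgeSet).toFinset.filter (fun f => projE f ∈ M))
      (t := M) (fun f hf => (Finset.mem_filter.1 hf).2)]
    have hptw : ∀ e ∈ M,
        (((Set.toFinite H.edgeSet).toFinset.filter (fun f => projE f ∈ M)).filter
          (fun f => projE f = e)).card = 2 := by
      intro e heM
      have heE : e ∈ G.edgeSet := hM.1 heM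
      obtain ⟨f0, f1, hf0H, hf1H, hf01, hp0, hp1, huniq, hdisj, -⟩ := canonLift hH heE
      have : ((Set.toFinite H.edgeSet).toFinset.filter (fun f => projE f ∈ M)).filter
          (fun f => projE f = e) = {f0, f1} := by
        ext g
        simp only [Finset.mem_filter, Finset.mem_insert, Finset.mem_singleton, hEH]
        constructor
        · rintro ⟨⟨hgH, -⟩, hgp⟩
          exact huniq g hgH hgp
        · rintro (rfl | rfl)
          · exact ⟨⟨hf0H, hp0 ▸ heM⟩, hp0⟩
          · exact ⟨⟨hf1H, hp1 ▸ heM⟩, hp1⟩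
      rw [this, Finset.card_insert_of_notMem (by simp [hf01]), Finset.card_singleton]
    rw [Finset.sum_congr rfl hptw, Finset.sum_const, smul_eq_mul, mul_comm]

end TwoLiftAux

/-- For a finite bipartite weighted graph `G` and any 2-lift `H` of `G`
(with lifted weights `θ_H(e) = θ(π(e))`): `P_G(z)² ≥ P_H(z)` for all `z > 0`, and
`ν(H) = 2 ν(G)`. -/
theorem two_lift_partition_and_matching_number {V : Type*} [Fintype V] (G : SimpleGraph V)
    (hbip : G.Colorable 2) (θ : Sym2 V → ℝ) (hθ : ∀ e ∈ G.edgeSet, 0 < θ e)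
    (H : SimpleGraph (V × Bool)) (hH : IsTwoLift G H) :
    (∀ z : ℝ, 0 < z →
      PW G θ z ^ 2 ≥ PW H (fun e => θ (Sym2.map Prod.fst e)) z) ∧
    nuW H (fun e => θ (Sym2.map Prod.fst e)) = 2 * nuW G θ := by
  classical
  obtain ⟨c, hc⟩ := TwoLiftAux.exists_col hbip
  set θH : Sym2 (V × Bool) → ℝ := fun e => θ (Sym2.map Prod.fst e) with hθHdef
  have hθH : ∀ f ∈ H.edgeSet, 0 < θH f := fun f hf =>
    hθ _ (TwoLiftAux.proj_mem_edge hH hf)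
  have hdecomp : ∀ N : Finset (Sym2 (V × Bool)), IsMatchingF H N →
      IsMatchingF G (TwoLiftAux.decompPair H N).1 ∧
      IsMatchingF G (TwoLiftAux.decompPair H N).2 ∧
      (TwoLiftAux.decompPair H N).1.card + (TwoLiftAux.decompPair H N).2.card = N.card ∧
      ∏ f ∈ N, θH f = (∏ e ∈ (TwoLiftAux.decompPair H N).1, θ e) *
        (∏ e ∈ (TwoLiftAux.decompPair H N).2, θ e) := by
    intro N hN
    refine ⟨?_, ?_, TwoLiftAux.decomp_card hH hN, ?_⟩
    · exact TwoLiftAux.union_matching hH hN hc false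
    · exact TwoLiftAux.union_matching hH hN hc true
    · rw [show (∏ f ∈ N, θH f) = ∏ f ∈ N, θ (TwoLiftAux.projE f) from rfl]
      exact TwoLiftAux.decomp_weight hH hN θ
  have hineq : ∀ z : ℝ, 0 < z → PW H θH z ≤ PW G θ z ^ 2 := by
    intro z hz
    rw [TwoLiftAux.PW_eq hθH z, TwoLiftAux.PW_eq hθ z, sq]
    set MG := Finset.univ.filter (fun M : Finset (Sym2 V) => IsMatchingF G M) with hMGdef
    set MH := Finset.univ.filter
      (fun N : Finset (Sym2 (V × Bool)) => IsMatchingF H N) with hMHdef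
    have hinj : ∀ x ∈ MH, ∀ y ∈ MH,
        TwoLiftAux.decompPair H x = TwoLiftAux.decompPair H y → x = y := by
      intro x hx y hy h
      exact TwoLiftAux.decomp_inj hH (Finset.mem_filter.1 hx).2 (Finset.mem_filter.1 hy).2 h
    calc ∑ N ∈ MH, (∏ f ∈ N, θH f) * z ^ N.card
        = ∑ P ∈ MH.image (fun N => TwoLiftAux.decompPair H N),
            ((∏ e ∈ P.1, θ e) * z ^ P.1.card) * ((∏ e ∈ P.2, θ e) * z ^ P.2.card) := by
          rw [Finset.sum_image hinj]
          refine Finset.sum_congr rfl fun N hN => ?_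
          have hNm : IsMatchingF H N := (Finset.mem_filter.1 hN).2
          obtain ⟨-, -, hcard, hw⟩ := hdecomp N hNm
          rw [hw, ← hcard, pow_add]
          ring
      _ ≤ ∑ P ∈ MG ×ˢ MG,
            ((∏ e ∈ P.1, θ e) * z ^ P.1.card) * ((∏ e ∈ P.2, θ e) * z ^ P.2.card) := by
          refine Finset.sum_le_sum_of_subset_of_nonneg ?_ ?_
          · intro P hP
            obtain ⟨N, hN, rfl⟩ := Finset.mem_image.1 hP
            have hNm : IsMatchingF H N := (Finset.mem_filter.1 hN).2
            obtain ⟨hm1, hm2, -, -⟩ := hdecomp N hNm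
            rw [Finset.mem_product]
            exact ⟨Finset.mem_filter.2 ⟨Finset.mem_univ _, hm1⟩,
              Finset.mem_filter.2 ⟨Finset.mem_univ _, hm2⟩⟩
          · intro P hP _
            have hP' := Finset.mem_product.1 hP
            have h1 := TwoLiftAux.prod_pos_of_matching hθ (Finset.mem_filter.1 hP'.1).2
            have h2 := TwoLiftAux.prod_pos_of_matching hθ (Finset.mem_filter.1 hP'.2).2
            exact mul_nonneg (mul_nonneg h1.le (pow_nonneg hz.le _))
              (mul_nonneg h2.le (pow_nonneg hz.le _))
      _ = (∑ M ∈ MG, (∏ e ∈ M, θ e) * z ^ M.card)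
            * (∑ M ∈ MG, (∏ e ∈ M, θ e) * z ^ M.card) := by
          rw [Finset.sum_mul_sum, Finset.sum_product]
  have hge : 2 * nuW G θ ≤ nuW H θH := by
    obtain ⟨M, hM, hcard⟩ := TwoLiftAux.exists_matching_nu hθ
    obtain ⟨MH', hMH', hMHcard⟩ := TwoLiftAux.lift_matching hH hM
    have hle' := TwoLiftAux.card_le_nu hθH hMH'
    omega
  have hle : nuW H θH ≤ 2 * nuW G θ := by
    obtain ⟨N, hN, hNcard⟩ := TwoLiftAux.exists_matching_nu hθH
    obtain ⟨hm1, hm2, hcard, -⟩ := hdecomp N hN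
    have h1 := TwoLiftAux.card_le_nu hθ hm1
    have h2 := TwoLiftAux.card_le_nu hθ hm2
    omega
  exact ⟨fun z hz => hineq z hz, by omega⟩
end
end

section
/- Let G = (V,E) be a finite simple graph with positive edge weights (θ_e)_{e∈E}. Then for every z > 0 there exists a unique vector y(z) ∈ (0,∞)^{E⃗} satisfying y_{u→v}(z) = z / (1 + ∑_{w ∈ ∂u∖{v}} θ_{wu} y_{w→u}(z)) for every directed edge u→v. Moreover, for every directed edge u→v, the function z ↦ y_{u→v}(z) is monotone increasing on (0,∞) and the function z ↦ y_{u→v}(z)/z is monotone decreasing on (0,∞). -/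
open Finset
open scoped BigOperators Classical

noncomputable section

section MsgAux

variable {V : Type*} [Fintype V]

/-- The sum appearing in the message recursion. -/
def msgSum (G : SimpleGraph V) (θ : Sym2 V → ℝ) (y : V × V → ℝ) (u v : V) : ℝ :=
  ∑ w ∈ (nbrFS G u).erase v, θ s(w, u) * y (w, u)

lemma mem_nbrFS_iff (G : SimpleGraph V) {u w : V} : w ∈ nbrFS G u ↔ G.Adj u w := by
  simp [nbrFS]

lemma adj_of_mem_erase (G : SimpleGraph V) {u v w : V}
    (h : w ∈ (nbrFS G u).erase v) : G.Adj w u :=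
  ((mem_nbrFS_iff G).1 (Finset.mem_of_mem_erase h)).symm

lemma theta_pos (G : SimpleGraph V) (θ : Sym2 V → ℝ) (hθ : ∀ e ∈ G.edgeSet, 0 < θ e)
    {w u : V} (h : G.Adj w u) : 0 < θ s(w, u) :=
  hθ _ (G.mem_edgeSet.2 h)

lemma msgSum_nonneg (G : SimpleGraph V) (θ : Sym2 V → ℝ) (hθ : ∀ e ∈ G.edgeSet, 0 < θ e)
    {y : V × V → ℝ} (hy : ∀ a b : V, G.Adj a b → 0 ≤ y (a, b)) (u v : V) :
    0 ≤ msgSum G θ y u v :=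
  Finset.sum_nonneg fun w hw => mul_nonneg (theta_pos G θ hθ (adj_of_mem_erase G hw)).le
    (hy w u (adj_of_mem_erase G hw))

lemma msgSum_mono (G : SimpleGraph V) (θ : Sym2 V → ℝ) (hθ : ∀ e ∈ G.edgeSet, 0 < θ e)
    {y y' : V × V → ℝ} (h : ∀ a b : V, G.Adj a b → y (a, b) ≤ y' (a, b)) (u v : V) :
    msgSum G θ y u v ≤ msgSum G θ y' u v :=
  Finset.sum_le_sum fun w hw => mul_le_mul_of_nonneg_left (h w u (adj_of_mem_erase G hw))
    (theta_pos G θ hθ (adj_of_mem_erase G hw)).le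

lemma msgSum_scaled_le (G : SimpleGraph V) (θ : Sym2 V → ℝ) (hθ : ∀ e ∈ G.edgeSet, 0 < θ e)
    {y y' : V × V → ℝ} {a b : ℝ}
    (h : ∀ c d : V, G.Adj c d → a * y (c, d) ≤ b * y' (c, d)) (u v : V) :
    a * msgSum G θ y u v ≤ b * msgSum G θ y' u v := by
  rw [msgSum, msgSum, Finset.mul_sum, Finset.mul_sum]
  refine Finset.sum_le_sum fun w hw => ?_
  have hadj := adj_of_mem_erase G hw
  have ht := (theta_pos G θ hθ hadj).le
  nlinarith [mul_le_mul_of_nonneg_left (h w u hadj) ht]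

lemma msgfp_eq (G : SimpleGraph V) (θ : Sym2 V → ℝ) (hθ : ∀ e ∈ G.edgeSet, 0 < θ e)
    {z : ℝ} {y : V × V → ℝ} (H : MsgFP G θ z y) {u v : V} (h : G.Adj u v) :
    0 ≤ msgSum G θ y u v ∧ y (u, v) * (1 + msgSum G θ y u v) = z := by
  have hnn : 0 ≤ msgSum G θ y u v :=
    msgSum_nonneg G θ hθ (fun a b hab => (H a b hab).1.le) u v
  have hden : (0 : ℝ) < 1 + msgSum G θ y u v := by linarith
  refine ⟨hnn, ?_⟩
  have := (H u v h).2
  rw [msgSum] at hden ⊢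
  rw [this]
  field_simp

/-- Comparison of fixed points for `z₁ ≤ z₂`:
`y₁ ≤ y₂` and `y₂ / z₂ ≤ y₁ / z₁` (in cleared form). -/
lemma compareFP (G : SimpleGraph V) (θ : Sym2 V → ℝ) (hθ : ∀ e ∈ G.edgeSet, 0 < θ e)
    {z₁ z₂ : ℝ} (h1 : 0 < z₁) (h12 : z₁ ≤ z₂)
    {y₁ y₂ : V × V → ℝ} (H1 : MsgFP G θ z₁ y₁) (H2 : MsgFP G θ z₂ y₂) :
    ∀ u v : V, G.Adj u v → y₁ (u, v) ≤ y₂ (u, v) ∧ z₁ * y₂ (u, v) ≤ z₂ * y₁ (u, v) := by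
  have h2 : 0 < z₂ := h1.trans_le h12
  intro u v huv
  obtain ⟨p₀, hp₀, hmax⟩ := (Finset.univ.filter (fun p : V × V => G.Adj p.1 p.2)).exists_max_image
    (fun p => max (y₁ p / y₂ p) (z₁ * y₂ p / (z₂ * y₁ p)))
    ⟨(u, v), by simp [huv]⟩
  obtain ⟨a, b⟩ := p₀
  have hab : G.Adj a b := by simpa using hp₀
  set r : ℝ := max (y₁ (a, b) / y₂ (a, b)) (z₁ * y₂ (a, b) / (z₂ * y₁ (a, b))) with hrdef
  have key : ∀ c d : V, G.Adj c d →
      y₁ (c, d) / y₂ (c, d) ≤ r ∧ z₁ * y₂ (c, d) / (z₂ * y₁ (c, d)) ≤ r := by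
    intro c d h
    have := hmax (c, d) (by simp [h])
    exact ⟨le_trans (le_max_left _ _) this, le_trans (le_max_right _ _) this⟩
  have hY1uv := (H1 u v huv).1
  have hY2uv := (H2 u v huv).1
  have hr1 : r ≤ 1 := by
    by_contra hrc
    push_neg at hrc
    have hb1 : ∀ c d : V, G.Adj c d → 1 * y₁ (c, d) ≤ r * y₂ (c, d) := by
      intro c d h
      have h2p := (H2 c d h).1
      have hk := (key c d h).1
      rw [div_le_iff₀ h2p] at hk
      linarith
    have hb2 : ∀ c d : V, G.Adj c d → z₁ * y₂ (c, d) ≤ (r * z₂) * y₁ (c, d) := by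
      intro c d h
      have h1p := (H1 c d h).1
      have hk := (key c d h).2
      rw [div_le_iff₀ (by positivity)] at hk
      nlinarith
    obtain ⟨hS1nn, e1⟩ := msgfp_eq G θ hθ H1 hab
    obtain ⟨hS2nn, e2⟩ := msgfp_eq G θ hθ H2 hab
    set S₁ := msgSum G θ y₁ a b with hS₁
    set S₂ := msgSum G θ y₂ a b with hS₂
    have hY1 := (H1 a b hab).1
    have hY2 := (H2 a b hab).1
    have hSb1 : 1 * S₁ ≤ r * S₂ := msgSum_scaled_le G θ hθ hb1 a b
    have hSb2 : z₁ * S₂ ≤ (r * z₂) * S₁ := msgSum_scaled_le G θ hθ hb2 a b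
    rcases max_cases (y₁ (a, b) / y₂ (a, b)) (z₁ * y₂ (a, b) / (z₂ * y₁ (a, b))) with
      ⟨hEq, _⟩ | ⟨hEq, _⟩
    · have hr' : r = y₁ (a, b) / y₂ (a, b) := by rw [hrdef, hEq]
      have hy1r : y₁ (a, b) = r * y₂ (a, b) := by
        rw [hr', div_mul_cancel₀ _ (ne_of_gt hY2)]
      have e1' : (r * y₂ (a, b)) * (1 + S₁) = z₁ := by rw [← hy1r]; exact e1
      have c1 : (r * z₂ * (1 + S₁)) * y₂ (a, b) = (z₁ * (1 + S₂)) * y₂ (a, b) := by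
        linear_combination z₂ * e1' - z₁ * e2
      have c2 : r * z₂ * (1 + S₁) = z₁ * (1 + S₂) := mul_right_cancel₀ (ne_of_gt hY2) c1
      nlinarith [c2, hSb2, h12, mul_pos (sub_pos.mpr hrc) h2]
    · have hr' : r = z₁ * y₂ (a, b) / (z₂ * y₁ (a, b)) := by rw [hrdef, hEq]
      have hzy : z₁ * y₂ (a, b) = r * (z₂ * y₁ (a, b)) := by
        rw [hr', div_mul_cancel₀ _ (ne_of_gt (mul_pos h2 hY1))]
      have c1 : (r * (1 + S₂)) * (z₂ * y₁ (a, b)) = (1 + S₁) * (z₂ * y₁ (a, b)) := by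
        linear_combination (-(1 + S₂)) * hzy + z₁ * e2 - z₂ * e1
      have c2 : r * (1 + S₂) = 1 + S₁ :=
        mul_right_cancel₀ (ne_of_gt (mul_pos h2 hY1)) c1
      nlinarith [c2, hSb1, hrc]
  constructor
  · have h' : y₁ (u, v) / y₂ (u, v) ≤ 1 := le_trans (key u v huv).1 hr1
    rw [div_le_one hY2uv] at h'
    exact h'
  · have h' : z₁ * y₂ (u, v) / (z₂ * y₁ (u, v)) ≤ 1 := le_trans (key u v huv).2 hr1
    rw [div_le_one (mul_pos h2 hY1uv)] at h'
    linarith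

/-- Rigidity of positive 2-cycles of the message map. -/
lemma twocycle (G : SimpleGraph V) (θ : Sym2 V → ℝ) (hθ : ∀ e ∈ G.edgeSet, 0 < θ e)
    {z : ℝ} {y y' : V × V → ℝ}
    (hpos : ∀ u v : V, G.Adj u v → 0 < y (u, v))
    (hpos' : ∀ u v : V, G.Adj u v → 0 < y' (u, v))
    (he : ∀ u v : V, G.Adj u v → y (u, v) * (1 + msgSum G θ y' u v) = z)
    (he' : ∀ u v : V, G.Adj u v → y' (u, v) * (1 + msgSum G θ y u v) = z) :
    ∀ u v : V, G.Adj u v → y (u, v) = y' (u, v) := by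
  intro u v huv
  obtain ⟨p₀, hp₀, hmax⟩ := (Finset.univ.filter (fun p : V × V => G.Adj p.1 p.2)).exists_max_image
    (fun p => max (y p / y' p) (y' p / y p))
    ⟨(u, v), by simp [huv]⟩
  obtain ⟨a, b⟩ := p₀
  have hab : G.Adj a b := by simpa using hp₀
  set r : ℝ := max (y (a, b) / y' (a, b)) (y' (a, b) / y (a, b)) with hrdef
  have key : ∀ c d : V, G.Adj c d →
      y (c, d) / y' (c, d) ≤ r ∧ y' (c, d) / y (c, d) ≤ r := by
    intro c d h
    have := hmax (c, d) (by simp [h])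
    exact ⟨le_trans (le_max_left _ _) this, le_trans (le_max_right _ _) this⟩
  have hYuv := hpos u v huv
  have hY'uv := hpos' u v huv
  have hr1 : r ≤ 1 := by
    by_contra hrc
    push_neg at hrc
    have hb1 : ∀ c d : V, G.Adj c d → 1 * y (c, d) ≤ r * y' (c, d) := by
      intro c d h
      have hk := (key c d h).1
      rw [div_le_iff₀ (hpos' c d h)] at hk
      linarith
    have hb2 : ∀ c d : V, G.Adj c d → 1 * y' (c, d) ≤ r * y (c, d) := by
      intro c d h
      have hk := (key c d h).2
      rw [div_le_iff₀ (hpos c d h)] at hk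
      linarith
    have hY := hpos a b hab
    have hY' := hpos' a b hab
    have e1 := he a b hab
    have e2 := he' a b hab
    set S := msgSum G θ y a b with hS
    set S' := msgSum G θ y' a b with hS'
    have hSb1 : 1 * S ≤ r * S' := msgSum_scaled_le G θ hθ hb1 a b
    have hSb2 : 1 * S' ≤ r * S := msgSum_scaled_le G θ hθ hb2 a b
    rcases max_cases (y (a, b) / y' (a, b)) (y' (a, b) / y (a, b)) with
      ⟨hEq, _⟩ | ⟨hEq, _⟩
    · have hr' : r = y (a, b) / y' (a, b) := by rw [hrdef, hEq]
      have hyr : y (a, b) = r * y' (a, b) := by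
        rw [hr', div_mul_cancel₀ _ (ne_of_gt hY')]
      have c1 : (r * (1 + S')) * y' (a, b) = (1 + S) * y' (a, b) := by
        linear_combination (-(1 + S')) * hyr + e1 - e2
      have c2 : r * (1 + S') = 1 + S := mul_right_cancel₀ (ne_of_gt hY') c1
      nlinarith [c2, hSb1, hrc]
    · have hr' : r = y' (a, b) / y (a, b) := by rw [hrdef, hEq]
      have hyr : y' (a, b) = r * y (a, b) := by
        rw [hr', div_mul_cancel₀ _ (ne_of_gt hY)]
      have c1 : (r * (1 + S)) * y (a, b) = (1 + S') * y (a, b) := by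
        linear_combination (-(1 + S)) * hyr + e2 - e1
      have c2 : r * (1 + S) = 1 + S' := mul_right_cancel₀ (ne_of_gt hY) c1
      nlinarith [c2, hSb2, hrc]
  have h1 : y (u, v) ≤ y' (u, v) := by
    have h' := le_trans (key u v huv).1 hr1
    rw [div_le_one hY'uv] at h'
    exact h'
  have h2 : y' (u, v) ≤ y (u, v) := by
    have h' := le_trans (key u v huv).2 hr1
    rw [div_le_one hYuv] at h'
    exact h'
  linarith

/-- The message map. -/
def msgMap (G : SimpleGraph V) (θ : Sym2 V → ℝ) (z : ℝ) (y : V × V → ℝ) : V × V → ℝ :=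
  fun p => z / (1 + msgSum G θ y p.1 p.2)

/-- Iterates of the message map starting from `0`. -/
def msgSeq (G : SimpleGraph V) (θ : Sym2 V → ℝ) (z : ℝ) (n : ℕ) : V × V → ℝ :=
  (msgMap G θ z)^[n] (fun _ => 0)

/-- The candidate fixed point: pointwise sup of the even iterates. -/
def msgLim (G : SimpleGraph V) (θ : Sym2 V → ℝ) (z : ℝ) : V × V → ℝ :=
  fun p => ⨆ n : ℕ, msgSeq G θ z (2 * n) p

section Existence

variable (G : SimpleGraph V) (θ : Sym2 V → ℝ) (hθ : ∀ e ∈ G.edgeSet, 0 < θ e)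
  {z : ℝ} (hz : 0 < z)

set_option linter.unusedSectionVars false

lemma msgSeq_succ (n : ℕ) : msgSeq G θ z (n + 1) = msgMap G θ z (msgSeq G θ z n) := by
  rw [msgSeq, Function.iterate_succ_apply', msgSeq]

lemma msgSum_tendsto {g : ℕ → V × V → ℝ} {L : V × V → ℝ}
    (hg : ∀ p, Filter.Tendsto (fun n => g n p) Filter.atTop (nhds (L p))) (u v : V) :
    Filter.Tendsto (fun n => msgSum G θ (g n) u v) Filter.atTop
      (nhds (msgSum G θ L u v)) := by
  simp only [msgSum]
  exact tendsto_finset_sum _ fun w _ => (hg (w, u)).const_mul _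

include hθ hz

lemma msgMap_pos {y : V × V → ℝ} (hy : ∀ p, 0 ≤ y p) (p : V × V) :
    0 < msgMap G θ z y p ∧ msgMap G θ z y p ≤ z := by
  have hS : 0 ≤ msgSum G θ y p.1 p.2 :=
    msgSum_nonneg G θ hθ (fun a b _ => hy (a, b)) p.1 p.2
  constructor
  · exact div_pos hz (by linarith)
  · rw [msgMap]
    calc z / (1 + msgSum G θ y p.1 p.2) ≤ z / 1 := by
          apply div_le_div_of_nonneg_left hz.le one_pos
          linarith
    _ = z := div_one z

lemma msgSeq_bounds (n : ℕ) : ∀ p : V × V,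
    0 ≤ msgSeq G θ z n p ∧ msgSeq G θ z n p ≤ z := by
  induction n with
  | zero => exact fun p => ⟨le_refl 0, hz.le⟩
  | succ n ih =>
    intro p
    rw [msgSeq_succ]
    have := msgMap_pos G θ hθ hz (fun q => (ih q).1) p
    exact ⟨this.1.le, this.2⟩

lemma msgMap_antitone {f g : V × V → ℝ} (hf : ∀ p, 0 ≤ f p) (hfg : ∀ p, f p ≤ g p) (p : V × V) :
    msgMap G θ z g p ≤ msgMap G θ z f p := by
  have hSf : 0 ≤ msgSum G θ f p.1 p.2 :=
    msgSum_nonneg G θ hθ (fun a b _ => hf (a, b)) p.1 p.2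
  have hle : msgSum G θ f p.1 p.2 ≤ msgSum G θ g p.1 p.2 :=
    msgSum_mono G θ hθ (fun a b _ => hfg (a, b)) p.1 p.2
  apply div_le_div_of_nonneg_left hz.le (by linarith)
  linarith

lemma msgSeq_even_mono (n : ℕ) : ∀ p : V × V,
    msgSeq G θ z (2 * n) p ≤ msgSeq G θ z (2 * (n + 1)) p := by
  induction n with
  | zero =>
    intro p
    exact (msgSeq_bounds G θ hθ hz 2 p).1
  | succ n ih =>
    have step1 : ∀ p : V × V, msgSeq G θ z (2 * n + 3) p ≤ msgSeq G θ z (2 * n + 1) p := by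
      have h1 : ∀ p, msgSeq G θ z (2 * n) p ≤ msgSeq G θ z (2 * n + 2) p := by
        intro p
        have := ih p
        rw [show 2 * (n + 1) = 2 * n + 2 from by ring] at this
        exact this
      intro p
      have e3 : msgSeq G θ z (2 * n + 3) = msgMap G θ z (msgSeq G θ z (2 * n + 2)) :=
        msgSeq_succ G θ (2 * n + 2)
      have e1 : msgSeq G θ z (2 * n + 1) = msgMap G θ z (msgSeq G θ z (2 * n)) :=
        msgSeq_succ G θ (2 * n)
      rw [e3, e1]
      exact msgMap_antitone G θ hθ hz (fun q => (msgSeq_bounds G θ hθ hz _ q).1) h1 p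
    intro p
    rw [show 2 * (n + 1) = 2 * n + 2 from by ring,
      show 2 * (n + 1 + 1) = 2 * n + 4 from by ring]
    have e2 : msgSeq G θ z (2 * n + 2) = msgMap G θ z (msgSeq G θ z (2 * n + 1)) :=
      msgSeq_succ G θ (2 * n + 1)
    have e4 : msgSeq G θ z (2 * n + 4) = msgMap G θ z (msgSeq G θ z (2 * n + 3)) :=
      msgSeq_succ G θ (2 * n + 3)
    rw [e2, e4]
    exact msgMap_antitone G θ hθ hz (fun q => (msgSeq_bounds G θ hθ hz _ q).1) step1 p

lemma msgSeq_even_tendsto (p : V × V) :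
    Filter.Tendsto (fun n => msgSeq G θ z (2 * n) p) Filter.atTop
      (nhds (msgLim G θ z p)) := by
  apply tendsto_atTop_ciSup
  · exact monotone_nat_of_le_succ fun n => msgSeq_even_mono G θ hθ hz n p
  · exact ⟨z, by rintro x ⟨n, rfl⟩; exact (msgSeq_bounds G θ hθ hz _ p).2⟩

lemma msgLim_nonneg (p : V × V) : 0 ≤ msgLim G θ z p := by
  have h0 : msgSeq G θ z (2 * 0) p = 0 := rfl
  calc (0 : ℝ) = msgSeq G θ z (2 * 0) p := h0.symm
  _ ≤ msgLim G θ z p := by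
      apply le_ciSup (f := fun n => msgSeq G θ z (2 * n) p)
        ⟨z, by rintro x ⟨n, rfl⟩; exact (msgSeq_bounds G θ hθ hz _ p).2⟩

lemma msgSeq_odd_tendsto (p : V × V) :
    Filter.Tendsto (fun n => msgSeq G θ z (2 * n + 1) p) Filter.atTop
      (nhds (msgMap G θ z (msgLim G θ z) p)) := by
  have hS := msgSum_tendsto G θ (fun q => msgSeq_even_tendsto G θ hθ hz q) p.1 p.2
  have hden : (1 : ℝ) + msgSum G θ (msgLim G θ z) p.1 p.2 ≠ 0 := by
    have : 0 ≤ msgSum G θ (msgLim G θ z) p.1 p.2 :=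
      msgSum_nonneg G θ hθ (fun a b _ => msgLim_nonneg G θ hθ hz (a, b)) p.1 p.2
    linarith
  have : Filter.Tendsto (fun n => z / (1 + msgSum G θ (msgSeq G θ z (2 * n)) p.1 p.2))
      Filter.atTop (nhds (z / (1 + msgSum G θ (msgLim G θ z) p.1 p.2))) :=
    Filter.Tendsto.div tendsto_const_nhds (Filter.Tendsto.const_add _ hS) hden
  convert this using 2 with n
  rw [msgSeq_succ]
  rfl
  rfl

lemma msgLim_eq_map_map (p : V × V) :
    msgLim G θ z p = msgMap G θ z (msgMap G θ z (msgLim G θ z)) p := by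
  have h1 : Filter.Tendsto (fun n => msgSeq G θ z (2 * n + 2) p) Filter.atTop
      (nhds (msgLim G θ z p)) := by
    have := (msgSeq_even_tendsto G θ hθ hz p).comp (Filter.tendsto_add_atTop_nat 1)
    simpa [Function.comp_def, Nat.mul_succ] using this
  have h2 : Filter.Tendsto (fun n => msgSeq G θ z (2 * n + 2) p) Filter.atTop
      (nhds (msgMap G θ z (msgMap G θ z (msgLim G θ z)) p)) := by
    have hS := msgSum_tendsto G θ (fun q => msgSeq_odd_tendsto G θ hθ hz q) p.1 p.2
    have hy' : ∀ q, 0 ≤ msgMap G θ z (msgLim G θ z) q := fun q =>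
      (msgMap_pos G θ hθ hz (fun q' => msgLim_nonneg G θ hθ hz q') q).1.le
    have hden : (1 : ℝ) + msgSum G θ (msgMap G θ z (msgLim G θ z)) p.1 p.2 ≠ 0 := by
      have : 0 ≤ msgSum G θ (msgMap G θ z (msgLim G θ z)) p.1 p.2 :=
        msgSum_nonneg G θ hθ (fun a b _ => hy' (a, b)) p.1 p.2
      linarith
    have : Filter.Tendsto
        (fun n => z / (1 + msgSum G θ (msgSeq G θ z (2 * n + 1)) p.1 p.2))
        Filter.atTop
        (nhds (z / (1 + msgSum G θ (msgMap G θ z (msgLim G θ z)) p.1 p.2))) :=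
      Filter.Tendsto.div tendsto_const_nhds (Filter.Tendsto.const_add _ hS) hden
    convert this using 2 with n
    rw [show 2 * n + 2 = (2 * n + 1) + 1 from rfl, msgSeq_succ]
    rfl
    rfl
  exact tendsto_nhds_unique h1 h2

lemma msgLim_fixed : ∀ u v : V, G.Adj u v →
    0 < msgLim G θ z (u, v) ∧
    msgLim G θ z (u, v) = z / (1 + msgSum G θ (msgLim G θ z) u v) := by
  set Y := msgLim G θ z with hY
  set Y' := msgMap G θ z Y with hY'
  have hYnn : ∀ p, 0 ≤ Y p := fun p => msgLim_nonneg G θ hθ hz p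
  have hY'pos : ∀ p, 0 < Y' p := fun p => (msgMap_pos G θ hθ hz hYnn p).1
  have hYeq : ∀ p, Y p = msgMap G θ z Y' p := fun p => msgLim_eq_map_map G θ hθ hz p
  have hYpos : ∀ p, 0 < Y p := by
    intro p
    rw [hYeq p]
    exact (msgMap_pos G θ hθ hz (fun q => (hY'pos q).le) p).1
  have hSY : ∀ u v : V, 0 ≤ msgSum G θ Y u v := fun u v =>
    msgSum_nonneg G θ hθ (fun a b _ => hYnn (a, b)) u v
  have hSY' : ∀ u v : V, 0 ≤ msgSum G θ Y' u v := fun u v =>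
    msgSum_nonneg G θ hθ (fun a b _ => (hY'pos (a, b)).le) u v
  -- 2-cycle equations in product form
  have heY : ∀ u v : V, G.Adj u v → Y (u, v) * (1 + msgSum G θ Y' u v) = z := by
    intro u v _
    rw [hYeq (u, v)]
    show z / (1 + msgSum G θ Y' u v) * (1 + msgSum G θ Y' u v) = z
    have := hSY' u v
    field_simp
  have heY' : ∀ u v : V, G.Adj u v → Y' (u, v) * (1 + msgSum G θ Y u v) = z := by
    intro u v _
    show z / (1 + msgSum G θ Y u v) * (1 + msgSum G θ Y u v) = z
    have := hSY u v
    field_simp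
  have hcyc := twocycle G θ hθ (fun u v h => hYpos (u, v)) (fun u v h => hY'pos (u, v))
    heY heY'
  have hSeq : ∀ u v : V, msgSum G θ Y' u v = msgSum G θ Y u v := by
    intro u v
    apply Finset.sum_congr rfl
    intro w hw
    rw [hcyc w u (adj_of_mem_erase G hw)]
  intro u v huv
  refine ⟨hYpos (u, v), ?_⟩
  have := hYeq (u, v)
  rw [this]
  show z / (1 + msgSum G θ Y' u v) = z / (1 + msgSum G θ Y u v)
  rw [hSeq]

lemma msgLim_MsgFP : MsgFP G θ z (msgLim G θ z) := by
  intro u v huv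
  have := msgLim_fixed G θ hθ hz u v huv
  exact ⟨this.1, this.2⟩

end Existence

end MsgAux

/-- For every `z > 0` the message recursion has a unique positive solution
on directed edges; moreover for each directed edge, `z ↦ y_{u→v}(z)` is monotone increasing
and `z ↦ y_{u→v}(z)/z` is monotone decreasing on `(0, ∞)`. -/
theorem message_fixed_point_exists_unique_monotone {V : Type*} [Fintype V]
    (G : SimpleGraph V) (θ : Sym2 V → ℝ) (hθ : ∀ e ∈ G.edgeSet, 0 < θ e) :
    ∃ y : ℝ → V × V → ℝ,
      (∀ z : ℝ, 0 < z → MsgFP G θ z (y z)) ∧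
      (∀ z : ℝ, 0 < z → ∀ y' : V × V → ℝ, MsgFP G θ z y' →
        ∀ u v : V, G.Adj u v → y' (u, v) = y z (u, v)) ∧
      (∀ u v : V, G.Adj u v → MonotoneOn (fun z => y z (u, v)) (Set.Ioi (0 : ℝ))) ∧
      (∀ u v : V, G.Adj u v → AntitoneOn (fun z => y z (u, v) / z) (Set.Ioi (0 : ℝ))) := by
  refine ⟨fun z => msgLim G θ z, fun z hz => msgLim_MsgFP G θ hθ hz, ?_, ?_, ?_⟩
  · intro z hz y' hy' u v huv
    have h1 := (compareFP G θ hθ hz le_rfl hy' (msgLim_MsgFP G θ hθ hz)) u v huv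
    have h2 := (compareFP G θ hθ hz le_rfl (msgLim_MsgFP G θ hθ hz) hy') u v huv
    exact le_antisymm h1.1 h2.1
  · intro u v huv
    intro z₁ hz₁ z₂ hz₂ h12
    rw [Set.mem_Ioi] at hz₁ hz₂
    exact ((compareFP G θ hθ hz₁ h12 (msgLim_MsgFP G θ hθ hz₁) (msgLim_MsgFP G θ hθ hz₂))
      u v huv).1
  · intro u v huv
    intro z₁ hz₁ z₂ hz₂ h12
    rw [Set.mem_Ioi] at hz₁ hz₂
    have h := ((compareFP G θ hθ hz₁ h12 (msgLim_MsgFP G θ hθ hz₁) (msgLim_MsgFP G θ hθ hz₂))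
      u v huv).2
    rw [div_le_div_iff₀ hz₂ hz₁]
    linarith
end
end

section
/- Let G = (V,E) be a finite simple graph with positive edge weights (θ_e)_{e∈E}, and for z > 0 let y(z) ∈ (0,∞)^{E⃗} be the unique solution of y_{u→v}(z) = z / (1 + ∑_{w ∈ ∂u∖{v}} θ_{wu} y_{w→u}(z)) for all directed edges u→v, and define x_e(z) = θ_e y_{u→v}(z) y_{v→u}(z) / (z + θ_e y_{u→v}(z) y_{v→u}(z)) for each edge e = (uv). Then for every z > 0 and every x ∈ FM(G), one has (∑_{e∈E} x_e) ln z + S^B_G(x) ≤ (∑_{e∈E} x_e(z)) ln z + S^B_G(x(z)); that is, x(z) maximizes x ↦ (∑_e x_e) ln z + S^B_G(x) over FM(G). -/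
open Finset
open scoped BigOperators Classical

noncomputable section

section BetheAux
open intervalIntegral MeasureTheory

-- Gibbs: x - y ≤ x log(x/y)
lemma gibbs_aux {x y : ℝ} (hx : 0 ≤ x) (hy : 0 < y) : x - y ≤ x * Real.log (x / y) := by
  rcases eq_or_lt_of_le hx with h | h
  · simp [← h]; linarith
  · have h1 : Real.log (y / x) ≤ y / x - 1 := Real.log_le_sub_one_of_pos (by positivity)
    have h2 : Real.log (y / x) = - Real.log (x / y) := by
      rw [← Real.log_inv]; congr 1; field_simp
    have h3 : x * Real.log (y/x) ≤ x * (y/x - 1) := by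
      exact mul_le_mul_of_nonneg_left h1 hx
    rw [h2] at h3
    have h4 : x * (y/x - 1) = y - x := by field_simp
    rw [h4] at h3; linarith

lemma kl2_nonneg {a b : ℝ} (ha0 : 0 ≤ a) (ha1 : a ≤ 1) (hb0 : 0 < b) (hb1 : b < 1) :
    0 ≤ a * Real.log (a / b) + (1 - a) * Real.log ((1 - a) / (1 - b)) := by
  have h1 := gibbs_aux ha0 hb0
  have h2 := gibbs_aux (by linarith : (0:ℝ) ≤ 1 - a) (by linarith : (0:ℝ) < 1 - b)
  linarith

lemma neg_mul_log_div {x y : ℝ} (hy : 0 < y) : x * Real.log (y / x) = -(x * Real.log (x / y)) := by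
  rcases eq_or_ne x 0 with rfl | hx
  · simp
  · rw [Real.log_div hy.ne' hx, Real.log_div hx hy.ne']; ring

/-- Key quadratic inequality: if `m` is a positive prob vector and `∑ v = 0` then
`∑ v²/(1-m) ≤ ∑ v²/m`. -/
lemma quad_ineq {ι : Type*} (t : Finset ι) (m v : ι → ℝ)
    (hm0 : ∀ i ∈ t, 0 < m i) (hm1 : ∀ i ∈ t, m i < 1)
    (hms : ∑ i ∈ t, m i = 1) (hvs : ∑ i ∈ t, v i = 0) :
    ∑ i ∈ t, (v i)^2 / (1 - m i) ≤ ∑ i ∈ t, (v i)^2 / (m i) := by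
  by_cases hbig : ∀ i ∈ t, m i ≤ 1/2
  · refine Finset.sum_le_sum fun i hi => ?_
    have := hm0 i hi
    exact div_le_div_of_nonneg_left (sq_nonneg _) this (by linarith [hbig i hi])
  · push_neg at hbig
    obtain ⟨i₀, hi₀t, hi₀⟩ := hbig
    set s := t.erase i₀ with hs
    have hsub : ∀ j ∈ s, m j < 1/2 := by
      intro j hj
      have hjt := Finset.mem_of_mem_erase hj
      have hne : j ≠ i₀ := Finset.ne_of_mem_erase hj
      have hpair : m i₀ + m j ≤ ∑ i ∈ t, m i := by
        have : ({i₀, j} : Finset ι) ⊆ t := by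
          intro a ha; simp at ha; rcases ha with rfl | rfl <;> assumption
        calc m i₀ + m j = ∑ i ∈ ({i₀, j} : Finset ι), m i := by
              rw [Finset.sum_pair (Ne.symm hne)]
          _ ≤ ∑ i ∈ t, m i := Finset.sum_le_sum_of_subset_of_nonneg this
              (fun i hi _ => (hm0 i hi).le)
      rw [hms] at hpair; linarith
    have hsm : ∑ j ∈ s, m j = 1 - m i₀ := by
      have := Finset.add_sum_erase t m hi₀t
      rw [hms] at this; linarith [this]
    have hsv : ∑ j ∈ s, v j = - v i₀ := by
      have := Finset.add_sum_erase t v hi₀t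
      rw [hvs] at this; linarith [this]
    set σ : ℝ := 1 - m i₀ with hσ
    have hσpos : 0 < σ := by have := hm1 i₀ hi₀t; simp [hσ]; linarith
    have hσhalf : σ < 1/2 := by simp [hσ]; linarith
    -- weights
    set w : ι → ℝ := fun j => m j * (1 - m j) / (1 - 2 * m j) with hw
    have hwpos : ∀ j ∈ s, 0 < w j := by
      intro j hj
      have h0 := hm0 j (Finset.mem_of_mem_erase hj)
      have h2 := hsub j hj
      exact div_pos (mul_pos h0 (by linarith)) (by linarith)
    -- superadditivity: ∑ w ≤ σ(1-σ)/(1-2σ)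
    have hwsum : ∑ j ∈ s, w j ≤ σ * (1 - σ) / (1 - 2*σ) := by
      have hstep : ∀ j ∈ s, w j ≤ m j * ((1 - σ) / (1 - 2*σ)) := by
        intro j hj
        have h0 := hm0 j (Finset.mem_of_mem_erase hj)
        have h2 := hsub j hj
        have hms' : m j ≤ σ := by
          rw [← hsm]
          exact Finset.single_le_sum (fun i hi => (hm0 i (Finset.mem_of_mem_erase hi)).le) hj
        rw [hw]; simp only
        rw [div_le_iff₀ (by linarith : (0:ℝ) < 1 - 2 * m j)]
        have key : (1 - m j) * (1 - 2*σ) ≤ (1 - σ) * (1 - 2 * m j) := by nlinarith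
        have h3 : (0:ℝ) < 1 - 2*σ := by linarith
        rw [mul_comm (m j) ((1-σ)/(1-2*σ)), mul_assoc]
        rw [div_mul_eq_mul_div, le_div_iff₀ h3]
        nlinarith
      calc ∑ j ∈ s, w j ≤ ∑ j ∈ s, m j * ((1 - σ) / (1 - 2*σ)) := Finset.sum_le_sum hstep
        _ = σ * (1 - σ) / (1 - 2*σ) := by rw [← Finset.sum_mul, hsm]; ring
    -- Cauchy-Schwarz (Engel form): v i₀² / (∑ w) ≤ ∑ v²/w  — use sq_sum_div_le_sum_sq_div
    have hCS : (v i₀)^2 / (∑ j ∈ s, w j) ≤ ∑ j ∈ s, (v j)^2 / w j := by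
      have := Finset.sq_sum_div_le_sum_sq_div s v hwpos
      rwa [hsv, neg_sq] at this
    have hsne : s.Nonempty := by
      by_contra hemp
      rw [Finset.not_nonempty_iff_eq_empty] at hemp
      rw [hemp, Finset.sum_empty] at hsm; linarith
    have hwsum_pos : 0 < ∑ j ∈ s, w j := Finset.sum_pos hwpos hsne
    have hhpos : 0 < σ * (1 - σ) / (1 - 2*σ) := by
      apply div_pos (mul_pos hσpos (by linarith)) (by linarith)
    have h1 : (v i₀)^2 / (σ * (1 - σ) / (1 - 2*σ)) ≤ (v i₀)^2 / (∑ j ∈ s, w j) :=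
      div_le_div_of_nonneg_left (sq_nonneg _) hwsum_pos hwsum
    have h2 : (v i₀)^2 / (σ * (1 - σ) / (1 - 2*σ)) ≤ ∑ j ∈ s, (v j)^2 / w j := le_trans h1 hCS
    have hm₀ : m i₀ = 1 - σ := by rw [hσ]; ring
    have hσne : σ ≠ 0 := ne_of_gt hσpos
    have hσne1 : (1:ℝ) - σ ≠ 0 := by linarith
    have hσne2 : (1:ℝ) - 2*σ ≠ 0 := by linarith
    have heq : (v i₀)^2/(1 - m i₀) - (v i₀)^2/(m i₀) = (v i₀)^2 / (σ*(1-σ)/(1-2*σ)) := by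
      rw [hm₀, show (1:ℝ) - (1 - σ) = σ by ring, div_sub_div _ _ hσne hσne1, div_div_eq_mul_div]; congr 1; ring
    have hterm : ∀ j ∈ s, (v j)^2/(1 - m j) = (v j)^2/(m j) - (v j)^2 / w j := by
      intro j hj
      have h0 := hm0 j (Finset.mem_of_mem_erase hj)
      have h2' := hsub j hj
      have hne1 : m j ≠ 0 := ne_of_gt h0
      have hne2 : (1:ℝ) - m j ≠ 0 := by linarith
      have hne3 : (1:ℝ) - 2 * m j ≠ 0 := by linarith
      rw [hw]; field_simp; ring
    have hsplit1 : ∑ i ∈ t, (v i)^2/(1-m i) = (v i₀)^2/(1-m i₀) + ∑ j ∈ s, (v j)^2/(1-m j) :=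
      (Finset.add_sum_erase t (fun i => (v i)^2/(1-m i)) hi₀t).symm
    have hsplit2 : ∑ i ∈ t, (v i)^2/(m i) = (v i₀)^2/(m i₀) + ∑ j ∈ s, (v j)^2/(m j) :=
      (Finset.add_sum_erase t (fun i => (v i)^2/(m i)) hi₀t).symm
    have hsum3 : ∑ j ∈ s, (v j)^2/(1-m j) = ∑ j ∈ s, (v j)^2/(m j) - ∑ j ∈ s, (v j)^2 / w j := by
      rw [← Finset.sum_sub_distrib]
      exact Finset.sum_congr rfl hterm
    rw [hsplit1, hsplit2, hsum3]
    linarith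

/-- integrand for the Bregman representation -/
def bregF (x y τ : ℝ) : ℝ := (1 - τ) * (x - y)^2 / ((1 - τ) * y + τ * x)

lemma den_pos {x y τ : ℝ} (hx : 0 < x) (hy : 0 < y) (h0 : 0 ≤ τ) (h1 : τ ≤ 1) :
    0 < (1 - τ) * y + τ * x := by
  rcases eq_or_lt_of_le h1 with rfl | h
  · nlinarith
  · nlinarith [mul_nonneg h0 hx.le, mul_pos (by linarith : (0:ℝ) < 1 - τ) hy]

lemma ae_ne_one : ∀ᵐ (τ : ℝ), τ ≠ (1:ℝ) := by
  rw [MeasureTheory.ae_iff]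
  convert Real.volume_singleton (a := (1:ℝ)) using 2
  ext τ; simp

lemma bregF_cont {x y : ℝ} (hx : 0 < x) (hy : 0 < y) :
    ContinuousOn (bregF x y) (Set.Icc 0 1) := by
  apply ContinuousOn.div
  · fun_prop
  · fun_prop
  · intro τ hτ
    obtain ⟨h0, h1⟩ := hτ
    exact (den_pos hx hy h0 h1).ne'

lemma bregF_intable {x y : ℝ} (hx : 0 ≤ x) (hy : 0 < y) :
    IntervalIntegrable (bregF x y) MeasureTheory.volume 0 1 := by
  rcases eq_or_lt_of_le hx with rfl | hx'
  · -- x = 0 : bregF 0 y = y off τ = 1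
    have hae : (bregF 0 y) =ᵐ[MeasureTheory.volume.restrict (Set.uIoc (0:ℝ) 1)]
        (fun _ => y) := by
      apply MeasureTheory.ae_restrict_of_ae
      filter_upwards [ae_ne_one] with τ hτ1
      have h1 : (1:ℝ) - τ ≠ 0 := fun h => hτ1 (by linarith)
      simp only [bregF]
      rw [mul_zero, add_zero]
      rw [show (0 - y)^2 = y * y by ring]
      field_simp
    exact (IntervalIntegrable.congr_ae (by simpa using intervalIntegrable_const (c := y))
      hae.symm)
  · exact ContinuousOn.intervalIntegrable
      (by rw [Set.uIcc_of_le (by norm_num : (0:ℝ) ≤ 1)]; exact bregF_cont hx' hy)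

/-- Bregman representation of `x log (x/y)`. -/
lemma breg_eq {x y : ℝ} (hx : 0 ≤ x) (hy : 0 < y) :
    x * Real.log (x / y) = (∫ τ in (0:ℝ)..1, bregF x y τ) + x - y := by
  rcases eq_or_lt_of_le hx with rfl | hx'
  · -- x = 0
    have : (∫ τ in (0:ℝ)..1, bregF 0 y τ) = ∫ τ in (0:ℝ)..1, y := by
      apply intervalIntegral.integral_congr_ae
      filter_upwards [ae_ne_one] with τ hτ1 _
      have h1 : (1:ℝ) - τ ≠ 0 := fun h => hτ1 (by linarith)
      simp only [bregF]
      rw [mul_zero, add_zero, show (0 - y)^2 = y * y by ring]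
      field_simp
    rw [this]; simp
  · -- x > 0
    have hden : ∀ τ ∈ Set.Icc (0:ℝ) 1, (0:ℝ) < (1 - τ) * y + τ * x := by
      intro τ hτ; exact den_pos hx' hy hτ.1 hτ.2
    have hderiv : ∀ τ ∈ Set.uIcc (0:ℝ) 1, HasDerivAt
        (fun s => -(x - y) * s + x * Real.log ((1 - s) * y + s * x)) (bregF x y τ) τ := by
      intro τ hτ
      rw [Set.uIcc_of_le (by norm_num : (0:ℝ) ≤ 1)] at hτ
      have hd := hden τ hτ
      have h1 : HasDerivAt (fun s : ℝ => (1 - s) * y + s * x) (x - y) τ := by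
        have : HasDerivAt (fun s : ℝ => (1 - s) * y + s * x) (-y + x) τ := by
          apply HasDerivAt.add
          · simpa using ((hasDerivAt_id τ).const_sub 1).mul_const y
          · simpa using (hasDerivAt_id τ).mul_const x
        simpa [sub_eq_add_neg, add_comm] using this
      have h2 : HasDerivAt (fun s => Real.log ((1 - s) * y + s * x)) ((x - y) / ((1 - τ) * y + τ * x)) τ :=
        (h1.log hd.ne')
      have h3 := ((h2.const_mul x).const_add (-(x - y) * τ))
      have h4 : HasDerivAt (fun s => -(x - y) * s + x * Real.log ((1 - s) * y + s * x))
          (-(x - y) + x * ((x - y) / ((1 - τ) * y + τ * x))) τ := by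
        apply HasDerivAt.add
        · simpa using (hasDerivAt_id τ).const_mul (-(x - y))
        · exact h2.const_mul x
      convert h4 using 1
      rw [bregF]
      field_simp
      ring
    have hInt := bregF_intable hx'.le hy
    have := intervalIntegral.integral_eq_sub_of_hasDerivAt hderiv hInt
    rw [this]
    have hylog : (1 - (0:ℝ)) * y + 0 * x = y := by ring
    have hxlog : (1 - (1:ℝ)) * y + 1 * x = x := by ring
    rw [hylog, hxlog]
    rw [Real.log_div hx'.ne' hy.ne']
    ring

section
variable {κ : Type*}
lemma dagger_general (t : Finset κ) (P Q : κ → ℝ)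
    (hP0 : ∀ i ∈ t, 0 ≤ P i) (hQ0 : ∀ i ∈ t, 0 < Q i) (hQ1 : ∀ i ∈ t, Q i < 1)
    (hPs : ∑ i ∈ t, P i = 1) (hQs : ∑ i ∈ t, Q i = 1) :
    ∑ i ∈ t, (1 - P i) * Real.log ((1 - P i) / (1 - Q i))
      ≤ ∑ i ∈ t, P i * Real.log (P i / Q i) := by
  have hP1 : ∀ i ∈ t, P i ≤ 1 := by
    intro i hi
    calc P i ≤ ∑ j ∈ t, P j := Finset.single_le_sum hP0 hi
      _ = 1 := hPs
  have hfI : ∀ i ∈ t, IntervalIntegrable (bregF (P i) (Q i)) MeasureTheory.volume 0 1 :=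
    fun i hi => bregF_intable (hP0 i hi) (hQ0 i hi)
  have hgI : ∀ i ∈ t, IntervalIntegrable (bregF (1 - P i) (1 - Q i)) MeasureTheory.volume 0 1 :=
    fun i hi => bregF_intable (by linarith [hP1 i hi]) (by linarith [hQ1 i hi])
  have hsum1 : ∑ i ∈ t, (1 - P i) = ∑ i ∈ t, (1 - Q i) := by
    rw [Finset.sum_sub_distrib, Finset.sum_sub_distrib, hPs, hQs]
  have hL : ∑ i ∈ t, (1 - P i) * Real.log ((1 - P i) / (1 - Q i))
      = ∑ i ∈ t, (∫ τ in (0:ℝ)..1, bregF (1 - P i) (1 - Q i) τ) := by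
    rw [Finset.sum_congr rfl (fun i hi => breg_eq (x := 1 - P i) (y := 1 - Q i)
      (by linarith [hP1 i hi]) (by linarith [hQ1 i hi]))]
    simp only [add_sub_assoc, Finset.sum_add_distrib, Finset.sum_sub_distrib]
    rw [hPs, hQs]; ring
  have hR : ∑ i ∈ t, P i * Real.log (P i / Q i)
      = ∑ i ∈ t, (∫ τ in (0:ℝ)..1, bregF (P i) (Q i) τ) := by
    rw [Finset.sum_congr rfl (fun i hi => breg_eq (x := P i) (y := Q i)
      (hP0 i hi) (hQ0 i hi))]
    simp only [add_sub_assoc, Finset.sum_add_distrib, Finset.sum_sub_distrib]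
    rw [hPs, hQs]; ring
  rw [hL, hR]
  rw [← intervalIntegral.integral_finset_sum (s := t) hgI,
    ← intervalIntegral.integral_finset_sum (s := t) hfI]
  have hgS : IntervalIntegrable (fun x => ∑ i ∈ t, bregF (1 - P i) (1 - Q i) x)
      MeasureTheory.volume 0 1 := by
    have h := IntervalIntegrable.sum t hgI
    have he : (∑ i ∈ t, bregF (1 - P i) (1 - Q i))
        = (fun x => ∑ i ∈ t, bregF (1 - P i) (1 - Q i) x) := by
      funext x; simp [Finset.sum_apply]
    rwa [he] at h
  have hfS : IntervalIntegrable (fun x => ∑ i ∈ t, bregF (P i) (Q i) x)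
      MeasureTheory.volume 0 1 := by
    have h := IntervalIntegrable.sum t hfI
    have he : (∑ i ∈ t, bregF (P i) (Q i))
        = (fun x => ∑ i ∈ t, bregF (P i) (Q i) x) := by
      funext x; simp [Finset.sum_apply]
    rwa [he] at h
  apply intervalIntegral.integral_mono_on (by norm_num : (0:ℝ) ≤ 1) hgS hfS
  intro τ hτ
  obtain ⟨hτ0, hτ1⟩ := hτ
  rcases eq_or_lt_of_le hτ1 with rfl | hτlt
  · simp [bregF]
  · -- τ < 1
    set m : κ → ℝ := fun i => (1 - τ) * Q i + τ * P i with hm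
    have hm0 : ∀ i ∈ t, 0 < m i := by
      intro i hi
      have := hQ0 i hi; have := hP0 i hi
      have h1 : 0 < (1 - τ) * Q i := mul_pos (by linarith) (hQ0 i hi)
      have h2 : 0 ≤ τ * P i := mul_nonneg hτ0 (hP0 i hi)
      simp only [hm]; linarith
    have hm1 : ∀ i ∈ t, m i < 1 := by
      intro i hi
      have h1 : (1 - τ) * Q i < (1 - τ) * 1 := by
        apply mul_lt_mul_of_pos_left (hQ1 i hi) (by linarith)
      have h2 : τ * P i ≤ τ * 1 := mul_le_mul_of_nonneg_left (hP1 i hi) hτ0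
      simp only [hm]; linarith
    have hms : ∑ i ∈ t, m i = 1 := by
      simp only [hm]
      rw [Finset.sum_add_distrib, ← Finset.mul_sum, ← Finset.mul_sum, hPs, hQs]; ring
    have hquad := quad_ineq t m (fun i => P i - Q i) hm0 hm1 hms
      (by rw [Finset.sum_sub_distrib, hPs, hQs]; ring)
    have hfg : ∀ i ∈ t, bregF (1 - P i) (1 - Q i) τ
        = (1 - τ) * ((P i - Q i)^2 / (1 - m i)) := by
      intro i hi
      simp only [bregF, hm]
      rw [mul_div_assoc]
      have h1 : ((1:ℝ) - P i - (1 - Q i))^2 = (P i - Q i)^2 := by ring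
      have h2 : ((1:ℝ) - τ) * (1 - Q i) + τ * (1 - P i) = 1 - ((1 - τ) * Q i + τ * P i) := by ring
      rw [h1, h2]
    have hfg2 : ∀ i ∈ t, bregF (P i) (Q i) τ = (1 - τ) * ((P i - Q i)^2 / m i) := by
      intro i hi
      simp only [bregF, hm]
      rw [mul_div_assoc]
    rw [Finset.sum_congr rfl hfg, Finset.sum_congr rfl hfg2,
      ← Finset.mul_sum, ← Finset.mul_sum]
    exact mul_le_mul_of_nonneg_left hquad (by linarith)

end
section
variable {ι : Type*}
lemma dagger_extra (s : Finset ι) (P Q : ι → ℝ) (p₀ q₀ : ℝ)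
    (hP0 : ∀ i ∈ s, 0 ≤ P i) (hQ0 : ∀ i ∈ s, 0 < Q i) (hQ1 : ∀ i ∈ s, Q i < 1)
    (hp₀ : 0 ≤ p₀) (hq₀ : 0 < q₀) (hq₀1 : q₀ < 1)
    (hPs : ∑ i ∈ s, P i + p₀ = 1) (hQs : ∑ i ∈ s, Q i + q₀ = 1) :
    ∑ i ∈ s, (1 - P i) * Real.log ((1 - P i) / (1 - Q i))
        + (1 - p₀) * Real.log ((1 - p₀) / (1 - q₀))
      ≤ ∑ i ∈ s, P i * Real.log (P i / Q i) + p₀ * Real.log (p₀ / q₀) := by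
  classical
  set t : Finset (Option ι) := insert none (s.image some) with ht
  set P' : Option ι → ℝ := fun o => o.elim p₀ P with hP'
  set Q' : Option ι → ℝ := fun o => o.elim q₀ Q with hQ'
  have hnone : (none : Option ι) ∉ s.image some := by simp
  -- sums over t
  have hsumP' : ∀ (g : ℝ → ℝ → ℝ),
      ∑ o ∈ t, g (P' o) (Q' o) = g p₀ q₀ + ∑ i ∈ s, g (P i) (Q i) := by
    intro g
    rw [ht, Finset.sum_insert hnone, Finset.sum_image (fun a _ b _ h => Option.some_injective ι h)]
    rfl
  have h := dagger_general t P' Q' ?_ ?_ ?_ ?_ ?_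
  · have h1 := hsumP' (fun a b => (1 - a) * Real.log ((1 - a) / (1 - b)))
    have h2 := hsumP' (fun a b => a * Real.log (a / b))
    rw [h1, h2] at h
    linarith
  · intro o ho
    match o with
    | none => exact hp₀
    | some i =>
      have : i ∈ s := by
        rw [ht] at ho; simp at ho; exact ho
      exact hP0 i this
  · intro o ho
    match o with
    | none => exact hq₀
    | some i =>
      have : i ∈ s := by rw [ht] at ho; simp at ho; exact ho
      exact hQ0 i this
  · intro o ho
    match o with
    | none => exact hq₀1
    | some i =>
      have : i ∈ s := by rw [ht] at ho; simp at ho; exact ho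
      exact hQ1 i this
  · have := hsumP' (fun a _ => a)
    rw [show (∑ o ∈ t, P' o) = ∑ o ∈ t, (fun a (_ : ℝ) => a) (P' o) (Q' o) from rfl, this]
    linarith
  · have := hsumP' (fun _ b => b)
    rw [show (∑ o ∈ t, Q' o) = ∑ o ∈ t, (fun (_ : ℝ) b => b) (P' o) (Q' o) from rfl, this]
    linarith

/-- per-vertex inequality combining `dagger_extra` and Bernoulli KL -/
lemma vertex_ineq (s : Finset ι) (P Q : ι → ℝ)
    (hP0 : ∀ i ∈ s, 0 ≤ P i) (hQ0 : ∀ i ∈ s, 0 < Q i) (hQ1 : ∀ i ∈ s, Q i < 1)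
    (hSp1 : ∑ i ∈ s, P i ≤ 1) (hSq0 : 0 < ∑ i ∈ s, Q i) (hSq1 : ∑ i ∈ s, Q i < 1) :
    ∑ i ∈ s, (P i * Real.log (Q i / P i) + (1 - P i) * Real.log ((1 - P i) / (1 - Q i)))
      ≤ 2 * ((1 - ∑ i ∈ s, P i) * Real.log ((1 - ∑ i ∈ s, P i) / (1 - ∑ i ∈ s, Q i))) := by
  classical
  have hSp0 : 0 ≤ ∑ i ∈ s, P i := Finset.sum_nonneg hP0
  have hd := dagger_extra s P Q (1 - ∑ i ∈ s, P i) (1 - ∑ i ∈ s, Q i)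
    hP0 hQ0 hQ1 (by linarith) (by linarith) (by linarith) (by ring) (by ring)
  have hkl := kl2_nonneg hSp0 hSp1 hSq0 hSq1
  have hsplit : ∑ i ∈ s, (P i * Real.log (Q i / P i) + (1 - P i) * Real.log ((1 - P i) / (1 - Q i)))
      = ∑ i ∈ s, (1 - P i) * Real.log ((1 - P i) / (1 - Q i))
        - ∑ i ∈ s, P i * Real.log (P i / Q i) := by
    rw [← Finset.sum_sub_distrib]
    apply Finset.sum_congr rfl
    intro i hi
    rw [neg_mul_log_div (hQ0 i hi)]; ring
  rw [hsplit]
  have e1 : (1 - (1 - ∑ i ∈ s, P i)) = ∑ i ∈ s, P i := by ring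
  have e2 : (1 - (1 - ∑ i ∈ s, Q i)) = ∑ i ∈ s, Q i := by ring
  rw [e1, e2] at hd
  linarith
end
section
variable {V : Type*} [Fintype V] (G : SimpleGraph V)
variable {V : Type*} [Fintype V] (G : SimpleGraph V)

lemma mem_edgeFS {e : Sym2 V} : e ∈ edgeFS G ↔ e ∈ G.edgeSet := Set.Finite.mem_toFinset _

lemma adj_mem_edgeFS {a b : V} : s(a,b) ∈ edgeFS G ↔ G.Adj a b := by
  rw [mem_edgeFS]; exact SimpleGraph.mem_edgeSet G

lemma mem_nbrFS {u w : V} : w ∈ nbrFS G u ↔ G.Adj u w := by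
  rw [nbrFS, Set.Finite.mem_toFinset]; exact SimpleGraph.mem_neighborSet G u w

/-- endpoints filter of a non-diagonal edge -/
lemma filter_mem_pair {a b : V} (hab : a ≠ b) :
    Finset.univ.filter (fun v => v ∈ s(a,b)) = ({a, b} : Finset V) := by
  ext v
  simp [Sym2.mem_iff]

/-- incident edges are the image of neighbours -/
lemma incident_eq_image (u : V) :
    (edgeFS G).filter (fun e => u ∈ e) = (nbrFS G u).image (fun w => s(u,w)) := by
  classical
  ext e
  rw [Finset.mem_filter, Finset.mem_image]
  constructor
  · rintro ⟨he, hue⟩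
    obtain ⟨w, rfl⟩ := Sym2.mem_iff_exists.mp hue
    exact ⟨w, (mem_nbrFS G).mpr ((adj_mem_edgeFS G).mp he), rfl⟩
  · rintro ⟨w, hw, rfl⟩
    exact ⟨(adj_mem_edgeFS G).mpr ((mem_nbrFS G).mp hw), by simp [Sym2.mem_iff]⟩

/-- sum over incident edges equals sum over neighbors -/
lemma sum_incident (u : V) (f : Sym2 V → ℝ) :
    ∑ e ∈ (edgeFS G).filter (fun e => u ∈ e), f e = ∑ w ∈ nbrFS G u, f s(u,w) := by
  classical
  rw [incident_eq_image]
  rw [Finset.sum_image]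
  intro w1 _ w2 _ h
  exact Sym2.congr_right.mp h

/-- double counting: vertex sums of incident-edge sums count each edge twice, with weights -/
lemma sum_endpoint_weights (t : Sym2 V → ℝ) (g : V → ℝ) :
    ∑ v : V, g v * (∑ e ∈ (edgeFS G).filter (fun e => v ∈ e), t e)
      = ∑ e ∈ edgeFS G, (∑ w ∈ Finset.univ.filter (fun w => w ∈ e), g w) * t e := by
  classical
  have h1 : ∀ v : V, g v * (∑ e ∈ (edgeFS G).filter (fun e => v ∈ e), t e)
      = ∑ e ∈ edgeFS G, (if v ∈ e then g v * t e else 0) := by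
    intro v
    rw [Finset.sum_filter, Finset.mul_sum]
    exact Finset.sum_congr rfl (fun e _ => by split <;> simp)
  have h2 : ∀ e : Sym2 V, (∑ w ∈ Finset.univ.filter (fun w => w ∈ e), g w) * t e
      = ∑ v : V, (if v ∈ e then g v * t e else 0) := by
    intro e
    rw [Finset.sum_filter, Finset.sum_mul]
    exact Finset.sum_congr rfl (fun v _ => by split <;> simp)
  rw [Finset.sum_congr rfl (fun v _ => h1 v), Finset.sum_comm]
  exact (Finset.sum_congr rfl (fun e _ => (h2 e).symm)).symm ▸ rfl

lemma card_endpoints {e : Sym2 V} (he : e ∈ edgeFS G) :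
    (∑ w ∈ Finset.univ.filter (fun w => w ∈ e), (1:ℝ)) = 2 := by
  classical
  have hnd : ¬ e.IsDiag := SimpleGraph.not_isDiag_of_mem_edgeSet G ((mem_edgeFS G).mp he)
  induction e using Sym2.ind with
  | _ a b =>
    have hab : a ≠ b := by
      intro h; exact hnd (Sym2.mk_isDiag_iff.mpr h)
    rw [filter_mem_pair hab]
    rw [Finset.sum_const, Finset.card_pair hab]
    norm_num

/-- special case g = 1: each edge counted twice -/
lemma sum_endpoint_two (t : Sym2 V → ℝ) :
    ∑ v : V, (∑ e ∈ (edgeFS G).filter (fun e => v ∈ e), t e)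
      = 2 * ∑ e ∈ edgeFS G, t e := by
  classical
  have h := sum_endpoint_weights G t (fun _ => 1)
  simp only [one_mul] at h
  rw [h, Finset.mul_sum]
  exact Finset.sum_congr rfl (fun e he => by rw [card_endpoints G he])

end

lemma edge_diff {a b : ℝ} (ha0 : 0 ≤ a) (ha1 : a ≤ 1) (hb0 : 0 < b) (hb1 : b < 1) :
    (a * (Real.log b + Real.log (1 - b)) - a * Real.log a + (1 - a) * Real.log (1 - a))
      - (b * (Real.log b + Real.log (1 - b)) - b * Real.log b + (1 - b) * Real.log (1 - b))
    = a * Real.log (b / a) + (1 - a) * Real.log ((1 - a) / (1 - b)) := by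
  have h1 : a * Real.log (b / a) = a * Real.log b - a * Real.log a := by
    rcases eq_or_lt_of_le ha0 with h | h
    · rw [← h]; simp
    · rw [Real.log_div hb0.ne' h.ne']; ring
  have h2 : (1 - a) * Real.log ((1 - a) / (1 - b))
      = (1 - a) * Real.log (1 - a) - (1 - a) * Real.log (1 - b) := by
    rcases eq_or_lt_of_le ha1 with h | h
    · rw [h]; simp
    · rw [Real.log_div (by linarith : (1:ℝ) - a ≠ 0) (by linarith : (1:ℝ) - b ≠ 0)]; ring
  rw [h1, h2]; ring

lemma vertex_diff {a b : ℝ} (ha1 : a ≤ 1) (hb1 : b < 1) :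
    (Real.log (1 - b) * a + (1 - a) * Real.log (1 - a))
      - (Real.log (1 - b) * b + (1 - b) * Real.log (1 - b))
    = (1 - a) * Real.log ((1 - a) / (1 - b)) := by
  have h2 : (1 - a) * Real.log ((1 - a) / (1 - b))
      = (1 - a) * Real.log (1 - a) - (1 - a) * Real.log (1 - b) := by
    rcases eq_or_lt_of_le ha1 with h | h
    · rw [h]; simp
    · rw [Real.log_div (by linarith : (1:ℝ) - a ≠ 0) (by linarith : (1:ℝ) - b ≠ 0)]; ring
  rw [h2]; ring

end BetheAux

/-- The vector `x(z)` of BP marginals maximizes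
`x ↦ (∑_e x_e) ln z + S^B_G(x)` over the fractional matching polytope `FM(G)`. -/
theorem bp_marginals_maximize_bethe {V : Type*} [Fintype V] (G : SimpleGraph V)
    (θ : Sym2 V → ℝ) (hθ : ∀ e ∈ G.edgeSet, 0 < θ e)
    (y : ℝ → V × V → ℝ) (hy : ∀ z : ℝ, 0 < z → MsgFP G θ z (y z))
    (x : ℝ → Sym2 V → ℝ)
    (hx : ∀ z : ℝ, 0 < z → ∀ u v : V, G.Adj u v →
      x z s(u, v) = θ s(u, v) * y z (u, v) * y z (v, u)
        / (z + θ s(u, v) * y z (u, v) * y z (v, u))) :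
    ∀ z : ℝ, 0 < z → ∀ x' : Sym2 V → ℝ, memFM G x' →
      (∑ e ∈ edgeFS G, x' e) * Real.log z + SBW G θ x'
        ≤ (∑ e ∈ edgeFS G, x z e) * Real.log z + SBW G θ (x z) := by
  classical
  intro z hz x' hxFM
  obtain ⟨hp0, hp1⟩ := hxFM
  set q : Sym2 V → ℝ := x z with hqdef
  -- basic positivity facts
  have hθadj : ∀ u v : V, G.Adj u v → 0 < θ s(u,v) :=
    fun u v h => hθ _ ((SimpleGraph.mem_edgeSet G).mpr h)
  have hY : ∀ u v : V, G.Adj u v → 0 < y z (u, v) := fun u v h => (hy z hz u v h).1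
  set Su : V → ℝ := fun u => ∑ w ∈ nbrFS G u, θ s(w,u) * y z (w,u) with hSudef
  have hterm_pos : ∀ u : V, ∀ w ∈ nbrFS G u, 0 < θ s(w,u) * y z (w,u) := by
    intro u w hw
    have hadj : G.Adj u w := (mem_nbrFS G).mp hw
    exact mul_pos (hθadj w u hadj.symm) (hY w u hadj.symm)
  have hSu0 : ∀ u, 0 ≤ Su u := fun u => Finset.sum_nonneg (fun w hw => (hterm_pos u w hw).le)
  have hSu1 : ∀ u, (0:ℝ) < 1 + Su u := fun u => by linarith [hSu0 u]
  -- key fixed point identity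
  have hkey : ∀ u v : V, G.Adj u v →
      y z (u,v) * (1 + Su u) = z + θ s(u,v) * y z (u,v) * y z (v,u) := by
    intro u v h
    have hv : v ∈ nbrFS G u := (mem_nbrFS G).mpr h
    have hS' : (0:ℝ) ≤ ∑ w ∈ (nbrFS G u).erase v, θ s(w,u) * y z (w,u) :=
      Finset.sum_nonneg (fun w hw => (hterm_pos u w (Finset.mem_of_mem_erase hw)).le)
    have heq := (hy z hz u v h).2
    have hne : (0:ℝ) < 1 + ∑ w ∈ (nbrFS G u).erase v, θ s(w,u) * y z (w,u) := by linarith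
    have h2 : y z (u,v) * (1 + ∑ w ∈ (nbrFS G u).erase v, θ s(w,u) * y z (w,u)) = z := by
      rw [heq, div_mul_cancel₀ _ hne.ne']
    have hsplit : Su u = θ s(v,u) * y z (v,u)
        + ∑ w ∈ (nbrFS G u).erase v, θ s(w,u) * y z (w,u) :=
      (Finset.add_sum_erase (nbrFS G u) (fun w => θ s(w,u) * y z (w,u)) hv).symm
    have hsw : θ s(v,u) = θ s(u,v) := by rw [Sym2.eq_swap]
    calc y z (u,v) * (1 + Su u)
        = y z (u,v) * (1 + ∑ w ∈ (nbrFS G u).erase v, θ s(w,u) * y z (w,u))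
            + y z (u,v) * (θ s(v,u) * y z (v,u)) := by rw [hsplit]; ring
      _ = z + θ s(u,v) * y z (u,v) * y z (v,u) := by rw [h2, hsw]; ring
  have hdpos : ∀ u v : V, G.Adj u v → 0 < z + θ s(u,v) * y z (u,v) * y z (v,u) := by
    intro u v h
    have := mul_pos (mul_pos (hθadj u v h) (hY u v h)) (hY v u h.symm)
    linarith
  have hqval : ∀ u v : V, G.Adj u v → q s(u,v)
      = θ s(u,v) * y z (u,v) * y z (v,u) / (z + θ s(u,v) * y z (u,v) * y z (v,u)) := by
    intro u v h; rw [hqdef]; exact hx z hz u v h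
  have hq_pos : ∀ u v : V, G.Adj u v → 0 < q s(u,v) := by
    intro u v h
    rw [hqval u v h]
    exact div_pos (mul_pos (mul_pos (hθadj u v h) (hY u v h)) (hY v u h.symm)) (hdpos u v h)
  have hq_lt1 : ∀ u v : V, G.Adj u v → q s(u,v) < 1 := by
    intro u v h
    rw [hqval u v h]
    rw [div_lt_one (hdpos u v h)]
    linarith
  have hq1m : ∀ u v : V, G.Adj u v →
      1 - q s(u,v) = z / (z + θ s(u,v) * y z (u,v) * y z (v,u)) := by
    intro u v h
    have hd := hdpos u v h
    rw [hqval u v h, eq_div_iff hd.ne', sub_mul, div_mul_cancel₀ _ hd.ne']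
    ring
  have hqE : ∀ e ∈ edgeFS G, 0 < q e ∧ q e < 1 := by
    intro e he
    induction e using Sym2.ind with
    | _ a b =>
      have hadj := (adj_mem_edgeFS G).mp he
      exact ⟨hq_pos a b hadj, hq_lt1 a b hadj⟩
  -- incident sum of q
  have hSq : ∀ u : V, incSum G q u = Su u / (1 + Su u) := by
    intro u
    rw [incSum, sum_incident]
    have hper : ∀ w ∈ nbrFS G u, q s(u,w) = θ s(w,u) * y z (w,u) / (1 + Su u) := by
      intro w hw
      have hadj : G.Adj u w := (mem_nbrFS G).mp hw
      have h1 := hkey u w hadj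
      have hYne : y z (u,w) ≠ 0 := (hY u w hadj).ne'
      have hne : (1 + Su u) ≠ 0 := (hSu1 u).ne'
      have hsw : θ s(u,w) = θ s(w,u) := by rw [Sym2.eq_swap]
      rw [hqval u w hadj, ← h1, hsw]
      rw [show θ s(w,u) * y z (u,w) * y z (w,u) = (θ s(w,u) * y z (w,u)) * y z (u,w) by ring,
        show y z (u,w) * (1 + Su u) = (1 + Su u) * y z (u,w) by ring]
      rw [mul_div_mul_right _ _ hYne]
    rw [Finset.sum_congr rfl hper, ← Finset.sum_div]
  have hSq1 : ∀ u : V, incSum G q u < 1 := by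
    intro u
    rw [hSq u, div_lt_one (hSu1 u)]
    linarith
  have hSqsub : ∀ u : V, 1 - incSum G q u = 1 / (1 + Su u) := by
    intro u
    rw [hSq u, eq_div_iff (hSu1 u).ne', sub_mul, div_mul_cancel₀ _ (hSu1 u).ne']
    ring
  have hSqpos : ∀ u : V, 0 < 1 - incSum G q u := by
    intro u; rw [hSqsub u]; exact div_pos zero_lt_one (hSu1 u)
  -- gradient identity
  have hgrad : ∀ u v : V, G.Adj u v →
      z * θ s(u,v) * ((1 - incSum G q u) * (1 - incSum G q v))
        = q s(u,v) * (1 - q s(u,v)) := by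
    intro u v h
    have h1 := hkey u v h
    have h2 := hkey v u h.symm
    have hsw : θ s(v,u) = θ s(u,v) := by rw [Sym2.eq_swap]
    rw [hsw] at h2
    have h2' : y z (v,u) * (1 + Su v) = z + θ s(u,v) * y z (u,v) * y z (v,u) := by
      rw [h2]; ring
    have hd2 : (z + θ s(u,v) * y z (u,v) * y z (v,u)) * (z + θ s(u,v) * y z (u,v) * y z (v,u))
        = (y z (u,v) * y z (v,u)) * ((1 + Su u) * (1 + Su v)) := by
      linear_combination (-(y z (v,u) * (1 + Su v))) * h1
        + (-(z + θ s(u,v) * y z (u,v) * y z (v,u))) * h2'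
    rw [hSqsub u, hSqsub v, hq1m u v h, hqval u v h]
    rw [div_mul_div_comm, div_mul_div_comm]
    rw [hd2]
    have hY1 : y z (u,v) ≠ 0 := (hY u v h).ne'
    have hY2 : y z (v,u) ≠ 0 := (hY v u h.symm).ne'
    have hA : (1 + Su u) ≠ 0 := (hSu1 u).ne'
    have hB : (1 + Su v) ≠ 0 := (hSu1 v).ne'
    field_simp
  have hGlog : ∀ u v : V, G.Adj u v →
      Real.log z + Real.log (θ s(u,v))
        = Real.log (q s(u,v)) + Real.log (1 - q s(u,v))
          - Real.log (1 - incSum G q u) - Real.log (1 - incSum G q v) := by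
    intro u v h
    have h1 := hgrad u v h
    have l1 : Real.log (z * θ s(u,v) * ((1 - incSum G q u) * (1 - incSum G q v)))
        = Real.log z + Real.log (θ s(u,v))
          + (Real.log (1 - incSum G q u) + Real.log (1 - incSum G q v)) := by
      rw [Real.log_mul (mul_pos hz (hθadj u v h)).ne'
          (mul_pos (hSqpos u) (hSqpos v)).ne',
        Real.log_mul hz.ne' (hθadj u v h).ne',
        Real.log_mul (hSqpos u).ne' (hSqpos v).ne']
    have l2 : Real.log (q s(u,v) * (1 - q s(u,v)))
        = Real.log (q s(u,v)) + Real.log (1 - q s(u,v)) := by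
      rw [Real.log_mul (hq_pos u v h).ne' (by linarith [hq_lt1 u v h, hq_pos u v h] : (1:ℝ) - q s(u,v) ≠ 0)]
    have := congrArg Real.log h1
    rw [l1, l2] at this
    linarith
  -- the E1 rearrangement identity
  have E1 : ∀ t : Sym2 V → ℝ, (∀ e ∈ edgeFS G, 0 ≤ t e) →
      (∑ e ∈ edgeFS G, t e) * Real.log z + SBW G θ t
      = ∑ e ∈ edgeFS G,
          (t e * (Real.log (q e) + Real.log (1 - q e)) - t e * Real.log (t e)
            + (1 - t e) * Real.log (1 - t e))
        - ∑ v : V, (Real.log (1 - incSum G q v) * incSum G t v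
            + (1 - incSum G t v) * Real.log (1 - incSum G t v)) := by
    intro t ht
    simp only [SBW]
    rw [Finset.sum_mul]
    have hEdge : ∀ e ∈ edgeFS G,
        t e * Real.log z + (t e * Real.log (θ e / t e) + (1 - t e) * Real.log (1 - t e))
        = (t e * (Real.log (q e) + Real.log (1 - q e)) - t e * Real.log (t e)
            + (1 - t e) * Real.log (1 - t e))
          - (∑ w ∈ Finset.univ.filter (fun w => w ∈ e), Real.log (1 - incSum G q w)) * t e := by
      intro e he
      induction e using Sym2.ind with
      | _ a b =>
        have hadj := (adj_mem_edgeFS G).mp he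
        have hab : a ≠ b := hadj.ne
        have hθe : 0 < θ s(a,b) := hθadj a b hadj
        have hlogsplit : t s(a,b) * Real.log (θ s(a,b) / t s(a,b))
            = t s(a,b) * Real.log (θ s(a,b)) - t s(a,b) * Real.log (t s(a,b)) := by
          rcases eq_or_lt_of_le (ht _ he) with h0 | h0
          · rw [← h0]; simp
          · rw [Real.log_div hθe.ne' h0.ne']; ring
        have hpair : (∑ w ∈ Finset.univ.filter (fun w => w ∈ s(a,b)),
              Real.log (1 - incSum G q w))
            = Real.log (1 - incSum G q a) + Real.log (1 - incSum G q b) := by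
          rw [filter_mem_pair hab, Finset.sum_pair hab]
        rw [hlogsplit, hpair]
        have hG := hGlog a b hadj
        linear_combination (t s(a,b)) * hG
    have hsumEdge := Finset.sum_congr rfl hEdge
    have hw := sum_endpoint_weights G t (fun v => Real.log (1 - incSum G q v))
    simp only [incSum] at hw hsumEdge ⊢
    simp only [Finset.sum_add_distrib, Finset.sum_sub_distrib] at hsumEdge ⊢
    linarith [hsumEdge, hw]
  -- apply E1 to x' and q
  have hEp := E1 x' hp0
  have hEq := E1 q (fun e he => (hqE e he).1.le)
  rw [hEp, hEq]
  -- reduce to difference inequality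
  have hp1E : ∀ e ∈ edgeFS G, x' e ≤ 1 := by
    intro e he
    induction e using Sym2.ind with
    | _ a b =>
      have hmemf : s(a,b) ∈ (edgeFS G).filter (fun e => a ∈ e) :=
        Finset.mem_filter.mpr ⟨he, by simp [Sym2.mem_iff]⟩
      have h1 : x' s(a,b) ≤ incSum G x' a := by
        rw [incSum]
        exact Finset.single_le_sum
          (fun e' he' => hp0 e' (Finset.mem_filter.mp he').1) hmemf
      exact le_trans h1 (hp1 a)
  have hSp0 : ∀ v : V, 0 ≤ incSum G x' v := by
    intro v
    rw [incSum]
    exact Finset.sum_nonneg (fun e' he' => hp0 e' (Finset.mem_filter.mp he').1)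
  -- main inequality: ∑_E T1 ≤ ∑_v T2
  set T1 : Sym2 V → ℝ := fun e =>
    x' e * Real.log (q e / x' e) + (1 - x' e) * Real.log ((1 - x' e) / (1 - q e)) with hT1def
  set T2 : V → ℝ := fun v =>
    (1 - incSum G x' v) * Real.log ((1 - incSum G x' v) / (1 - incSum G q v)) with hT2def
  have hMain : ∑ e ∈ edgeFS G, T1 e ≤ ∑ v : V, T2 v := by
    have hver : ∀ v : V, ∑ e ∈ (edgeFS G).filter (fun e => v ∈ e), T1 e ≤ 2 * T2 v := by
      intro v
      by_cases hne : ((edgeFS G).filter (fun e => v ∈ e)).Nonempty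
      · -- non-isolated vertex
        have hnbr : (nbrFS G v).Nonempty := by
          rw [incident_eq_image G v] at hne
          exact Finset.image_nonempty.mp hne
        have hSuv : 0 < Su v := Finset.sum_pos (hterm_pos v) hnbr
        have hSqv0 : 0 < incSum G q v := by
          rw [hSq v]
          exact div_pos hSuv (hSu1 v)
        have happ := vertex_ineq ((edgeFS G).filter (fun e => v ∈ e)) x' q
          (fun e he => hp0 e (Finset.mem_filter.mp he).1)
          (fun e he => (hqE e (Finset.mem_filter.mp he).1).1)
          (fun e he => (hqE e (Finset.mem_filter.mp he).1).2)
          (hp1 v) hSqv0 (hSq1 v)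
        exact happ
      · rw [Finset.not_nonempty_iff_eq_empty] at hne
        have h1 : incSum G x' v = 0 := by rw [incSum, hne, Finset.sum_empty]
        have h2 : incSum G q v = 0 := by rw [incSum, hne, Finset.sum_empty]
        rw [hne, Finset.sum_empty, hT2def]
        simp [h1, h2]
    have hsum2 := sum_endpoint_two G T1
    have hsum3 : ∑ v : V, (∑ e ∈ (edgeFS G).filter (fun e => v ∈ e), T1 e)
        ≤ ∑ v : V, 2 * T2 v := Finset.sum_le_sum (fun v _ => hver v)
    rw [hsum2] at hsum3
    rw [← Finset.mul_sum] at hsum3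
    linarith
  -- conclude
  have hdiff1 : ∀ e ∈ edgeFS G,
      (x' e * (Real.log (q e) + Real.log (1 - q e)) - x' e * Real.log (x' e)
        + (1 - x' e) * Real.log (1 - x' e))
      - (q e * (Real.log (q e) + Real.log (1 - q e)) - q e * Real.log (q e)
        + (1 - q e) * Real.log (1 - q e))
      = T1 e := by
    intro e he
    exact edge_diff (hp0 e he) (hp1E e he) (hqE e he).1 (hqE e he).2
  have hdiff2 : ∀ v : V,
      (Real.log (1 - incSum G q v) * incSum G x' v
        + (1 - incSum G x' v) * Real.log (1 - incSum G x' v))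
      - (Real.log (1 - incSum G q v) * incSum G q v
        + (1 - incSum G q v) * Real.log (1 - incSum G q v))
      = T2 v := by
    intro v
    exact vertex_diff (hp1 v) (hSq1 v)
  have hs1 : ∑ e ∈ edgeFS G,
      (x' e * (Real.log (q e) + Real.log (1 - q e)) - x' e * Real.log (x' e)
        + (1 - x' e) * Real.log (1 - x' e))
      - ∑ e ∈ edgeFS G,
      (q e * (Real.log (q e) + Real.log (1 - q e)) - q e * Real.log (q e)
        + (1 - q e) * Real.log (1 - q e))
      = ∑ e ∈ edgeFS G, T1 e := by
    rw [← Finset.sum_sub_distrib]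
    exact Finset.sum_congr rfl hdiff1
  have hs2 : ∑ v : V,
      (Real.log (1 - incSum G q v) * incSum G x' v
        + (1 - incSum G x' v) * Real.log (1 - incSum G x' v))
      - ∑ v : V,
      (Real.log (1 - incSum G q v) * incSum G q v
        + (1 - incSum G q v) * Real.log (1 - incSum G q v))
      = ∑ v : V, T2 v := by
    rw [← Finset.sum_sub_distrib]
    exact Finset.sum_congr rfl (fun v _ => hdiff2 v)
  linarith
end
end

section
/- Let T = (V,E) be a (possibly infinite) simple graph that is a tree (connected and acyclic), in which every vertex has degree at most D for some D ∈ ℕ, with edge weights (θ_e)_{e∈E} satisfying 0 < θ_e ≤ C for all e ∈ E and some constant C > 0. Then for every z > 0 there exists exactly one vector y = (y_{u→v}) ∈ (0,∞)^{E⃗} satisfying y_{u→v} = z / (1 + ∑_{w ∈ ∂u∖{v}} θ_{wu} y_{w→u}) for every directed edge u→v. -/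
open Finset
open scoped BigOperators Classical

noncomputable section

lemma mono_aux' {K c Δ : ℝ} (hK0 : 0 ≤ K) (hc : 0 ≤ c) (hΔ : 0 ≤ Δ)
    (hbd : c * Real.exp Δ ≤ K) :
    Real.log (1 + c * Real.exp Δ) - Real.log (1 + c) ≤ K / (1 + K) * Δ := by
  have h1K : (0:ℝ) < 1 + K := by linarith
  set f : ℝ → ℝ := fun x => Real.log (1 + c * Real.exp x) with hf
  have hpos : ∀ x : ℝ, 0 < 1 + c * Real.exp x := fun x => by positivity
  have hder : ∀ x : ℝ, HasDerivAt f (c * Real.exp x / (1 + c * Real.exp x)) x := by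
    intro x
    have h := ((Real.hasDerivAt_exp x).const_mul c).const_add 1
    have h2 := h.log (ne_of_gt (hpos x))
    simpa [hf] using h2
  have hbound : ∀ x ∈ Set.Ico (0:ℝ) Δ,
      ‖c * Real.exp x / (1 + c * Real.exp x)‖ ≤ K / (1 + K) := by
    intro x hx
    have hx1 : c * Real.exp x ≤ K := by
      have h := Real.exp_le_exp.mpr hx.2.le
      nlinarith [Real.exp_pos x, Real.exp_pos Δ]
    have h0 : 0 ≤ c * Real.exp x := by positivity
    rw [Real.norm_eq_abs, abs_of_nonneg (by positivity)]
    rw [div_le_div_iff₀ (hpos x) h1K]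
    nlinarith
  have hmvt := norm_image_sub_le_of_norm_deriv_le_segment'
      (f' := fun x => c * Real.exp x / (1 + c * Real.exp x))
      (fun x _ => (hder x).hasDerivWithinAt) hbound Δ (Set.right_mem_Icc.mpr hΔ)
  have hf0 : f 0 = Real.log (1 + c) := by simp [hf]
  have := (le_abs_self (f Δ - f 0)).trans (by simpa using hmvt)
  rw [hf0] at this
  simpa [hf] using this

lemma logA' {K A B Δ : ℝ} (hK : 0 ≤ K) (hA0 : 0 ≤ A) (hB0 : 0 ≤ B) (hAK : A ≤ K)
    (hAB : A ≤ B * Real.exp Δ) (hΔ : 0 ≤ Δ) :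
    Real.log (1 + A) - Real.log (1 + B) ≤ K / (1 + K) * Δ := by
  have hBexp : 0 ≤ B * Real.exp Δ := by positivity
  by_cases hcase : B * Real.exp Δ ≤ K
  · have h1 := mono_aux' hK hB0 hΔ hcase
    have h2 : Real.log (1 + A) ≤ Real.log (1 + B * Real.exp Δ) :=
      Real.log_le_log (by linarith) (by linarith)
    linarith
  · push_neg at hcase
    set c := K * Real.exp (-Δ) with hcdef
    have hc0 : 0 ≤ c := by positivity
    have hce : c * Real.exp Δ = K := by
      rw [hcdef, mul_assoc, ← Real.exp_add, neg_add_cancel, Real.exp_zero, mul_one]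
    have h1 := mono_aux' hK hc0 hΔ (le_of_eq hce)
    rw [hce] at h1
    have h2 : Real.log (1 + A) ≤ Real.log (1 + K) :=
      Real.log_le_log (by linarith) (by linarith)
    have hcB : c ≤ B := by
      have hexpΔ : 0 < Real.exp Δ := Real.exp_pos Δ
      have : K < B * Real.exp Δ := hcase
      rw [hcdef]
      rw [Real.exp_neg]
      rw [mul_inv_le_iff₀ hexpΔ]  -- maybe wrong name
      linarith
    have h3 : Real.log (1 + c) ≤ Real.log (1 + B) :=
      Real.log_le_log (by linarith) (by linarith)
    linarith

-- one-sided sum lemma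
lemma logB1 {ι : Type*} (s : Finset ι) (θ a b : ι → ℝ) {K Δ : ℝ} (hΔ : 0 ≤ Δ) (hK : 0 ≤ K)
    (ha : ∀ w ∈ s, 0 < a w) (hb : ∀ w ∈ s, 0 < b w)
    (hθ : ∀ w ∈ s, 0 ≤ θ w)
    (hA : ∑ w ∈ s, θ w * a w ≤ K)
    (hd : ∀ w ∈ s, Real.log (a w) - Real.log (b w) ≤ Δ) :
    Real.log (1 + ∑ w ∈ s, θ w * a w) - Real.log (1 + ∑ w ∈ s, θ w * b w)
      ≤ K / (1 + K) * Δ := by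
  have hA0 : 0 ≤ ∑ w ∈ s, θ w * a w :=
    Finset.sum_nonneg fun w hw => mul_nonneg (hθ w hw) (ha w hw).le
  have hB0 : 0 ≤ ∑ w ∈ s, θ w * b w :=
    Finset.sum_nonneg fun w hw => mul_nonneg (hθ w hw) (hb w hw).le
  have hAB : ∑ w ∈ s, θ w * a w ≤ (∑ w ∈ s, θ w * b w) * Real.exp Δ := by
    rw [Finset.sum_mul]
    apply Finset.sum_le_sum
    intro w hw
    have h1 : a w ≤ b w * Real.exp Δ := by
      have := hd w hw
      have h2 : Real.log (a w) ≤ Real.log (b w) + Δ := by linarith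
      calc a w = Real.exp (Real.log (a w)) := (Real.exp_log (ha w hw)).symm
        _ ≤ Real.exp (Real.log (b w) + Δ) := Real.exp_le_exp.mpr h2
        _ = b w * Real.exp Δ := by rw [Real.exp_add, Real.exp_log (hb w hw)]
    calc θ w * a w ≤ θ w * (b w * Real.exp Δ) := by
          exact mul_le_mul_of_nonneg_left h1 (hθ w hw)
      _ = θ w * b w * Real.exp Δ := by ring
  exact logA' hK hA0 hB0 hA hAB hΔ

lemma logBabs {ι : Type*} (s : Finset ι) (θ a b : ι → ℝ) {K Δ : ℝ} (hΔ : 0 ≤ Δ) (hK : 0 ≤ K)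
    (ha : ∀ w ∈ s, 0 < a w) (hb : ∀ w ∈ s, 0 < b w)
    (hθ : ∀ w ∈ s, 0 ≤ θ w)
    (hA : ∑ w ∈ s, θ w * a w ≤ K) (hB : ∑ w ∈ s, θ w * b w ≤ K)
    (hd : ∀ w ∈ s, |Real.log (a w) - Real.log (b w)| ≤ Δ) :
    |Real.log (1 + ∑ w ∈ s, θ w * a w) - Real.log (1 + ∑ w ∈ s, θ w * b w)|
      ≤ K / (1 + K) * Δ := by
  rw [abs_sub_le_iff]
  constructor
  · exact logB1 s θ a b hΔ hK ha hb hθ hA fun w hw =>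
      (le_abs_self _).trans (hd w hw)
  · refine logB1 s θ b a hΔ hK hb ha hθ hB fun w hw => ?_
    have h := hd w hw
    rw [abs_sub_comm] at h
    exact (le_abs_self _).trans h

lemma abs_sub_le_log' {a b z : ℝ} (ha : 0 < a) (hb : 0 < b) (haz : a ≤ z) (hbz : b ≤ z) :
    |a - b| ≤ z * |Real.log a - Real.log b| := by
  rcases le_total b a with h | h
  · have hl : Real.log b ≤ Real.log a := Real.log_le_log hb h
    rw [abs_of_nonneg (by linarith), abs_of_nonneg (by linarith)]
    have key : 1 + (Real.log b - Real.log a) ≤ b / a := by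
      have := Real.add_one_le_exp (Real.log b - Real.log a)
      rwa [Real.exp_sub, Real.exp_log ha, Real.exp_log hb, add_comm] at this
    have h2 : a * (1 + (Real.log b - Real.log a)) ≤ b := by
      have := mul_le_mul_of_nonneg_left key ha.le
      rwa [mul_div_cancel₀ b ha.ne'] at this
    nlinarith
  · have hl : Real.log a ≤ Real.log b := Real.log_le_log ha h
    rw [abs_of_nonpos (by linarith), abs_of_nonpos (by linarith)]
    have key : 1 + (Real.log a - Real.log b) ≤ a / b := by
      have := Real.add_one_le_exp (Real.log a - Real.log b)
      rwa [Real.exp_sub, Real.exp_log ha, Real.exp_log hb, add_comm] at this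
    have h2 : b * (1 + (Real.log a - Real.log b)) ≤ a := by
      have := mul_le_mul_of_nonneg_left key hb.le
      rwa [mul_div_cancel₀ a hb.ne'] at this
    nlinarith

/-- The message-passing map. -/
noncomputable def Fmap {V : Type*} (N : V → Finset V) (θ : Sym2 V → ℝ) (z : ℝ)
    (y : V × V → ℝ) : V × V → ℝ :=
  fun p => z / (1 + ∑ w ∈ (N p.1).erase p.2, θ s(w, p.1) * y (w, p.1))

/-- On a (possibly infinite) tree with uniformly bounded degrees and
uniformly bounded positive edge weights, for every `z > 0` the message recursion
`y_{u→v} = z / (1 + ∑_{w ∈ ∂u∖{v}} θ_{wu} y_{w→u})` has exactly one positive solution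
on directed edges. -/
theorem tree_message_fixed_point_unique {V : Type*} (T : SimpleGraph V) (hT : T.IsTree)
    (D : ℕ) (hfin : ∀ v : V, (T.neighborSet v).Finite)
    (hdeg : ∀ v : V, (hfin v).toFinset.card ≤ D)
    (θ : Sym2 V → ℝ) (C : ℝ) (hC : 0 < C)
    (hθ : ∀ e ∈ T.edgeSet, 0 < θ e ∧ θ e ≤ C)
    (z : ℝ) (hz : 0 < z) :
    ∃ y : V × V → ℝ,
      (∀ u v : V, T.Adj u v → 0 < y (u, v) ∧
        y (u, v) = z / (1 + ∑ w ∈ (hfin u).toFinset.erase v, θ s(w, u) * y (w, u))) ∧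
      ∀ y' : V × V → ℝ,
        (∀ u v : V, T.Adj u v → 0 < y' (u, v) ∧
          y' (u, v) = z / (1 + ∑ w ∈ (hfin u).toFinset.erase v, θ s(w, u) * y' (w, u))) →
        ∀ u v : V, T.Adj u v → y' (u, v) = y (u, v) := by
  classical
  set N : V → Finset V := fun u => (hfin u).toFinset with hN
  set K : ℝ := D * C * z with hKdef
  have hK0 : (0:ℝ) ≤ K := by positivity
  have h1K : (0:ℝ) < 1 + K := by linarith
  set κ : ℝ := K / (1 + K) with hκdef
  have hκ0 : 0 ≤ κ := div_nonneg hK0 h1K.le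
  have hκ1 : κ < 1 := (div_lt_one h1K).mpr (by linarith)
  set m : ℝ := z / (1 + K) with hmdef
  have hm0 : 0 < m := div_pos hz h1K
  have hmz : m ≤ z := by
    rw [hmdef]
    exact div_le_self hz.le (by linarith)
  set B0 : ℝ := Real.log (1 + K) with hB0def
  have hB00 : 0 ≤ B0 := Real.log_nonneg (by linarith)
  have hlogm : Real.log m = Real.log z - Real.log (1 + K) := by
    rw [hmdef, Real.log_div hz.ne' h1K.ne']
  -- θ facts
  have hθ' : ∀ u w : V, w ∈ N u → 0 < θ s(w, u) ∧ θ s(w, u) ≤ C := by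
    intro u w hw
    rw [hN, Set.Finite.mem_toFinset, SimpleGraph.mem_neighborSet] at hw
    exact hθ _ ((SimpleGraph.mem_edgeSet T).mpr hw.symm)
  -- sum bounds
  have hsum : ∀ (u v : V) (g : V × V → ℝ),
      (∀ w ∈ (N u).erase v, 0 < g (w, u) ∧ g (w, u) ≤ z) →
      0 ≤ ∑ w ∈ (N u).erase v, θ s(w, u) * g (w, u) ∧
        ∑ w ∈ (N u).erase v, θ s(w, u) * g (w, u) ≤ K := by
    intro u v g hg
    constructor
    · apply Finset.sum_nonneg
      intro w hw
      exact mul_nonneg (hθ' u w (Finset.mem_of_mem_erase hw)).1.le (hg w hw).1.le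
    · calc ∑ w ∈ (N u).erase v, θ s(w, u) * g (w, u)
          ≤ ∑ _w ∈ (N u).erase v, C * z := by
            apply Finset.sum_le_sum
            intro w hw
            have h1 := hθ' u w (Finset.mem_of_mem_erase hw)
            have h2 := hg w hw
            exact mul_le_mul h1.2 h2.2 h2.1.le hC.le
        _ = ((N u).erase v).card * (C * z) := by rw [Finset.sum_const, nsmul_eq_mul]
        _ ≤ D * (C * z) := by
            apply mul_le_mul_of_nonneg_right _ (by positivity)
            have h1 : ((N u).erase v).card ≤ (N u).card := Finset.card_erase_le
            have h2 := hdeg u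
            exact_mod_cast h1.trans h2
        _ = K := by rw [hKdef]; ring
  -- bounds for Fmap output
  have hFbd : ∀ (g : V × V → ℝ) (u v : V),
      (∀ w ∈ (N u).erase v, 0 < g (w, u) ∧ g (w, u) ≤ z) →
      m ≤ Fmap N θ z g (u, v) ∧ Fmap N θ z g (u, v) ≤ z := by
    intro g u v hg
    obtain ⟨hS0, hSK⟩ := hsum u v g hg
    constructor
    · rw [hmdef]
      apply div_le_div_of_nonneg_left hz.le (by linarith) (by linarith)
    · calc Fmap N θ z g (u, v) ≤ z / 1 :=
            div_le_div_of_nonneg_left hz.le one_pos (by linarith)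
        _ = z := div_one z
  -- contraction for Fmap
  have contract : ∀ (g g' : V × V → ℝ) (Δ : ℝ), 0 ≤ Δ → ∀ u v : V,
      (∀ w ∈ (N u).erase v, 0 < g (w, u) ∧ g (w, u) ≤ z) →
      (∀ w ∈ (N u).erase v, 0 < g' (w, u) ∧ g' (w, u) ≤ z) →
      (∀ w ∈ (N u).erase v, |Real.log (g (w, u)) - Real.log (g' (w, u))| ≤ Δ) →
      |Real.log (Fmap N θ z g (u, v)) - Real.log (Fmap N θ z g' (u, v))| ≤ κ * Δ := by
    intro g g' Δ hΔ u v hg hg' hd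
    obtain ⟨hS0, hSK⟩ := hsum u v g hg
    obtain ⟨hS0', hSK'⟩ := hsum u v g' hg'
    have e1 : Real.log (Fmap N θ z g (u, v))
        = Real.log z - Real.log (1 + ∑ w ∈ (N u).erase v, θ s(w, u) * g (w, u)) := by
      rw [Fmap, Real.log_div hz.ne' (by linarith)]
    have e2 : Real.log (Fmap N θ z g' (u, v))
        = Real.log z - Real.log (1 + ∑ w ∈ (N u).erase v, θ s(w, u) * g' (w, u)) := by
      rw [Fmap, Real.log_div hz.ne' (by linarith)]
    rw [e1, e2]
    have := logBabs ((N u).erase v) (fun w => θ s(w, u)) (fun w => g' (w, u))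
      (fun w => g (w, u)) hΔ hK0
      (fun w hw => (hg' w hw).1) (fun w hw => (hg w hw).1)
      (fun w hw => (hθ' u w (Finset.mem_of_mem_erase hw)).1.le)
      hSK' hSK
      (fun w hw => by rw [abs_sub_comm]; exact hd w hw)
    calc |Real.log z - Real.log (1 + ∑ w ∈ (N u).erase v, θ s(w, u) * g (w, u))
          - (Real.log z - Real.log (1 + ∑ w ∈ (N u).erase v, θ s(w, u) * g' (w, u)))|
        = |Real.log (1 + ∑ w ∈ (N u).erase v, θ s(w, u) * g' (w, u))
            - Real.log (1 + ∑ w ∈ (N u).erase v, θ s(w, u) * g (w, u))| := by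
          ring_nf
      _ ≤ κ * Δ := this
  -- log bounds
  have hlogbd : ∀ a b : ℝ, m ≤ a → a ≤ z → m ≤ b → b ≤ z →
      |Real.log a - Real.log b| ≤ B0 := by
    intro a b ha1 ha2 hb1 hb2
    have hla1 : Real.log a ≤ Real.log z := Real.log_le_log (by linarith) ha2
    have hla2 : Real.log m ≤ Real.log a := Real.log_le_log hm0 ha1
    have hlb1 : Real.log b ≤ Real.log z := Real.log_le_log (by linarith) hb2
    have hlb2 : Real.log m ≤ Real.log b := Real.log_le_log hm0 hb1
    rw [abs_sub_le_iff]
    constructor <;> [skip; skip] <;>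
      · rw [hB0def]
        have := hlogm
        linarith
  -- the iteration
  set yseq : ℕ → V × V → ℝ := fun n => (Fmap N θ z)^[n] (fun _ => z) with hyseq
  have hyseq_succ : ∀ n, yseq (n + 1) = Fmap N θ z (yseq n) := by
    intro n
    rw [hyseq]
    exact Function.iterate_succ_apply' (Fmap N θ z) n _
  have hbd : ∀ n p, m ≤ yseq n p ∧ yseq n p ≤ z := by
    intro n
    induction n with
    | zero => exact fun p => ⟨hmz, le_rfl⟩
    | succ n ih =>
      intro p
      rw [hyseq_succ]
      exact hFbd (yseq n) p.1 p.2 (fun w _ => ⟨hm0.trans_le (ih (w, p.1)).1, (ih (w, p.1)).2⟩)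
  have hstep : ∀ n p, |Real.log (yseq (n + 1) p) - Real.log (yseq n p)| ≤ κ ^ n * B0 := by
    intro n
    induction n with
    | zero =>
      intro p
      simpa using hlogbd _ _ (hbd 1 p).1 (hbd 1 p).2 (hbd 0 p).1 (hbd 0 p).2
    | succ n ih =>
      intro p
      have hc := contract (yseq (n + 1)) (yseq n) (κ ^ n * B0) (by positivity) p.1 p.2
        (fun w _ => ⟨hm0.trans_le (hbd (n + 1) (w, p.1)).1, (hbd (n + 1) (w, p.1)).2⟩)
        (fun w _ => ⟨hm0.trans_le (hbd n (w, p.1)).1, (hbd n (w, p.1)).2⟩)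
        (fun w _ => ih (w, p.1))
      rw [show κ ^ (n + 1) * B0 = κ * (κ ^ n * B0) by ring, hyseq_succ (n + 1)]
      nth_rewrite 2 [hyseq_succ n]
      exact hc
  -- Cauchy
  have hcauchy : ∀ p, CauchySeq (fun n => yseq n p) := by
    intro p
    apply cauchySeq_of_le_geometric κ (z * B0) hκ1
    intro n
    rw [Real.dist_eq]
    calc |yseq n p - yseq (n + 1) p|
        ≤ z * |Real.log (yseq n p) - Real.log (yseq (n + 1) p)| :=
          abs_sub_le_log' (hm0.trans_le (hbd n p).1) (hm0.trans_le (hbd (n + 1) p).1)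
            (hbd n p).2 (hbd (n + 1) p).2
      _ ≤ z * (κ ^ n * B0) := by
          apply mul_le_mul_of_nonneg_left _ hz.le
          rw [abs_sub_comm]
          exact hstep n p
      _ = z * B0 * κ ^ n := by ring
  have hex : ∀ p, ∃ l, Filter.Tendsto (fun n => yseq n p) Filter.atTop (nhds l) :=
    fun p => cauchySeq_tendsto_of_complete (hcauchy p)
  choose y hy using hex
  have hybd : ∀ p, m ≤ y p ∧ y p ≤ z := by
    intro p
    constructor
    · exact ge_of_tendsto (hy p) (Filter.Eventually.of_forall fun n => (hbd n p).1)
    · exact le_of_tendsto (hy p) (Filter.Eventually.of_forall fun n => (hbd n p).2)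
  have hyfix : ∀ p : V × V, y p = Fmap N θ z y p := by
    intro p
    have h1 : Filter.Tendsto (fun n => yseq (n + 1) p) Filter.atTop (nhds (y p)) :=
      (hy p).comp (Filter.tendsto_add_atTop_nat 1)
    have h2 : Filter.Tendsto (fun n => Fmap N θ z (yseq n) p) Filter.atTop
        (nhds (Fmap N θ z y p)) := by
      rw [Fmap]
      apply Filter.Tendsto.div tendsto_const_nhds
      · apply Filter.Tendsto.const_add
        apply tendsto_finset_sum
        intro w _
        exact (hy (w, p.1)).const_mul _
      · have := (hsum p.1 p.2 y (fun w _ =>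
          ⟨hm0.trans_le (hybd (w, p.1)).1, (hybd (w, p.1)).2⟩)).1
        intro hcon
        linarith [hcon]
    have h3 : (fun n => yseq (n + 1) p) = fun n => Fmap N θ z (yseq n) p := by
      funext n
      rw [hyseq_succ n]
    rw [h3] at h1
    exact tendsto_nhds_unique h1 h2
  refine ⟨y, ?_, ?_⟩
  · intro u v _
    exact ⟨hm0.trans_le (hybd (u, v)).1, hyfix (u, v)⟩
  · intro y' hy' u v huv
    -- bounds for y' at adjacent pairs
    have hy'z : ∀ a b : V, T.Adj a b → y' (a, b) ≤ z := by
      intro a b hab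
      have heq := (hy' a b hab).2
      have hS0 : 0 ≤ ∑ w ∈ (N a).erase b, θ s(w, a) * y' (w, a) := by
        apply Finset.sum_nonneg
        intro w hw
        have hwadj : T.Adj a w := by
          have := Finset.mem_of_mem_erase hw
          rwa [hN, Set.Finite.mem_toFinset, SimpleGraph.mem_neighborSet] at this
        exact mul_nonneg (hθ' a w (Finset.mem_of_mem_erase hw)).1.le
          (hy' w a hwadj.symm).1.le
      have heq2 : y' (a, b) = z / (1 + ∑ w ∈ (N a).erase b, θ s(w, a) * y' (w, a)) := heq
      rw [heq2]
      calc z / (1 + ∑ w ∈ (N a).erase b, θ s(w, a) * y' (w, a)) ≤ z / 1 :=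
            div_le_div_of_nonneg_left hz.le one_pos (by linarith)
        _ = z := div_one z
    have hy'm : ∀ a b : V, T.Adj a b → m ≤ y' (a, b) := by
      intro a b hab
      have heq := (hy' a b hab).2
      obtain ⟨hS0, hSK⟩ := hsum a b y' (fun w hw => by
        have hwadj : T.Adj a w := by
          have := Finset.mem_of_mem_erase hw
          rwa [hN, Set.Finite.mem_toFinset, SimpleGraph.mem_neighborSet] at this
        exact ⟨(hy' w a hwadj.symm).1, hy'z w a hwadj.symm⟩)
      have heq2 : y' (a, b) = z / (1 + ∑ w ∈ (N a).erase b, θ s(w, a) * y' (w, a)) := heq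
      rw [heq2, hmdef]
      apply div_le_div_of_nonneg_left hz.le (by linarith) (by linarith)
    -- inductive contraction
    have hind : ∀ n, ∀ a b : V, T.Adj a b →
        |Real.log (y' (a, b)) - Real.log (y (a, b))| ≤ κ ^ n * B0 := by
      intro n
      induction n with
      | zero =>
        intro a b hab
        simpa using hlogbd _ _ (hy'm a b hab) (hy'z a b hab)
          (hybd (a, b)).1 (hybd (a, b)).2
      | succ n ih =>
        intro a b hab
        have heq' : y' (a, b) = Fmap N θ z y' (a, b) := (hy' a b hab).2
        have heqy : y (a, b) = Fmap N θ z y (a, b) := hyfix (a, b)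
        rw [heq', heqy]
        have hadjw : ∀ w ∈ (N a).erase b, T.Adj w a := by
          intro w hw
          have := Finset.mem_of_mem_erase hw
          rw [hN, Set.Finite.mem_toFinset, SimpleGraph.mem_neighborSet] at this
          exact this.symm
        have := contract y' y (κ ^ n * B0) (by positivity) a b
          (fun w hw => ⟨(hy' w a (hadjw w hw)).1, hy'z w a (hadjw w hw)⟩)
          (fun w hw => ⟨hm0.trans_le (hybd (w, a)).1, (hybd (w, a)).2⟩)
          (fun w hw => ih w a (hadjw w hw))
        calc |Real.log (Fmap N θ z y' (a, b)) - Real.log (Fmap N θ z y (a, b))|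
            ≤ κ * (κ ^ n * B0) := this
          _ = κ ^ (n + 1) * B0 := by ring
    have hlim : Filter.Tendsto (fun n => κ ^ n * B0) Filter.atTop (nhds 0) := by
      have h := tendsto_pow_atTop_nhds_zero_of_lt_one hκ0 hκ1
      have := h.mul_const B0
      simpa using this
    have hle : |Real.log (y' (u, v)) - Real.log (y (u, v))| ≤ 0 :=
      ge_of_tendsto hlim (Filter.Eventually.of_forall fun n => hind n u v huv)
    have heqlog : Real.log (y' (u, v)) = Real.log (y (u, v)) := by
      have := abs_nonneg (Real.log (y' (u, v)) - Real.log (y (u, v)))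
      have h0 : |Real.log (y' (u, v)) - Real.log (y (u, v))| = 0 := le_antisymm hle this
      have := abs_eq_zero.mp h0
      linarith
    calc y' (u, v) = Real.exp (Real.log (y' (u, v))) :=
          (Real.exp_log (hy' u v huv).1).symm
      _ = Real.exp (Real.log (y (u, v))) := by rw [heqlog]
      _ = y (u, v) := Real.exp_log (hm0.trans_le (hybd (u, v)).1)
end
end
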